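/- arXiv:1805.02979 — 9 statements merged into one kernel-verified Lean document; each statement's English description precedes it below -/
import Mathlib

section
/- If h : 𝔻 → (-1,1) is a real-valued harmonic function on the unit disk with h(0) = a, then for all z ∈ 𝔻, h(z) ≤ (4/π)·arctan(s(a)·(1+|z|)/(1-|z|)) − 1, where s(a) = tan(π(a+1)/4). -/
open Real Set Metric
set_option maxHeartbeats 1000000


lemma normSq_cos_eq (θ : ℂ) :
    Complex.normSq (Complex.cos θ) = Real.cos θ.re ^ 2 + Real.sinh θ.im ^ 2 := by
  have hre : (Complex.cos θ).re = Real.cos θ.re * Real.cosh θ.im := by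
    rw [Complex.cos_eq]; simp [← Complex.ofReal_cos, ← Complex.ofReal_sin,
      ← Complex.ofReal_sinh, ← Complex.ofReal_cosh]
  have him : (Complex.cos θ).im = -(Real.sin θ.re * Real.sinh θ.im) := by
    rw [Complex.cos_eq]; simp [← Complex.ofReal_cos, ← Complex.ofReal_sin,
      ← Complex.ofReal_sinh, ← Complex.ofReal_cosh]
  rw [Complex.normSq_apply, hre, him]
  have h1 := Real.cosh_sq θ.im
  have h2 := Real.sin_sq_add_cos_sq θ.re
  linear_combination (Real.cos θ.re)^2 * h1 + (Real.sinh θ.im)^2 * h2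

lemma normSq_sin_eq (θ : ℂ) :
    Complex.normSq (Complex.sin θ) = Real.sin θ.re ^ 2 + Real.sinh θ.im ^ 2 := by
  have hre : (Complex.sin θ).re = Real.sin θ.re * Real.cosh θ.im := by
    rw [Complex.sin_eq]; simp [← Complex.ofReal_cos, ← Complex.ofReal_sin,
      ← Complex.ofReal_sinh, ← Complex.ofReal_cosh]
  have him : (Complex.sin θ).im = Real.cos θ.re * Real.sinh θ.im := by
    rw [Complex.sin_eq]; simp [← Complex.ofReal_cos, ← Complex.ofReal_sin,
      ← Complex.ofReal_sinh, ← Complex.ofReal_cosh]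
  rw [Complex.normSq_apply, hre, him]
  have h1 := Real.cosh_sq θ.im
  have h2 := Real.sin_sq_add_cos_sq θ.re
  linear_combination (Real.sin θ.re)^2 * h1 + (Real.sinh θ.im)^2 * h2

lemma re_sin_mul_conj_cos (θ : ℂ) :
    (Complex.sin θ * (starRingEnd ℂ) (Complex.cos θ)).re = Real.sin θ.re * Real.cos θ.re := by
  have hre : (Complex.cos θ).re = Real.cos θ.re * Real.cosh θ.im := by
    rw [Complex.cos_eq]; simp [← Complex.ofReal_cos, ← Complex.ofReal_sin,
      ← Complex.ofReal_sinh, ← Complex.ofReal_cosh]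
  have him : (Complex.cos θ).im = -(Real.sin θ.re * Real.sinh θ.im) := by
    rw [Complex.cos_eq]; simp [← Complex.ofReal_cos, ← Complex.ofReal_sin,
      ← Complex.ofReal_sinh, ← Complex.ofReal_cosh]
  have hre' : (Complex.sin θ).re = Real.sin θ.re * Real.cosh θ.im := by
    rw [Complex.sin_eq]; simp [← Complex.ofReal_cos, ← Complex.ofReal_sin,
      ← Complex.ofReal_sinh, ← Complex.ofReal_cosh]
  have him' : (Complex.sin θ).im = Real.cos θ.re * Real.sinh θ.im := by
    rw [Complex.sin_eq]; simp [← Complex.ofReal_cos, ← Complex.ofReal_sin,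
      ← Complex.ofReal_sinh, ← Complex.ofReal_cosh]
  rw [Complex.mul_re, Complex.conj_re, Complex.conj_im, hre, him, hre', him']
  have h1 := Real.cosh_sq θ.im
  linear_combination Real.sin θ.re * Real.cos θ.re * h1

lemma tan_disk_facts (θ : ℂ) (hx : |θ.re| < π/4) :
    Complex.cos θ ≠ 0 ∧ Complex.normSq (Complex.tan θ) < 1 ∧
    (Complex.tan θ).re * (Real.cos θ.re ^ 2 + Real.sinh θ.im ^ 2)
      = Real.sin θ.re * Real.cos θ.re ∧
    Complex.normSq (Complex.tan θ) * (Real.cos θ.re ^ 2 + Real.sinh θ.im ^ 2)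
      = Real.sin θ.re ^ 2 + Real.sinh θ.im ^ 2 := by
  have hπ := Real.pi_pos
  obtain ⟨hx1, hx2⟩ := abs_lt.1 hx
  have hC : 0 < Real.cos θ.re :=
    Real.cos_pos_of_mem_Ioo ⟨by linarith, by linarith⟩
  have hX2 : Real.sin θ.re ^ 2 < Real.cos θ.re ^ 2 := by
    have h2x : 0 < Real.cos (2 * θ.re) :=
      Real.cos_pos_of_mem_Ioo ⟨by linarith, by linarith⟩
    rw [Real.cos_two_mul'] at h2x
    linarith
  have hD : 0 < Real.cos θ.re ^ 2 + Real.sinh θ.im ^ 2 := by positivity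
  have hcos : Complex.cos θ ≠ 0 := by
    rw [← Complex.normSq_pos, normSq_cos_eq]; exact hD
  have htc := Complex.tan_mul_cos hcos
  -- normSq equation
  have e2 : Complex.normSq (Complex.tan θ) * (Real.cos θ.re ^ 2 + Real.sinh θ.im ^ 2)
      = Real.sin θ.re ^ 2 + Real.sinh θ.im ^ 2 := by
    have := congrArg Complex.normSq htc
    rw [map_mul, normSq_cos_eq, normSq_sin_eq] at this
    exact this
  have hlt : Complex.normSq (Complex.tan θ) < 1 := by
    nlinarith [e2, hD]
  -- re equation
  have e1 : (Complex.tan θ).re * (Real.cos θ.re ^ 2 + Real.sinh θ.im ^ 2)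
      = Real.sin θ.re * Real.cos θ.re := by
    have h3 : Complex.tan θ * ((Complex.normSq (Complex.cos θ) : ℝ) : ℂ)
        = Complex.sin θ * (starRingEnd ℂ) (Complex.cos θ) := by
      rw [← Complex.mul_conj, ← mul_assoc, htc]
    rw [normSq_cos_eq] at h3
    have h4 := congrArg Complex.re h3
    rw [re_sin_mul_conj_cos] at h4
    rwa [Complex.mul_re, Complex.ofReal_re, Complex.ofReal_im, mul_zero, sub_zero] at h4
  exact ⟨hcos, hlt, e1, e2⟩

lemma key_algebra (g0 r t u v : ℝ) (hg0 : -1 < g0) (hg1 : g0 < 1)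
    (hr0 : 0 ≤ r) (hr1 : r < 1)
    (hρ : u^2 + v^2 < 1) (ht1 : t^2 < 1)
    (hid : t * (1 - (u^2 + v^2)) = u * (1 - t^2))
    (hC1 : (u - g0)^2 + v^2 ≤ r^2 * ((1 - g0*u)^2 + (g0*v)^2)) :
    (1 + t) * (1 - g0) * (1 - r) ≤ (1 + g0) * (1 + r) * (1 - t) := by
  have hgr : 0 < 1 + g0*r := by nlinarith
  have hr2 : r^2 < 1 := by nlinarith
  have hg2 : g0^2 < 1 := by nlinarith
  have h1mg : 0 < 1 - r^2*g0^2 := by nlinarith [sq_nonneg r, sq_nonneg g0]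
  have hu2 : u^2 < 1 := by nlinarith [sq_nonneg v]
  have hgu : g0*u < 1 := by nlinarith [sq_nonneg (g0 - u)]
  have htm1 : -1 < t := by nlinarith
  have htp1 : t < 1 := by nlinarith
  -- step A : u*(1+g0*r) ≤ g0 + r
  have hP1P2 : ((1 + g0*r)*u - (g0 + r)) * ((1 - g0*r)*u - (g0 - r)) ≤ 0 := by
    linarith only [hC1, mul_nonneg h1mg.le (sq_nonneg v)]
  have hA : u*(1 + g0*r) ≤ g0 + r := by
    by_contra hcon
    push_neg at hcon
    have hp1 : 0 < (1 + g0*r)*u - (g0 + r) := by linarith only [hcon]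
    have hrg : 0 ≤ r*(1 - g0*u) := mul_nonneg hr0 (by linarith only [hgu])
    have hp2 : 0 < (1 - g0*r)*u - (g0 - r) := by linarith only [hp1, hrg]
    exact absurd hP1P2 (not_le.mpr (mul_pos hp1 hp2))
  -- rearranged C1
  have hC1' : (1 - r^2) * (1 + g0^2 - 2*(g0*u)) ≤ (1 - (u^2 + v^2)) * (1 - r^2*g0^2) := by
    linarith only [hC1]
  -- step B : u*(1-g0^2)*(1-r^2) ≤ (g0+r)*(1+g0*r)*(1-(u^2+v^2))
  have hB : u*(1 - g0^2)*(1 - r^2) ≤ (g0 + r)*(1 + g0*r)*(1 - (u^2 + v^2)) := by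
    rcases le_or_gt 0 (g0 + r) with hs | hs
    · have hmul := mul_le_mul_of_nonneg_left hC1' (mul_nonneg hs hgr.le)
      have hfac2 : 0 ≤ ((g0 + r) - u*(1 + g0*r))*(1 + g0*r)*(1 - r^2)*(1 + g0^2) :=
        mul_nonneg (mul_nonneg (mul_nonneg (by linarith) hgr.le) (by linarith))
          (by positivity)
      have h5 : u*(1 - g0^2)*(1 - r^2)*(1 - r^2*g0^2)
          ≤ ((g0 + r)*(1 + g0*r)*(1 - (u^2 + v^2)))*(1 - r^2*g0^2) := by
        calc u*(1 - g0^2)*(1 - r^2)*(1 - r^2*g0^2)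
            = (g0 + r)*(1 + g0*r)*((1 - r^2) * (1 + g0^2 - 2*(g0*u)))
              - ((g0 + r) - u*(1 + g0*r))*(1 + g0*r)*(1 - r^2)*(1 + g0^2) := by ring
          _ ≤ (g0 + r)*(1 + g0*r)*((1 - r^2) * (1 + g0^2 - 2*(g0*u))) :=
              sub_le_self _ hfac2
          _ ≤ (g0 + r)*(1 + g0*r)*((1 - (u^2 + v^2)) * (1 - r^2*g0^2)) := hmul
          _ = ((g0 + r)*(1 + g0*r)*(1 - (u^2 + v^2)))*(1 - r^2*g0^2) := by ring
      exact le_of_mul_le_mul_right h5 h1mg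
    · have hu0 : u < 0 := by
        by_contra hcon
        push_neg at hcon
        have h6 := mul_nonneg hcon hgr.le
        linarith only [h6, hA, hs]
      have hBuA : 0 < (1 + g0*r) + u*(g0 + r) := by
        have h7 := mul_pos_of_neg_of_neg hu0 hs
        linarith only [h7, hgr]
      have hfac : 0 ≤ ((g0 + r) - u*(1 + g0*r)) * ((1 + g0*r) + u*(g0 + r)) :=
        mul_nonneg (by linarith only [hA]) hBuA.le
      have hprod : 0 ≤ (-((g0 + r)*(1 + g0*r)))*v^2 :=
        mul_nonneg (neg_nonneg.mpr (mul_nonpos_of_nonpos_of_nonneg hs.le hgr.le)) (sq_nonneg v)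
      linarith only [hfac, hprod]
  -- step C : t*(1+g0*r) ≤ g0 + r
  have hρ1 : 0 < 1 - (u^2 + v^2) := by linarith
  have ht2 : 0 < 1 - t^2 := by linarith
  have hC2 : t*(1 - g0^2)*(1 - r^2) ≤ (g0 + r)*(1 + g0*r)*(1 - t^2) := by
    have hmul := mul_le_mul_of_nonneg_right hB ht2.le
    have heq : t*(1 - g0^2)*(1 - r^2)*(1 - (u^2 + v^2))
        = u*(1 - g0^2)*(1 - r^2)*(1 - t^2) := by
      linear_combination (1 - g0^2)*(1 - r^2)*hid
    have h3 : t*(1 - g0^2)*(1 - r^2)*(1 - (u^2 + v^2))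
        ≤ (g0 + r)*(1 + g0*r)*(1 - t^2)*(1 - (u^2 + v^2)) := by
      rw [heq]; exact hmul.trans_eq (by ring)
    exact le_of_mul_le_mul_right h3 hρ1
  have hK : t*(1 + g0*r) ≤ g0 + r := by
    have hpos : 0 < (1 + g0*r) + t*(g0 + r) := by
      rcases le_or_gt 0 (g0 + r) with hs | hs
      · have h1 := mul_le_mul_of_nonneg_right htm1.le hs
        have h2 : 0 < (1 - g0)*(1 - r) := mul_pos (by linarith) (by linarith)
        linarith only [h1, h2, hs, hgr]
      · have h1 := mul_lt_mul_of_neg_right htp1 hs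
        have h2 : 0 < (1 + g0)*(1 + r) := mul_pos (by linarith) (by linarith)
        linarith only [h1, h2, hgr]
    by_contra hcon
    push_neg at hcon
    have h8 := mul_pos (sub_pos.2 hcon) hpos
    linarith only [hC2, h8]
  linarith only [hK]

lemma sq_lt_helper (X C : ℝ) (hC : 0 < C) (hs : X^2 < C^2) : X < C ∧ -C < X := by
  constructor
  · nlinarith
  · nlinarith

lemma cos_pos_and_sq (x : ℝ) (hx : |x| < π/4) :
    0 < Real.cos x ∧ Real.sin x ^ 2 < Real.cos x ^ 2 := by
  have hπ := Real.pi_pos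
  obtain ⟨hx1, hx2⟩ := abs_lt.1 hx
  have hC : 0 < Real.cos x := Real.cos_pos_of_mem_Ioo ⟨by linarith, by linarith⟩
  refine ⟨hC, ?_⟩
  have h2x : 0 < Real.cos (2 * x) := Real.cos_pos_of_mem_Ioo ⟨by linarith, by linarith⟩
  rw [Real.cos_two_mul'] at h2x
  linarith

lemma tan_shift (x : ℝ) (hx : |x| < π/4) :
    Real.tan (x + π/4) = (Real.cos x + Real.sin x) / (Real.cos x - Real.sin x) := by
  obtain ⟨hC, hX2⟩ := cos_pos_and_sq x hx
  have h1 : Real.sin x < Real.cos x := by nlinarith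
  have hs2 : 0 < Real.sqrt 2 / 2 := by positivity
  rw [Real.tan_eq_sin_div_cos, Real.sin_add, Real.cos_add, Real.sin_pi_div_four,
    Real.cos_pi_div_four]
  rw [div_eq_div_iff (by nlinarith) (by linarith)]
  ring

/-- Schwarz lemma (upper bound): if `h` is a real-valued harmonic function on the unit
disk with values in `(-1,1)` and `h 0 = a`, then
`h z ≤ (4/π)·arctan (s(a)·(1+|z|)/(1-|z|)) - 1` with `s(a) = tan (π(a+1)/4)`.
Harmonicity is encoded by `h` being the real part of a holomorphic function `F`. -/
theorem harmonic_schwarz_upper (a : ℝ) (h : ℂ → ℝ) (F : ℂ → ℂ)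
    (hF : DifferentiableOn ℂ F (Metric.ball 0 1))
    (hre : ∀ z ∈ Metric.ball (0 : ℂ) 1, h z = (F z).re)
    (hmaps : Set.MapsTo h (Metric.ball 0 1) (Set.Ioo (-1 : ℝ) 1))
    (h0 : h 0 = a) :
    ∀ z ∈ Metric.ball (0 : ℂ) 1,
      h z ≤ (4 / Real.pi) *
          Real.arctan (Real.tan (Real.pi * (a + 1) / 4) * (1 + ‖z‖) / (1 - ‖z‖)) - 1 := by
  intro z hz
  have hπ : (0:ℝ) < π := Real.pi_pos
  have h0ball : (0:ℂ) ∈ Metric.ball (0:ℂ) 1 := Metric.mem_ball_self one_pos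
  have ha : a ∈ Set.Ioo (-1:ℝ) 1 := by rw [← h0]; exact hmaps h0ball
  set b : ℝ := (F 0).im with hbdef
  set q : ℂ → ℂ := fun w => ((π/4 : ℝ) : ℂ) * (F w - (b : ℂ) * Complex.I) with hqdef
  have hqre : ∀ w, (q w).re = π/4 * (F w).re := by
    intro w
    simp [hqdef, Complex.mul_re, Complex.mul_im]
  have hxlt : ∀ w ∈ Metric.ball (0:ℂ) 1, |(q w).re| < π/4 := by
    intro w hw
    obtain ⟨h1, h2⟩ := hmaps hw
    rw [hre w hw] at h1 h2
    rw [hqre w, abs_lt]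
    constructor
    · linarith only [mul_pos hπ (show (0:ℝ) < (F w).re + 1 by linarith), hπ]
    · linarith only [mul_pos hπ (show (0:ℝ) < 1 - (F w).re by linarith), hπ]
  have hqdiff : DifferentiableOn ℂ q (Metric.ball 0 1) :=
    (hF.sub (differentiableOn_const _)).const_mul _
  -- the Möbius parameter
  set xa : ℝ := π * a / 4 with hxadef
  have hxa : |xa| < π/4 := by
    rw [hxadef, abs_lt]
    constructor
    · linarith only [mul_pos hπ (show (0:ℝ) < a + 1 by linarith [ha.1]), hπ]
    · linarith only [mul_pos hπ (show (0:ℝ) < 1 - a by linarith [ha.2]), hπ]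
  obtain ⟨hCa, hXa2⟩ := cos_pos_and_sq xa hxa
  set g0 : ℝ := Real.tan xa with hg0def
  have hg0eq : g0 = Real.sin xa / Real.cos xa := Real.tan_eq_sin_div_cos xa
  obtain ⟨hXCa1, hXCa2⟩ := sq_lt_helper (Real.sin xa) (Real.cos xa) hCa hXa2
  have hg0m : -1 < g0 := by
    rw [hg0eq, lt_div_iff₀ hCa]; linarith only [hXCa2]
  have hg0p : g0 < 1 := by
    rw [hg0eq, div_lt_one hCa]; linarith only [hXCa1]
  -- Möbius composed with tan ∘ q
  set G : ℂ → ℂ := fun w =>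
    (Complex.tan (q w) - (g0:ℂ)) / (1 - (g0:ℂ) * Complex.tan (q w)) with hGdef
  have hfacts := fun w (hw : w ∈ Metric.ball (0:ℂ) 1) => tan_disk_facts (q w) (hxlt w hw)
  have hden : ∀ w ∈ Metric.ball (0:ℂ) 1, (1:ℂ) - (g0:ℂ) * Complex.tan (q w) ≠ 0 := by
    intro w hw hcon
    obtain ⟨-, hnsq, -, -⟩ := hfacts w hw
    have h1 : (g0:ℂ) * Complex.tan (q w) = 1 := by linear_combination -hcon
    have h2 := congrArg Complex.normSq h1
    rw [map_mul, Complex.normSq_ofReal] at h2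
    simp only [Complex.normSq_one] at h2
    have hg2 : g0^2 < 1 := by
      linarith only [mul_pos (show (0:ℝ) < 1 - g0 by linarith only [hg0p])
        (show (0:ℝ) < 1 + g0 by linarith only [hg0m])]
    have hpr : 0 ≤ g0^2 * (1 - Complex.normSq (Complex.tan (q w))) :=
      mul_nonneg (sq_nonneg g0) (by linarith only [hnsq])
    linarith only [h2, hpr, hg2]
  have htandiff : DifferentiableOn ℂ (fun w => Complex.tan (q w)) (Metric.ball 0 1) := by
    intro w hw
    obtain ⟨hcos, -, -, -⟩ := hfacts w hw
    exact ((Complex.differentiableAt_tan.mpr hcos).differentiableWithinAt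
      (s := Set.univ)).comp w (hqdiff w hw) (Set.mapsTo_univ _ _)
  have hGdiff : DifferentiableOn ℂ G (Metric.ball 0 1) := by
    have hnum : DifferentiableOn ℂ (fun w => Complex.tan (q w) - ((g0:ℝ):ℂ))
        (Metric.ball 0 1) := htandiff.sub_const _
    have hdenom : DifferentiableOn ℂ (fun w => (1:ℂ) - ((g0:ℝ):ℂ) * Complex.tan (q w))
        (Metric.ball 0 1) := (htandiff.const_mul _).const_sub _
    exact hnum.div hdenom hden
  have hGmaps : Set.MapsTo G (Metric.ball 0 1) (Metric.ball 0 1) := by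
    intro w hw
    obtain ⟨-, hnsq, -, -⟩ := hfacts w hw
    rw [Metric.mem_ball, dist_zero_right, hGdef]
    rw [Complex.normSq_apply] at hnsq
    have hAB : Complex.normSq (Complex.tan (q w) - (g0:ℂ))
        < Complex.normSq (1 - (g0:ℂ) * Complex.tan (q w)) := by
      simp only [Complex.normSq_apply, Complex.sub_re, Complex.sub_im, Complex.ofReal_re,
        Complex.ofReal_im, Complex.one_re, Complex.one_im, Complex.mul_re, Complex.mul_im]
      have hg2 : (0:ℝ) < 1 - g0^2 := by
        linarith only [mul_pos (show (0:ℝ) < 1 - g0 by linarith only [hg0p])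
          (show (0:ℝ) < 1 + g0 by linarith only [hg0m])]
      have hnt : (0:ℝ) < 1 - ((Complex.tan (q w)).re^2 + (Complex.tan (q w)).im^2) := by
        linarith only [hnsq]
      linarith only [mul_pos hg2 hnt]
    have hnorm : ‖Complex.tan (q w) - (g0:ℂ)‖^2 < ‖1 - (g0:ℂ) * Complex.tan (q w)‖^2 := by
      rw [Complex.sq_norm, Complex.sq_norm]
      exact hAB
    have hlt := lt_of_pow_lt_pow_left₀ 2 (norm_nonneg _) hnorm
    rw [norm_div]
    exact (div_lt_one (norm_pos_iff.mpr (hden w hw))).mpr hlt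
  have hF0re : (F 0).re = a := by rw [← hre 0 h0ball]; exact h0
  have hq0 : q 0 = ((xa : ℝ) : ℂ) := by
    have hF0 : F 0 - (b:ℂ) * Complex.I = ((a:ℝ):ℂ) := by
      apply Complex.ext <;> simp [hF0re, hbdef]
    rw [hqdef]
    simp only
    rw [hF0, ← Complex.ofReal_mul]
    congr 1
    rw [hxadef]; ring
  have hG0 : G 0 = 0 := by
    rw [hGdef]
    simp only
    rw [hq0, ← Complex.ofReal_tan, ← hg0def, sub_self, zero_div]
  have hzabs : ‖z‖ < 1 := by
    exact mem_ball_zero_iff.mp hz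
  have hschwarz := Complex.norm_le_norm_of_mapsTo_ball hGdiff
    (hGmaps.mono_right Metric.ball_subset_closedBall) hG0 hzabs
  -- unpack the Schwarz inequality
  have hr0 : (0:ℝ) ≤ ‖z‖ := norm_nonneg z
  have hr1 : ‖z‖ < 1 := mem_ball_zero_iff.mp hz
  obtain ⟨hcosz, hnsqz, e1, e2⟩ := hfacts z hz
  set u : ℝ := (Complex.tan (q z)).re with hudef
  set v : ℝ := (Complex.tan (q z)).im with hvdef
  have hBpos : 0 < ‖1 - (g0:ℂ) * Complex.tan (q z)‖ :=
    norm_pos_iff.mpr (hden z hz)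
  have habs2 : ‖Complex.tan (q z) - (g0:ℂ)‖
      ≤ ‖z‖ * ‖1 - (g0:ℂ) * Complex.tan (q z)‖ := by
    have h5 := hschwarz
    rw [hGdef] at h5
    simp only at h5
    rw [norm_div, div_le_iff₀ hBpos] at h5
    exact h5
  have hC1 : (u - g0)^2 + v^2 ≤ ‖z‖^2 * ((1 - g0*u)^2 + (g0*v)^2) := by
    have h6 : Complex.normSq (Complex.tan (q z) - (g0:ℂ))
        ≤ ‖z‖^2 * Complex.normSq (1 - (g0:ℂ) * Complex.tan (q z)) := by
      rw [← Complex.sq_norm, ← Complex.sq_norm]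
      calc ‖Complex.tan (q z) - (g0:ℂ)‖ ^ 2
          ≤ (‖z‖ * ‖1 - (g0:ℂ) * Complex.tan (q z)‖)^2 :=
            pow_le_pow_left₀ (norm_nonneg _) habs2 2
        _ = ‖z‖^2 * ‖1 - (g0:ℂ) * Complex.tan (q z)‖ ^ 2 := by ring
    simp only [Complex.normSq_apply, Complex.sub_re, Complex.sub_im, Complex.ofReal_re,
      Complex.ofReal_im, Complex.one_re, Complex.one_im, Complex.mul_re, Complex.mul_im] at h6
    linarith only [h6]
  -- real-side quantities
  set x : ℝ := (q z).re with hxdef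
  have hxlt' : |x| < π/4 := hxlt z hz
  obtain ⟨hCx, hX2⟩ := cos_pos_and_sq x hxlt'
  set X : ℝ := Real.sin x with hXdef
  set C : ℝ := Real.cos x with hCdef
  set Sh : ℝ := Real.sinh (q z).im with hShdef
  have hρ : u^2 + v^2 < 1 := by
    rw [Complex.normSq_apply] at hnsqz
    linarith only [hnsqz]
  set t : ℝ := X / C with htdef
  have ht2 : t^2 < 1 := by
    rw [htdef, div_pow, div_lt_one (by positivity)]
    exact hX2
  have hD : (0:ℝ) < C^2 + Sh^2 := by positivity
  have e1' : u * (C^2 + Sh^2) = X * C := e1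
  have e2' : (u^2 + v^2) * (C^2 + Sh^2) = X^2 + Sh^2 := by
    rw [Complex.normSq_apply] at e2
    calc (u^2 + v^2) * (C^2 + Sh^2)
        = ((Complex.tan (q z)).re * (Complex.tan (q z)).re
          + (Complex.tan (q z)).im * (Complex.tan (q z)).im)
          * (Real.cos (q z).re ^ 2 + Real.sinh (q z).im ^ 2) := by
          rw [← hudef, ← hvdef, ← hxdef, ← hCdef, ← hShdef]; ring
      _ = Real.sin (q z).re ^ 2 + Real.sinh (q z).im ^ 2 := e2
      _ = X^2 + Sh^2 := by rw [← hxdef, ← hXdef, ← hShdef]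
  have hkey0 : X * C * (1 - (u^2 + v^2)) = u * (C^2 - X^2) := by
    have h9 : (X * C * (1 - (u^2 + v^2))) * (C^2 + Sh^2)
        = (u * (C^2 - X^2)) * (C^2 + Sh^2) := by
      linear_combination (-(C^2 - X^2))*e1' + (-(X*C))*e2'
    exact mul_right_cancel₀ (ne_of_gt hD) h9
  have hid : t * (1 - (u^2 + v^2)) = u * (1 - t^2) := by
    have h10 : (t * (1 - (u^2 + v^2))) * C^2 = (u * (1 - t^2)) * C^2 := by
      rw [htdef]
      field_simp
      linear_combination hkey0
    exact mul_right_cancel₀ (pow_ne_zero 2 (ne_of_gt hCx)) h10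
  have key := key_algebra g0 ‖z‖ t u v hg0m hg0p hr0 hr1 hρ ht2 hid hC1
  -- final conversion
  obtain ⟨hXC1, hXC2⟩ := sq_lt_helper X C hCx hX2
  have hCmX : 0 < C - X := by linarith only [hXC1]
  have hCpX : 0 < C + X := by linarith only [hXC2]
  have hCamXa : 0 < Real.cos xa - Real.sin xa := by linarith only [hXCa1]
  have hCapXa : 0 < Real.cos xa + Real.sin xa := by linarith only [hXCa2]
  have hfin : (C + X) * ((Real.cos xa - Real.sin xa) * (1 - ‖z‖))
      ≤ (Real.cos xa + Real.sin xa) * (1 + ‖z‖) * (C - X) := by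
    have key' := mul_le_mul_of_nonneg_right key (le_of_lt (mul_pos hCx hCa))
    rw [hg0eq, htdef] at key'
    have ea : ((1 + X/C) * (1 - Real.sin xa / Real.cos xa) * (1 - ‖z‖)) * (C * Real.cos xa)
        = (C + X) * ((Real.cos xa - Real.sin xa) * (1 - ‖z‖)) := by
      field_simp
    have eb : ((1 + Real.sin xa / Real.cos xa) * (1 + ‖z‖) * (1 - X/C)) * (C * Real.cos xa)
        = (Real.cos xa + Real.sin xa) * (1 + ‖z‖) * (C - X) := by
      field_simp
    rw [ea, eb] at key'
    exact key'
  have htanle : Real.tan (x + π/4)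
      ≤ Real.tan (π * (a + 1) / 4) * (1 + ‖z‖) / (1 - ‖z‖) := by
    rw [show Real.pi * (a + 1) / 4 = xa + π/4 by rw [hxadef]; ring]
    rw [tan_shift x hxlt', tan_shift xa hxa]
    rw [div_mul_eq_mul_div, div_div,
      div_le_div_iff₀ hCmX (mul_pos hCamXa (by linarith : (0:ℝ) < 1 - ‖z‖))]
    linarith only [hfin]
  have harc : x + π/4 ≤ Real.arctan (Real.tan (π * (a + 1) / 4) * (1 + ‖z‖) / (1 - ‖z‖)) := by
    have hb1 : -(π/2) < x + π/4 := by
      have := abs_lt.1 hxlt'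
      linarith [this.1]
    have hb2 : x + π/4 < π/2 := by
      have := abs_lt.1 hxlt'
      linarith [this.2]
    calc x + π/4 = Real.arctan (Real.tan (x + π/4)) := (Real.arctan_tan hb1 hb2).symm
      _ ≤ _ := Real.arctan_strictMono.monotone htanle
  have hxval : x = π/4 * h z := by
    rw [hxdef, hqre z, hre z hz]
  have hππ : 4/π * (π/4) = 1 := by field_simp
  have h4π : (0:ℝ) < 4/π := by positivity
  have hfinal := mul_le_mul_of_nonneg_left harc (le_of_lt h4π)
  have hxh : 4/π * x = h z := by rw [hxval]; field_simp
  linarith only [hfinal, hxh, hππ]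
end

section
/- If h : 𝔻 → (-1,1) is a real-valued harmonic function with h(0) = a, then the norm of the gradient of h at 0 satisfies |∇h(0)| ≤ (4/π)·sin(π(a+1)/2). -/
open Real Set Metric

private lemma normSq_cos_sub_sin (ζ : ℂ) :
    Complex.normSq (Complex.cos ζ) - Complex.normSq (Complex.sin ζ) = Real.cos (2 * ζ.re) := by
  have key : ((Complex.normSq (Complex.cos ζ) : ℂ)) - (Complex.normSq (Complex.sin ζ) : ℂ)
      = ((Real.cos (2 * ζ.re) : ℝ) : ℂ) := by
    rw [← Complex.mul_conj, ← Complex.mul_conj, ← Complex.cos_conj, ← Complex.sin_conj,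
      ← Complex.cos_add, Complex.add_conj, ← Complex.ofReal_cos]
  have := congrArg Complex.re key
  simpa only [Complex.sub_re, Complex.ofReal_re] using this

private lemma mobius_normSq (c z : ℂ) :
    Complex.normSq (1 - (starRingEnd ℂ) c * z) - Complex.normSq (z - c)
      = (1 - Complex.normSq z) * (1 - Complex.normSq c) := by
  simp only [Complex.normSq_apply, Complex.sub_re, Complex.sub_im, Complex.mul_re,
    Complex.mul_im, Complex.conj_re, Complex.conj_im, Complex.one_re, Complex.one_im]
  ring

private lemma abs_lt_one_of_normSq_lt_one {z : ℂ} (h : Complex.normSq z < 1) :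
    ‖z‖ < 1 := by
  have h1 : ‖z‖ ^ 2 < 1 := by rwa [Complex.sq_norm]
  nlinarith [norm_nonneg z]

/-- Gradient estimate at the origin: if `h` is a real-valued harmonic function on the
unit disk with values in `(-1,1)` and `h 0 = a`, then `|∇h(0)| ≤ (4/π)·sin (π(a+1)/2)`.
Harmonicity is encoded by `h` being the real part of a holomorphic function `F`. -/
theorem harmonic_gradient_bound_at_zero (a : ℝ) (h : ℂ → ℝ) (F : ℂ → ℂ)
    (hF : DifferentiableOn ℂ F (Metric.ball 0 1))
    (hre : ∀ z ∈ Metric.ball (0 : ℂ) 1, h z = (F z).re)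
    (hmaps : Set.MapsTo h (Metric.ball 0 1) (Set.Ioo (-1 : ℝ) 1))
    (h0 : h 0 = a) :
    ‖fderiv ℝ h 0‖ ≤ (4 / Real.pi) * Real.sin (Real.pi * (a + 1) / 2) := by
  have hball0 : (0 : ℂ) ∈ Metric.ball (0 : ℂ) 1 := by simp
  set q : ℂ := ((Real.pi / 4 : ℝ) : ℂ) with hq
  set g : ℂ → ℂ := fun z => Complex.tan (q * F z) with hg
  -- basic facts for points of the ball
  have hre_mem : ∀ z ∈ Metric.ball (0 : ℂ) 1, (F z).re ∈ Set.Ioo (-1 : ℝ) 1 := by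
    intro z hz
    have := hmaps hz
    rwa [hre z hz] at this
  have hcos2 : ∀ z ∈ Metric.ball (0 : ℂ) 1, 0 < Real.cos (2 * (q * F z).re) := by
    intro z hz
    have hzre : (q * F z).re = Real.pi / 4 * (F z).re := by
      simp [hq, Complex.mul_re, Complex.ofReal_re, Complex.ofReal_im]
    rw [hzre]
    apply Real.cos_pos_of_mem_Ioo
    have h1 := (hre_mem z hz).1
    have h2 := (hre_mem z hz).2
    have hpi := Real.pi_pos
    constructor <;> [nlinarith; nlinarith]
  have hcosne : ∀ z ∈ Metric.ball (0 : ℂ) 1, Complex.cos (q * F z) ≠ 0 := by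
    intro z hz
    intro hc
    have hident := normSq_cos_sub_sin (q * F z)
    rw [hc, map_zero, zero_sub] at hident
    have := hcos2 z hz
    have := Complex.normSq_nonneg (Complex.sin (q * F z))
    linarith
  have hgkey : ∀ z ∈ Metric.ball (0 : ℂ) 1,
      Complex.normSq (Complex.cos (q * F z)) * (1 - Complex.normSq (g z))
        = Real.cos (2 * (q * F z).re) := by
    intro z hz
    have hident := normSq_cos_sub_sin (q * F z)
    have hcne : Complex.normSq (Complex.cos (q * F z)) ≠ 0 :=
      fun hc => hcosne z hz (Complex.normSq_eq_zero.mp hc)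
    have htan : Complex.normSq (g z)
        = Complex.normSq (Complex.sin (q * F z)) / Complex.normSq (Complex.cos (q * F z)) := by
      simp [hg, Complex.tan_eq_sin_div_cos, map_div₀]
    rw [htan]
    have h3 : Complex.normSq (Complex.cos (q * F z)) *
        (1 - Complex.normSq (Complex.sin (q * F z)) / Complex.normSq (Complex.cos (q * F z)))
        = Complex.normSq (Complex.cos (q * F z)) - Complex.normSq (Complex.sin (q * F z)) := by
      field_simp
    rw [h3, hident]
  have hglt : ∀ z ∈ Metric.ball (0 : ℂ) 1, Complex.normSq (g z) < 1 := by
    intro z hz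
    have hk := hgkey z hz
    have h2 := hcos2 z hz
    have hpos : 0 < Complex.normSq (Complex.cos (q * F z)) :=
      Complex.normSq_pos.mpr (hcosne z hz)
    nlinarith
  set c : ℂ := g 0 with hc
  have hclt : Complex.normSq c < 1 := hglt 0 hball0
  -- the Möbius-recentred map
  set Φ : ℂ → ℂ := fun z => (g z - c) / (1 - (starRingEnd ℂ) c * g z) with hΦ
  have hden : ∀ z ∈ Metric.ball (0 : ℂ) 1, 1 - (starRingEnd ℂ) c * g z ≠ 0 := by
    intro z hz
    intro hd
    have hm := mobius_normSq c (g z)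
    rw [hd] at hm
    simp at hm
    have := hglt z hz
    have := Complex.normSq_nonneg (g z - c)
    nlinarith
  have hΦmaps : Set.MapsTo Φ (Metric.ball 0 1) (Metric.ball 0 1) := by
    intro z hz
    have hm := mobius_normSq c (g z)
    have hdpos : 0 < Complex.normSq (1 - (starRingEnd ℂ) c * g z) :=
      Complex.normSq_pos.mpr (hden z hz)
    have hΦns : Complex.normSq (Φ z) < 1 := by
      rw [hΦ]
      simp only [map_div₀]
      rw [div_lt_one hdpos]
      have := hglt z hz
      nlinarith
    rw [Metric.mem_ball, dist_zero_right]
    exact abs_lt_one_of_normSq_lt_one hΦns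
  -- differentiability of g on the ball
  have hgdiff : ∀ z ∈ Metric.ball (0 : ℂ) 1, DifferentiableAt ℂ g z := by
    intro z hz
    have hFz : DifferentiableAt ℂ F z :=
      hF.differentiableAt (Metric.isOpen_ball.mem_nhds hz)
    have h1 : DifferentiableAt ℂ (fun w => q * F w) z := hFz.const_mul q
    have h2 : DifferentiableAt ℂ Complex.tan (q * F z) :=
      (Complex.hasDerivAt_tan (hcosne z hz)).differentiableAt
    exact h2.comp z h1
  have hΦdiff : DifferentiableOn ℂ Φ (Metric.ball 0 1) := by
    intro z hz
    refine DifferentiableAt.differentiableWithinAt ?_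
    exact (((hgdiff z hz).sub_const c).div
      (((hgdiff z hz).const_mul _).const_sub 1) (hden z hz))
  have hΦ0 : Φ 0 = 0 := by
    simp [hΦ, hc]
  -- derivative computation
  have hF0 : DifferentiableAt ℂ F 0 := hF.differentiableAt (Metric.isOpen_ball.mem_nhds hball0)
  set d : ℂ := deriv F 0 with hd'
  have hFd : HasDerivAt F d 0 := hF0.hasDerivAt
  have hζd : HasDerivAt (fun z => q * F z) (q * d) 0 := hFd.const_mul q
  have htand : HasDerivAt Complex.tan (1 / Complex.cos (q * F 0) ^ 2) (q * F 0) :=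
    Complex.hasDerivAt_tan (hcosne 0 hball0)
  have hgd : HasDerivAt g (1 / Complex.cos (q * F 0) ^ 2 * (q * d)) 0 := HasDerivAt.comp (h₂ := Complex.tan) 0 htand hζd
  set gd : ℂ := 1 / Complex.cos (q * F 0) ^ 2 * (q * d) with hgd'
  have hnum : HasDerivAt (fun z => g z - c) gd 0 := hgd.sub_const c
  have hdend : HasDerivAt (fun z => 1 - (starRingEnd ℂ) c * g z)
      (-((starRingEnd ℂ) c * gd)) 0 := by
    simpa using ((hgd.const_mul ((starRingEnd ℂ) c)).const_sub 1)
  have hden0 : 1 - (starRingEnd ℂ) c * g 0 ≠ 0 := hden 0 hball0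
  have hΦd : HasDerivAt Φ
      ((gd * (1 - (starRingEnd ℂ) c * g 0) - (g 0 - c) * -((starRingEnd ℂ) c * gd)) /
        (1 - (starRingEnd ℂ) c * g 0) ^ 2) 0 := hnum.div hdend hden0
  have hg0c : g 0 - c = 0 := by rw [hc, sub_self]
  have hden0eq : 1 - (starRingEnd ℂ) c * g 0 = ((1 - Complex.normSq c : ℝ) : ℂ) := by
    rw [← hc]
    push_cast
    rw [← Complex.normSq_eq_conj_mul_self]
  have hΦdval : deriv Φ 0 = gd / ((1 - Complex.normSq c : ℝ) : ℂ) := by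
    have hrne : ((1 - Complex.normSq c : ℝ) : ℂ) ≠ 0 := by rw [← hden0eq]; exact hden0
    rw [hΦd.deriv, hg0c, hden0eq, zero_mul, sub_zero, sq,
      mul_div_mul_right _ _ hrne]
  -- Schwarz lemma
  have hschwarz : ‖deriv Φ 0‖ ≤ 1 :=
    Complex.norm_deriv_le_one_of_mapsTo_ball hΦdiff
      (fun z hz => by rw [hΦ0]; exact Metric.ball_subset_closedBall (hΦmaps hz)) one_pos
  rw [hΦdval] at hschwarz
  -- unpack the inequality to a bound on abs d
  have hnsq_pos : 0 < Complex.normSq (Complex.cos (q * F 0)) :=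
    Complex.normSq_pos.mpr (hcosne 0 hball0)
  have hcfact : Complex.normSq (Complex.cos (q * F 0)) * (1 - Complex.normSq c)
      = Real.cos (2 * (q * F 0).re) := hgkey 0 hball0
  have h1c : 0 < 1 - Complex.normSq c := by
    have := hcos2 0 hball0; nlinarith
  have habsgd : ‖gd‖
      = 1 / Complex.normSq (Complex.cos (q * F 0)) * (Real.pi / 4 * ‖d‖) := by
    rw [hgd', norm_mul, norm_div, norm_one, norm_pow, Complex.sq_norm, norm_mul, hq,
      Complex.norm_real, Real.norm_eq_abs, abs_of_pos (by positivity : (0:ℝ) < Real.pi / 4)]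
  have hschwarz2 : ‖gd‖ ≤ 1 - Complex.normSq c := by
    rw [norm_div, Complex.norm_real, Real.norm_eq_abs, abs_of_pos h1c, div_le_one h1c] at hschwarz
    exact hschwarz
  have hdbound : ‖d‖ ≤ 4 / Real.pi * Real.cos (2 * (q * F 0).re) := by
    rw [habsgd] at hschwarz2
    have hpi := Real.pi_pos
    rw [← hcfact]
    rw [div_mul_eq_mul_div, le_div_iff₀ hpi]
    rw [one_div, inv_mul_eq_div, div_le_iff₀ hnsq_pos] at hschwarz2
    nlinarith
  -- identify the RHS
  have ha : (F 0).re = a := by rw [← hre 0 hball0, h0]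
  have hangle : 2 * (q * F 0).re = Real.pi * a / 2 := by
    have : (q * F 0).re = Real.pi / 4 * (F 0).re := by
      simp [hq, Complex.mul_re, Complex.ofReal_re, Complex.ofReal_im]
    rw [this, ha]; ring
  have hsin : Real.sin (Real.pi * (a + 1) / 2) = Real.cos (2 * (q * F 0).re) := by
    rw [hangle]
    have : Real.pi * (a + 1) / 2 = Real.pi * a / 2 + Real.pi / 2 := by ring
    rw [this, Real.sin_add_pi_div_two]
  -- now the fderiv part
  have heq : h =ᶠ[nhds (0 : ℂ)] fun z => (F z).re := by
    filter_upwards [Metric.isOpen_ball.mem_nhds hball0] with z hz using hre z hz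
  have hfd : HasFDerivAt F (((1 : ℂ →L[ℂ] ℂ).smulRight d).restrictScalars ℝ) 0 :=
    (hFd.hasFDerivAt).restrictScalars ℝ
  have hhd : HasFDerivAt (fun z => (F z).re)
      (Complex.reCLM.comp (((1 : ℂ →L[ℂ] ℂ).smulRight d).restrictScalars ℝ)) 0 :=
    Complex.reCLM.hasFDerivAt.comp 0 hfd
  have hfe : fderiv ℝ h 0 = Complex.reCLM.comp
      (((1 : ℂ →L[ℂ] ℂ).smulRight d).restrictScalars ℝ) := by
    rw [heq.fderiv_eq, hhd.fderiv]
  have hnorm : ‖fderiv ℝ h 0‖ ≤ ‖d‖ := by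
    rw [hfe]
    refine ContinuousLinearMap.opNorm_le_bound _ (norm_nonneg d) fun z => ?_
    simp only [ContinuousLinearMap.coe_comp', Function.comp_apply,
      ContinuousLinearMap.coe_restrictScalars', ContinuousLinearMap.smulRight_apply,
      ContinuousLinearMap.one_apply, Complex.reCLM_apply, smul_eq_mul]
    rw [Real.norm_eq_abs]
    calc |(z * d).re| ≤ ‖z * d‖ := Complex.abs_re_le_norm _
      _ = ‖d‖ * ‖z‖ := by rw [norm_mul]; ring
  calc ‖fderiv ℝ h 0‖ ≤ ‖d‖ := hnorm
    _ ≤ 4 / Real.pi * Real.cos (2 * (q * F 0).re) := hdbound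
    _ = 4 / Real.pi * Real.sin (Real.pi * (a + 1) / 2) := by rw [hsin]
end

section
/- For a ∈ (-1,1), the supremum of |∇h(0)| over all real-valued harmonic maps h : 𝔻 → (-1,1) with h(0) = a equals (4/π)·sin(π(a+1)/2), and it is attained by the real part of a suitable conformal map of 𝔻 onto the strip (-1,1) × ℝ. -/
open Real Set Metric

section hgsAux
open Complex Metric Set

lemma norm_re_clm_comp (d : ℂ) :
    ‖Complex.reCLM.comp ((d • (1 : ℂ →L[ℝ] ℂ)))‖ = ‖d‖ := by
  apply le_antisymm
  · apply ContinuousLinearMap.opNorm_le_bound _ (norm_nonneg d)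
    intro z
    simp only [ContinuousLinearMap.coe_comp', Function.comp_apply,
      ContinuousLinearMap.smul_apply, ContinuousLinearMap.one_apply, reCLM_apply,
      smul_eq_mul]
    calc |(d * z).re| ≤ ‖d * z‖ := Complex.abs_re_le_norm _
      _ = ‖d‖ * ‖z‖ := by simp
  · rcases eq_or_ne d 0 with rfl | hd
    · simp
    · have h := (Complex.reCLM.comp ((d • (1 : ℂ →L[ℝ] ℂ)))).le_opNorm ((starRingEnd ℂ) d)
      simp only [ContinuousLinearMap.coe_comp', Function.comp_apply,
        ContinuousLinearMap.smul_apply, ContinuousLinearMap.one_apply, reCLM_apply,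
        smul_eq_mul, Complex.mul_conj] at h
      have hn : ‖(starRingEnd ℂ) d‖ = ‖d‖ := by simp
      rw [hn] at h
      have h2 : ‖d‖ * ‖d‖ ≤ ‖Complex.reCLM.comp ((d • (1 : ℂ →L[ℝ] ℂ)))‖ * ‖d‖ := by
        calc ‖d‖ * ‖d‖ = ‖((Complex.normSq d : ℝ) : ℂ).re‖ := by
              rw [Complex.ofReal_re, Real.norm_eq_abs,
                _root_.abs_of_nonneg (Complex.normSq_nonneg d),
                Complex.normSq_eq_norm_sq, sq]
          _ ≤ _ := h
      have := le_of_mul_le_mul_right h2 (norm_pos_iff.mpr hd)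
      exact this

lemma norm_fderiv_re_comp (F : ℂ → ℂ) (hF : DifferentiableAt ℂ F 0) :
    ‖fderiv ℝ (fun z => (F z).re) 0‖ = ‖deriv F 0‖ := by
  have h1 : HasFDerivAt F ((deriv F 0) • (1 : ℂ →L[ℝ] ℂ)) 0 :=
    hF.hasDerivAt.complexToReal_fderiv
  have h2 : HasFDerivAt (fun z => (F z).re)
      (Complex.reCLM.comp ((deriv F 0) • (1 : ℂ →L[ℝ] ℂ))) 0 :=
    (Complex.reCLM.hasFDerivAt).comp 0 h1
  rw [h2.fderiv, norm_re_clm_comp]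


noncomputable def hgsC (a : ℝ) : ℂ := Complex.exp ((Real.pi * a / 2 : ℝ) * Complex.I)

noncomputable def hgsF (a : ℝ) (z : ℂ) : ℂ :=
  (-2 * Complex.I / (Real.pi : ℂ)) * Complex.log ((hgsC a + z) / (1 - hgsC a * z))

noncomputable def hgsQ (a : ℝ) (w : ℂ) : ℂ :=
  (Complex.exp (Complex.I * (Real.pi : ℂ) * w / 2) - hgsC a) /
    (1 + hgsC a * Complex.exp (Complex.I * (Real.pi : ℂ) * w / 2))

lemma hgs_theta_lt {a : ℝ} (ha : a ∈ Set.Ioo (-1 : ℝ) 1) :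
    |Real.pi * a / 2| < Real.pi / 2 := by
  rw [abs_lt]
  obtain ⟨h1, h2⟩ := ha
  constructor <;> nlinarith [Real.pi_pos]

lemma hgs_kappa_pos {a : ℝ} (ha : a ∈ Set.Ioo (-1 : ℝ) 1) :
    0 < Real.cos (Real.pi * a / 2) :=
  Real.cos_pos_of_mem_Ioo (abs_lt.mp (hgs_theta_lt ha))

lemma hgsC_ne {a : ℝ} : hgsC a ≠ 0 := Complex.exp_ne_zero _

lemma hgs_normSq_c {a : ℝ} : normSq (hgsC a) = 1 := by
  have : ‖hgsC a‖ = 1 := by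
    rw [hgsC, Complex.norm_exp]
    simp
  rw [← Complex.sq_norm, this, one_pow]

lemma hgsC_re {a : ℝ} : (hgsC a).re = Real.cos (Real.pi * a / 2) := by
  rw [hgsC, Complex.exp_ofReal_mul_I_re]

lemma hgs_c_mul_conj {a : ℝ} : hgsC a * (starRingEnd ℂ) (hgsC a) = 1 := by
  rw [Complex.mul_conj, hgs_normSq_c, Complex.ofReal_one]

lemma hgs_one_add_sq {a : ℝ} :
    1 + hgsC a ^ 2 = 2 * (Real.cos (Real.pi * a / 2) : ℂ) * hgsC a := by
  have h1 := Complex.add_conj (hgsC a)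
  have h2 := hgs_c_mul_conj (a := a)
  rw [hgsC_re] at h1
  have h1' : hgsC a + (starRingEnd ℂ) (hgsC a) = 2 * (Real.cos (Real.pi * a / 2) : ℂ) := by
    rw [h1]; push_cast; ring
  linear_combination hgsC a * h1' - h2

lemma hgs_one_add_sq_ne {a : ℝ} (ha : a ∈ Set.Ioo (-1 : ℝ) 1) :
    1 + hgsC a ^ 2 ≠ 0 := by
  rw [hgs_one_add_sq]
  have hκ := hgs_kappa_pos ha
  intro h
  rcases mul_eq_zero.mp h with h' | h'
  · rcases mul_eq_zero.mp h' with h'' | h''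
    · norm_num at h''
    · rw [Complex.ofReal_eq_zero] at h''
      linarith
  · exact hgsC_ne h'

lemma hgs_re_div (u v : ℂ) : (u / v).re = (u * (starRingEnd ℂ) v).re / normSq v := by
  rw [Complex.div_re, Complex.mul_re, Complex.conj_re, Complex.conj_im]
  ring

lemma hgs_den_ne {a : ℝ} {z : ℂ} (hz : z ∈ Metric.ball (0:ℂ) 1) :
    1 - hgsC a * z ≠ 0 := by
  intro h
  rw [sub_eq_zero] at h
  have h1 : ‖hgsC a * z‖ = ‖z‖ := by
    rw [norm_mul]
    have : ‖hgsC a‖ = 1 := by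
      have := hgs_normSq_c (a := a)
      rw [← Complex.sq_norm] at this
      nlinarith [norm_nonneg (hgsC a)]
    rw [this, one_mul]
  rw [mem_ball_zero_iff] at hz
  rw [← h, norm_one] at h1
  linarith [h1 ▸ hz]

lemma hgs_key_re {a : ℝ} (z : ℂ) :
    ((hgsC a + z) * (starRingEnd ℂ) (1 - hgsC a * z)).re
      = Real.cos (Real.pi * a / 2) * (1 - normSq z) := by
  have hc := hgs_c_mul_conj (a := a)
  have hz : z * (starRingEnd ℂ) z = ((normSq z : ℝ) : ℂ) := Complex.mul_conj z
  have expand : (hgsC a + z) * (starRingEnd ℂ) (1 - hgsC a * z)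
      = hgsC a - (starRingEnd ℂ) (hgsC a) * ((normSq z : ℝ) : ℂ)
        + (z - (starRingEnd ℂ) z) := by
    rw [map_sub, map_one, map_mul]
    linear_combination (-(starRingEnd ℂ) z) * hc + (-(starRingEnd ℂ) (hgsC a)) * hz
  rw [expand]
  rw [Complex.add_re, Complex.sub_re, Complex.sub_re]
  have h1 : ((starRingEnd ℂ) (hgsC a) * ((normSq z : ℝ) : ℂ)).re
      = normSq z * (hgsC a).re := by
    rw [mul_comm, Complex.re_ofReal_mul, Complex.conj_re]
  have h2 : ((starRingEnd ℂ) z).re = z.re := Complex.conj_re z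
  rw [h1, h2, hgsC_re]
  ring

lemma hgs_R_re_pos {a : ℝ} (ha : a ∈ Set.Ioo (-1 : ℝ) 1) {z : ℂ}
    (hz : z ∈ Metric.ball (0:ℂ) 1) :
    0 < ((hgsC a + z) / (1 - hgsC a * z)).re := by
  rw [hgs_re_div, hgs_key_re]
  apply div_pos
  · apply mul_pos (hgs_kappa_pos ha)
    rw [mem_ball_zero_iff] at hz
    have : normSq z < 1 := by
      rw [← Complex.sq_norm]
      nlinarith [norm_nonneg z]
    linarith
  · exact Complex.normSq_pos.mpr (hgs_den_ne hz)

lemma hgs_R_ne {a : ℝ} (ha : a ∈ Set.Ioo (-1 : ℝ) 1) {z : ℂ}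
    (hz : z ∈ Metric.ball (0:ℂ) 1) :
    (hgsC a + z) / (1 - hgsC a * z) ≠ 0 := by
  intro h
  have := hgs_R_re_pos ha hz
  rw [h] at this
  simp at this

lemma hgs_R_slit {a : ℝ} (ha : a ∈ Set.Ioo (-1 : ℝ) 1) {z : ℂ}
    (hz : z ∈ Metric.ball (0:ℂ) 1) :
    (hgsC a + z) / (1 - hgsC a * z) ∈ Complex.slitPlane :=
  Complex.mem_slitPlane_iff.mpr (Or.inl (hgs_R_re_pos ha hz))

lemma hgs_R_diffAt {a : ℝ} {z : ℂ} (hz : z ∈ Metric.ball (0:ℂ) 1) :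
    DifferentiableAt ℂ (fun w => (hgsC a + w) / (1 - hgsC a * w)) z := by
  apply DifferentiableAt.div
  · exact (differentiableAt_const _).add differentiableAt_id
  · exact (differentiableAt_const _).sub ((differentiableAt_id).const_mul _)
  · exact hgs_den_ne hz

lemma hgsF_diff {a : ℝ} (ha : a ∈ Set.Ioo (-1 : ℝ) 1) :
    DifferentiableOn ℂ (hgsF a) (Metric.ball 0 1) := by
  intro z hz
  apply DifferentiableAt.differentiableWithinAt
  apply DifferentiableAt.const_mul
  exact (Complex.differentiableAt_log (hgs_R_slit ha hz)).comp z (hgs_R_diffAt hz)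

lemma hgs_const_re_im :
    ((-2 : ℂ) * Complex.I / (Real.pi : ℂ)).re = 0 ∧
    ((-2 : ℂ) * Complex.I / (Real.pi : ℂ)).im = -2 / Real.pi := by
  constructor
  · rw [Complex.div_ofReal_re]; simp
  · rw [Complex.div_ofReal_im]; simp

lemma hgsF_re {a : ℝ} (z : ℂ) :
    (hgsF a z).re = (2 / Real.pi) * Complex.arg ((hgsC a + z) / (1 - hgsC a * z)) := by
  rw [hgsF, Complex.mul_re, hgs_const_re_im.1, hgs_const_re_im.2, Complex.log_im]
  ring

lemma hgsF_mapsTo {a : ℝ} (ha : a ∈ Set.Ioo (-1 : ℝ) 1) {z : ℂ}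
    (hz : z ∈ Metric.ball (0:ℂ) 1) :
    (hgsF a z).re ∈ Set.Ioo (-1 : ℝ) 1 := by
  have harg : |Complex.arg ((hgsC a + z) / (1 - hgsC a * z))| < Real.pi / 2 :=
    Complex.abs_arg_lt_pi_div_two_iff.mpr (Or.inl (hgs_R_re_pos ha hz))
  rw [abs_lt] at harg
  have hπ := Real.pi_pos
  rw [hgsF_re]
  constructor
  · rw [show (-1 : ℝ) = (2 / Real.pi) * (-(Real.pi/2)) by field_simp; try ring]
    apply mul_lt_mul_of_pos_left harg.1 (by positivity)
  · rw [show (1 : ℝ) = (2 / Real.pi) * (Real.pi/2) by field_simp; try ring]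
    apply mul_lt_mul_of_pos_left harg.2 (by positivity)

lemma hgsF_zero {a : ℝ} (ha : a ∈ Set.Ioo (-1 : ℝ) 1) : hgsF a 0 = (a : ℂ) := by
  have hθ := hgs_theta_lt ha
  rw [abs_lt] at hθ
  have hπ := Real.pi_pos
  have h1 : (hgsC a + 0) / (1 - hgsC a * 0) = hgsC a := by simp
  have h2 : Complex.log (hgsC a) = ((Real.pi * a / 2 : ℝ) : ℂ) * Complex.I := by
    rw [hgsC, Complex.log_exp] <;> simp <;> linarith
  rw [hgsF, h1, h2]
  have hπc : ((Real.pi : ℝ) : ℂ) ≠ 0 := Complex.ofReal_ne_zero.mpr (ne_of_gt hπ)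
  field_simp
  push_cast
  linear_combination (-(Real.pi : ℂ) * (a : ℂ)) * Complex.I_sq

lemma hgsF_hasDeriv {a : ℝ} (ha : a ∈ Set.Ioo (-1 : ℝ) 1) :
    HasDerivAt (hgsF a)
      ((-2 : ℂ) * Complex.I / (Real.pi : ℂ) * ((hgsC a)⁻¹ * (1 + hgsC a ^ 2))) 0 := by
  have h0 : (0 : ℂ) ∈ Metric.ball (0:ℂ) 1 := mem_ball_self one_pos
  have hR : HasDerivAt (fun w => (hgsC a + w) / (1 - hgsC a * w)) (1 + hgsC a ^ 2) 0 := by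
    have hnum : HasDerivAt (fun w => hgsC a + w) 1 0 :=
      (hasDerivAt_id 0).const_add _
    have hden : HasDerivAt (fun w => 1 - hgsC a * w) (-(hgsC a)) 0 := by
      simpa using ((hasDerivAt_id 0).const_mul (hgsC a)).const_sub 1
    have := hnum.div hden (by simpa using hgs_den_ne (a := a) h0)
    refine this.congr_deriv ?_
    ring
    try ring
  have hRz : (hgsC a + 0) / (1 - hgsC a * 0) = hgsC a := by simp
  have hlog : HasDerivAt Complex.log (hgsC a)⁻¹ ((hgsC a + 0) / (1 - hgsC a * 0)) := by
    rw [hRz]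
    exact Complex.hasDerivAt_log (Complex.mem_slitPlane_iff.mpr
      (Or.inl (by rw [hgsC_re]; exact hgs_kappa_pos ha)))
  have := (hlog.comp 0 hR).const_mul ((-2 : ℂ) * Complex.I / (Real.pi : ℂ))
  exact this
  try ring

lemma hgsF_deriv_norm {a : ℝ} (ha : a ∈ Set.Ioo (-1 : ℝ) 1) :
    ‖deriv (hgsF a) 0‖ = 4 / Real.pi * Real.cos (Real.pi * a / 2) := by
  rw [(hgsF_hasDeriv ha).deriv]
  have hκ := hgs_kappa_pos ha
  have hπ := Real.pi_pos
  rw [hgs_one_add_sq]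
  have hinv : (hgsC a)⁻¹ * (2 * (Real.cos (Real.pi * a / 2) : ℂ) * hgsC a)
      = 2 * (Real.cos (Real.pi * a / 2) : ℂ) := by
    field_simp [hgsC_ne]
    try ring
  rw [hinv, norm_mul]
  have h1 : ‖(-2 : ℂ) * Complex.I / (Real.pi : ℂ)‖ = 2 / Real.pi := by
    rw [norm_div, norm_mul]
    simp [abs_of_pos hπ]
  have h2 : ‖2 * (Real.cos (Real.pi * a / 2) : ℂ)‖ = 2 * Real.cos (Real.pi * a / 2) := by
    rw [norm_mul, Complex.norm_real, Real.norm_eq_abs, abs_of_pos hκ]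
    norm_num
  rw [h1, h2]
  ring

lemma hgsE_re_im (w : ℂ) :
    (Complex.I * (Real.pi : ℂ) * w / 2).re = -(Real.pi * w.im / 2) ∧
    (Complex.I * (Real.pi : ℂ) * w / 2).im = Real.pi * w.re / 2 := by
  constructor
  · simp [Complex.div_re, Complex.mul_re, Complex.mul_im, Complex.normSq]
    try ring
  · simp [Complex.div_im, Complex.mul_re, Complex.mul_im, Complex.normSq]
    try ring

lemma hgsE_re_pos {w : ℂ} (hw : w.re ∈ Set.Ioo (-1 : ℝ) 1) :
    0 < (Complex.exp (Complex.I * (Real.pi : ℂ) * w / 2)).re := by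
  rw [Complex.exp_re, (hgsE_re_im w).1, (hgsE_re_im w).2]
  apply mul_pos (Real.exp_pos _)
  apply Real.cos_pos_of_mem_Ioo
  constructor
  · nlinarith [Real.pi_pos, hw.1, hw.2]
  · nlinarith [Real.pi_pos, hw.1, hw.2]

lemma hgsE_abs (w : ℂ) :
    ‖Complex.exp (Complex.I * (Real.pi : ℂ) * w / 2)‖
      = Real.exp (-(Real.pi * w.im / 2)) := by
  rw [Complex.norm_exp, (hgsE_re_im w).1]

/-- normSq (1 + c E) - normSq (E - c) = 4 κ E.re -/
lemma hgs_normSq_diff {a : ℝ} (E : ℂ) :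
    normSq (1 + hgsC a * E) - normSq (E - hgsC a)
      = 4 * Real.cos (Real.pi * a / 2) * E.re := by
  rw [Complex.normSq_add, Complex.normSq_sub]
  rw [Complex.normSq_one, map_mul, hgs_normSq_c, one_mul, one_mul]
  have h1 : ((starRingEnd ℂ) (hgsC a * E)).re = (hgsC a * E).re := Complex.conj_re _
  have h2 : (E * (starRingEnd ℂ) (hgsC a)).re + (hgsC a * E).re
      = 2 * Real.cos (Real.pi * a / 2) * E.re := by
    have : E * (starRingEnd ℂ) (hgsC a) + hgsC a * E
        = (hgsC a + (starRingEnd ℂ) (hgsC a)) * E := by ring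
    rw [← Complex.add_re, this, Complex.add_conj, hgsC_re, Complex.re_ofReal_mul]
    try ring
  rw [h1]
  linarith [h2]

lemma hgs_q_den_ne {a : ℝ} (ha : a ∈ Set.Ioo (-1 : ℝ) 1) {w : ℂ}
    (hw : w.re ∈ Set.Ioo (-1 : ℝ) 1) :
    1 + hgsC a * Complex.exp (Complex.I * (Real.pi : ℂ) * w / 2) ≠ 0 := by
  intro h
  have hd := hgs_normSq_diff (a := a) (Complex.exp (Complex.I * (Real.pi : ℂ) * w / 2))
  rw [h, map_zero] at hd
  have hre := hgsE_re_pos hw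
  have hκ := hgs_kappa_pos ha
  nlinarith [Complex.normSq_nonneg
    (Complex.exp (Complex.I * (Real.pi : ℂ) * w / 2) - hgsC a)]

lemma hgsQ_mem_ball {a : ℝ} (ha : a ∈ Set.Ioo (-1 : ℝ) 1) {w : ℂ}
    (hw : w.re ∈ Set.Ioo (-1 : ℝ) 1) :
    hgsQ a w ∈ Metric.ball (0 : ℂ) 1 := by
  set E := Complex.exp (Complex.I * (Real.pi : ℂ) * w / 2) with hE
  have hd := hgs_normSq_diff (a := a) E
  have hre := hgsE_re_pos hw
  have hκ := hgs_kappa_pos ha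
  have hden := hgs_q_den_ne ha hw
  rw [mem_ball_zero_iff, ← Real.sqrt_one]
  rw [show ‖hgsQ a w‖ = Real.sqrt (normSq (hgsQ a w)) by
    rw [Complex.norm_def]]
  apply Real.sqrt_lt_sqrt (Complex.normSq_nonneg _)
  rw [hgsQ, Complex.normSq_div]
  rw [div_lt_one (Complex.normSq_pos.mpr hden)]
  nlinarith

lemma hgs_normSq_lt_one {a : ℝ} (ha : a ∈ Set.Ioo (-1 : ℝ) 1) {w : ℂ}
    (hw : w.re ∈ Set.Ioo (-1 : ℝ) 1) :
    normSq (hgsQ a w) < 1 := by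
  have := hgsQ_mem_ball ha hw
  rw [mem_ball_zero_iff] at this
  rw [← Complex.sq_norm]
  nlinarith [norm_nonneg (hgsQ a w)]

lemma hgs_R_of_Q {a : ℝ} (ha : a ∈ Set.Ioo (-1 : ℝ) 1) {w : ℂ}
    (hw : w.re ∈ Set.Ioo (-1 : ℝ) 1) :
    (hgsC a + hgsQ a w) / (1 - hgsC a * hgsQ a w)
      = Complex.exp (Complex.I * (Real.pi : ℂ) * w / 2) := by
  set E := Complex.exp (Complex.I * (Real.pi : ℂ) * w / 2) with hE
  have hden := hgs_q_den_ne ha hw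
  rw [← hE] at hden
  have hsq := hgs_one_add_sq (a := a)
  have hsqne := hgs_one_add_sq_ne ha
  have h1 : hgsC a + hgsQ a w = E * (1 + hgsC a ^ 2) / (1 + hgsC a * E) := by
    rw [hgsQ, ← hE]
    field_simp
    ring
  have h2 : 1 - hgsC a * hgsQ a w = (1 + hgsC a ^ 2) / (1 + hgsC a * E) := by
    rw [hgsQ, ← hE]
    field_simp
    ring
  rw [h1, h2]
  field_simp
  rw [mul_comm E (hgsC a)]; exact mul_div_cancel_right₀ E hden

lemma hgsF_of_Q {a : ℝ} (ha : a ∈ Set.Ioo (-1 : ℝ) 1) {w : ℂ}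
    (hw : w.re ∈ Set.Ioo (-1 : ℝ) 1) :
    hgsF a (hgsQ a w) = w := by
  have hπ := Real.pi_pos
  rw [hgsF, hgs_R_of_Q ha hw]
  rw [Complex.log_exp]
  · have hπc : ((Real.pi : ℝ) : ℂ) ≠ 0 := Complex.ofReal_ne_zero.mpr (ne_of_gt hπ)
    field_simp
    linear_combination (-w) * Complex.I_sq
  · rw [(hgsE_re_im w).2]
    nlinarith [hw.1, hw.2]
  · rw [(hgsE_re_im w).2]
    nlinarith [hw.1, hw.2]

lemma hgsQ_of_F {a : ℝ} (ha : a ∈ Set.Ioo (-1 : ℝ) 1) {z : ℂ}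
    (hz : z ∈ Metric.ball (0:ℂ) 1) :
    hgsQ a (hgsF a z) = z := by
  have hπ := Real.pi_pos
  have hπc : ((Real.pi : ℝ) : ℂ) ≠ 0 := Complex.ofReal_ne_zero.mpr (ne_of_gt hπ)
  set R := (hgsC a + z) / (1 - hgsC a * z) with hR
  have hRne := hgs_R_ne ha hz
  rw [← hR] at hRne
  have hexp : Complex.exp (Complex.I * (Real.pi : ℂ) * hgsF a z / 2) = R := by
    have harg : Complex.I * (Real.pi : ℂ) * hgsF a z / 2 = Complex.log R := by
      rw [hgsF, ← hR]
      field_simp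
      linear_combination (-Complex.log R) * Complex.I_sq
    rw [harg, Complex.exp_log hRne]
  rw [hgsQ, hexp]
  have hdenz := hgs_den_ne (a := a) hz
  have hsqne := hgs_one_add_sq_ne (a := a) ha
  have h1 : R - hgsC a = z * (1 + hgsC a ^ 2) / (1 - hgsC a * z) := by
    rw [hR]; field_simp; ring
  have h2 : 1 + hgsC a * R = (1 + hgsC a ^ 2) / (1 - hgsC a * z) := by
    rw [hR]; field_simp; ring
  rw [h1, h2]
  field_simp
  rw [mul_comm z (hgsC a)]; exact mul_div_cancel_right₀ z hdenz

lemma hgsF_injOn {a : ℝ} (ha : a ∈ Set.Ioo (-1 : ℝ) 1) :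
    Set.InjOn (hgsF a) (Metric.ball 0 1) := fun z1 h1 z2 h2 heq => by
  rw [← hgsQ_of_F ha h1, ← hgsQ_of_F ha h2, heq]

lemma hgsF_image {a : ℝ} (ha : a ∈ Set.Ioo (-1 : ℝ) 1) :
    hgsF a '' (Metric.ball 0 1) = {w : ℂ | -1 < w.re ∧ w.re < 1} := by
  ext w
  constructor
  · rintro ⟨z, hz, rfl⟩
    exact (hgsF_mapsTo ha hz : _)
  · intro hw
    exact ⟨hgsQ a w, hgsQ_mem_ball ha hw, hgsF_of_Q ha hw⟩

lemma hgs_mobius_normSq (b ζ : ℂ) :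
    normSq (1 - (starRingEnd ℂ) b * ζ) - normSq (ζ - b)
      = (1 - normSq b) * (1 - normSq ζ) := by
  rw [Complex.normSq_sub, Complex.normSq_sub, Complex.normSq_one, map_mul,
    Complex.normSq_conj]
  have h1 : ((1 : ℂ) * (starRingEnd ℂ) ((starRingEnd ℂ) b * ζ)).re
      = (ζ * (starRingEnd ℂ) b).re := by
    rw [one_mul, show (starRingEnd ℂ) ((starRingEnd ℂ) b * ζ)
        = (starRingEnd ℂ) (ζ * (starRingEnd ℂ) b) by
      rw [map_mul, map_mul, Complex.conj_conj]; ring, Complex.conj_re]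
  rw [h1]
  ring

lemma hgs_mobius_den_ne {b ζ : ℂ} (hb : normSq b < 1) (hζ : normSq ζ < 1) :
    1 - (starRingEnd ℂ) b * ζ ≠ 0 := by
  intro h
  have := hgs_mobius_normSq b ζ
  rw [h, map_zero] at this
  nlinarith [Complex.normSq_nonneg (ζ - b), Complex.normSq_nonneg b,
    Complex.normSq_nonneg ζ]

lemma hgs_mobius_mem_ball {b ζ : ℂ} (hb : normSq b < 1) (hζ : normSq ζ < 1) :
    (ζ - b) / (1 - (starRingEnd ℂ) b * ζ) ∈ Metric.ball (0 : ℂ) 1 := by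
  have hd := hgs_mobius_normSq b ζ
  have hden := hgs_mobius_den_ne hb hζ
  rw [mem_ball_zero_iff, ← Real.sqrt_one,
    show ‖(ζ - b) / (1 - (starRingEnd ℂ) b * ζ)‖
      = Real.sqrt (normSq ((ζ - b) / (1 - (starRingEnd ℂ) b * ζ))) by
        rw [Complex.norm_def]]
  apply Real.sqrt_lt_sqrt (Complex.normSq_nonneg _)
  rw [Complex.normSq_div, div_lt_one (Complex.normSq_pos.mpr hden)]
  nlinarith [Complex.normSq_nonneg b, Complex.normSq_nonneg ζ]

lemma hgs_conj_mul_self (b : ℂ) : (starRingEnd ℂ) b * b = ((normSq b : ℝ) : ℂ) := by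
  rw [mul_comm, Complex.mul_conj]

lemma hgs_upper {a : ℝ} (ha : a ∈ Set.Ioo (-1 : ℝ) 1) (F : ℂ → ℂ)
    (hF : DifferentiableOn ℂ F (Metric.ball 0 1))
    (hmaps : ∀ z ∈ Metric.ball (0:ℂ) 1, (F z).re ∈ Set.Ioo (-1:ℝ) 1)
    (hF0 : (F 0).re = a) :
    ‖deriv F 0‖ ≤ 4 / Real.pi * Real.cos (Real.pi * a / 2) := by
  have hπ := Real.pi_pos
  have hκ := hgs_kappa_pos ha
  have h0mem : (0:ℂ) ∈ Metric.ball (0:ℂ) 1 := mem_ball_self one_pos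
  have hw0 : (F 0).re ∈ Set.Ioo (-1:ℝ) 1 := hmaps 0 h0mem
  set w₀ : ℂ := F 0 with hw₀def
  set b : ℂ := hgsQ a w₀ with hbdef
  set E₀ : ℂ := Complex.exp (Complex.I * (Real.pi : ℂ) * w₀ / 2) with hE₀def
  have hnb : normSq b < 1 := hgs_normSq_lt_one ha hw0
  have hqden0 : 1 + hgsC a * E₀ ≠ 0 := hgs_q_den_ne ha hw0
  set u : ℂ → ℂ := fun z => (hgsQ a (F z) - b) / (1 - (starRingEnd ℂ) b * hgsQ a (F z))
    with hudef
  -- differentiability of q ∘ F on the ball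
  have hqF_diff : ∀ z ∈ Metric.ball (0:ℂ) 1,
      DifferentiableAt ℂ (fun y => hgsQ a (F y)) z := by
    intro z hz
    have hFz : DifferentiableAt ℂ F z := hF.differentiableAt (isOpen_ball.mem_nhds hz)
    have hFzs := hmaps z hz
    have hexp : DifferentiableAt ℂ
        (fun y => Complex.exp (Complex.I * (Real.pi : ℂ) * F y / 2)) z :=
      ((hFz.const_mul (Complex.I * (Real.pi : ℂ))).div_const 2).cexp
    exact ((hexp.sub_const _).div ((hexp.const_mul _).const_add 1)
      (hgs_q_den_ne ha hFzs))
  -- u is differentiable on the ball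
  have hu_diff : DifferentiableOn ℂ u (Metric.ball 0 1) := by
    intro z hz
    have h1 := hqF_diff z hz
    have h2 : normSq (hgsQ a (F z)) < 1 := hgs_normSq_lt_one ha (hmaps z hz)
    exact (((h1.sub_const b).div ((h1.const_mul _).const_sub 1)
      (hgs_mobius_den_ne hnb h2))).differentiableWithinAt
  have hu0 : u 0 = 0 := by
    simp only [hudef, hbdef, hw₀def, sub_self, zero_div]
  have hu_maps : Set.MapsTo u (Metric.ball 0 1) (Metric.ball (u 0) 1) := by
    intro z hz
    rw [hu0]
    exact hgs_mobius_mem_ball hnb (hgs_normSq_lt_one ha (hmaps z hz))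
  have hschwarz : ‖deriv u 0‖ ≤ 1 := by
    have := Complex.norm_deriv_le_div_of_mapsTo_ball hu_diff
      (hu_maps.mono_right Metric.ball_subset_closedBall) one_pos
    simpa using this
  -- derivative computation
  have hF' : HasDerivAt F (deriv F 0) 0 :=
    (hF.differentiableAt (isOpen_ball.mem_nhds h0mem)).hasDerivAt
  have hlin : HasDerivAt (fun w : ℂ => Complex.I * (Real.pi : ℂ) * w / 2)
      (Complex.I * (Real.pi : ℂ) / 2) w₀ := by
    simpa using ((hasDerivAt_id w₀).const_mul (Complex.I * (Real.pi : ℂ))).div_const 2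
  have hE : HasDerivAt (fun w : ℂ => Complex.exp (Complex.I * (Real.pi : ℂ) * w / 2))
      (E₀ * (Complex.I * (Real.pi : ℂ) / 2)) w₀ := hlin.cexp
  have hq : HasDerivAt (hgsQ a)
      (Complex.I * (Real.pi : ℂ) / 2 * E₀ * (1 + hgsC a ^ 2) / (1 + hgsC a * E₀) ^ 2)
      w₀ := by
    have := (hE.sub_const (hgsC a)).div ((hE.const_mul (hgsC a)).const_add 1) hqden0
    refine this.congr_deriv ?_
    field_simp
    ring
  have hqF : HasDerivAt (fun z => hgsQ a (F z))
      (Complex.I * (Real.pi : ℂ) / 2 * E₀ * (1 + hgsC a ^ 2) / (1 + hgsC a * E₀) ^ 2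
        * deriv F 0) 0 := hq.comp 0 hF'
  have hne1 : (1 : ℂ) - ((normSq b : ℝ) : ℂ) ≠ 0 := by
    intro h
    have : ((1 - normSq b : ℝ) : ℂ) = 0 := by push_cast; linear_combination h
    rw [Complex.ofReal_eq_zero] at this
    linarith
  have hbne : (1 : ℂ) - (starRingEnd ℂ) b * b ≠ 0 := by
    rw [hgs_conj_mul_self]; exact hne1
  have hmob : HasDerivAt (fun ζ : ℂ => (ζ - b) / (1 - (starRingEnd ℂ) b * ζ))
      ((1 - ((normSq b : ℝ) : ℂ))⁻¹) b := by
    have := ((hasDerivAt_id b).sub_const b).div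
      (((hasDerivAt_id b).const_mul ((starRingEnd ℂ) b)).const_sub 1) hbne
    refine this.congr_deriv ?_
    simp only [id_eq]
    rw [hgs_conj_mul_self]
    field_simp [hne1]
    try ring
  have hu' : HasDerivAt u
      ((1 - ((normSq b : ℝ) : ℂ))⁻¹ *
        (Complex.I * (Real.pi : ℂ) / 2 * E₀ * (1 + hgsC a ^ 2) / (1 + hgsC a * E₀) ^ 2
          * deriv F 0)) 0 := by have := hmob.comp 0 hqF; exact this
  have hderiv_u : deriv u 0 = (1 - ((normSq b : ℝ) : ℂ))⁻¹ *
        (Complex.I * (Real.pi : ℂ) / 2 * E₀ * (1 + hgsC a ^ 2) / (1 + hgsC a * E₀) ^ 2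
          * deriv F 0) := hu'.deriv
  -- norm computations
  have habsE : ‖E₀‖ = Real.exp (-(Real.pi * w₀.im / 2)) := hgsE_abs w₀
  have hreE : E₀.re = Real.cos (Real.pi * a / 2) * ‖E₀‖ := by
    rw [hE₀def, Complex.exp_re, (hgsE_re_im w₀).1, (hgsE_re_im w₀).2, habsE, hw₀def, hF0]
    ring
  have hEpos : 0 < ‖E₀‖ := by rw [habsE]; exact Real.exp_pos _
  have hnsd : 0 < normSq (1 + hgsC a * E₀) := Complex.normSq_pos.mpr hqden0
  have h1mb : 1 - normSq b = 4 * Real.cos (Real.pi * a / 2) * E₀.re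
      / normSq (1 + hgsC a * E₀) := by
    have hdd := hgs_normSq_diff (a := a) E₀
    have hb2 : normSq b = normSq (E₀ - hgsC a) / normSq (1 + hgsC a * E₀) := by
      rw [hbdef, hgsQ, ← hE₀def, Complex.normSq_div]
    rw [hb2]
    rw [eq_div_iff hnsd.ne', sub_mul, div_mul_cancel₀ _ hnsd.ne', one_mul]
    linarith [hdd]
  have h1mb_pos : 0 < 1 - normSq b := by linarith
  have e0 : ‖(1 - ((normSq b : ℝ) : ℂ))⁻¹‖ = (1 - normSq b)⁻¹ := by
    rw [norm_inv, show (1:ℂ) - ((normSq b:ℝ):ℂ) = ((1 - normSq b : ℝ):ℂ) by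
      push_cast; ring, Complex.norm_real, Real.norm_eq_abs, abs_of_pos h1mb_pos]
  have e1 : ‖Complex.I * (Real.pi : ℂ) / 2‖ = Real.pi / 2 := by
    rw [norm_div, norm_mul]
    simp [abs_of_pos hπ]
  have e2 : ‖1 + hgsC a ^ 2‖ = 2 * Real.cos (Real.pi * a / 2) := by
    rw [hgs_one_add_sq, norm_mul, norm_mul, Complex.norm_real, Real.norm_eq_abs,
      abs_of_pos hκ]
    have habsc : ‖hgsC a‖ = 1 := by
      have := hgs_normSq_c (a := a)
      rw [← Complex.sq_norm] at this
      nlinarith [norm_nonneg (hgsC a)]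
    rw [habsc]
    norm_num
  have e3 : ‖(1 + hgsC a * E₀) ^ 2‖ = normSq (1 + hgsC a * E₀) := by
    rw [norm_pow, Complex.sq_norm]
  have hnorm_u : ‖deriv u 0‖ =
      (1 - normSq b)⁻¹ * (Real.pi / 2 * ‖E₀‖ *
        (2 * Real.cos (Real.pi * a / 2)) / normSq (1 + hgsC a * E₀)) * ‖deriv F 0‖ := by
    rw [hderiv_u, norm_mul, norm_mul, norm_div, norm_mul, norm_mul,
      e0, e1, e2, e3]
    ring
  have hκne : Real.cos (Real.pi * a / 2) ≠ 0 := ne_of_gt hκ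
  have hEne : ‖E₀‖ ≠ 0 := ne_of_gt hEpos
  have hnsdne : normSq (1 + hgsC a * E₀) ≠ 0 := ne_of_gt hnsd
  have hkey : (1 - normSq b)⁻¹ * (Real.pi / 2 * ‖E₀‖ *
        (2 * Real.cos (Real.pi * a / 2)) / normSq (1 + hgsC a * E₀))
      = Real.pi / (4 * Real.cos (Real.pi * a / 2)) := by
    rw [h1mb, hreE]
    field_simp
  rw [hnorm_u, hkey] at hschwarz
  have hc4 : 0 < Real.pi / (4 * Real.cos (Real.pi * a / 2)) := by positivity
  have hπne : Real.pi ≠ 0 := ne_of_gt hπ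
  rw [div_mul_eq_mul_div, div_le_one (by positivity)] at hschwarz
  rw [show (4 : ℝ) / Real.pi * Real.cos (Real.pi * a / 2)
      = 4 * Real.cos (Real.pi * a / 2) / Real.pi by ring, le_div_iff₀ hπ]
  linarith [hschwarz]

end hgsAux

/-- For `a ∈ (-1,1)`, the supremum of `|∇h(0)|` over all real-valued harmonic maps
`h : 𝔻 → (-1,1)` with `h 0 = a` equals `(4/π)·sin (π(a+1)/2)` (and is attained),
the extremal being the real part of a conformal map of the disk onto the strip
`(-1,1) × ℝ` sending `0` to `a`. -/
theorem harmonic_gradient_sup (a : ℝ) (ha : a ∈ Set.Ioo (-1 : ℝ) 1) :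
    IsGreatest {L : ℝ | ∃ (h : ℂ → ℝ) (F : ℂ → ℂ),
        DifferentiableOn ℂ F (Metric.ball 0 1) ∧
        (∀ z ∈ Metric.ball (0 : ℂ) 1, h z = (F z).re) ∧
        Set.MapsTo h (Metric.ball 0 1) (Set.Ioo (-1 : ℝ) 1) ∧ h 0 = a ∧
        L = ‖fderiv ℝ h 0‖}
      ((4 / Real.pi) * Real.sin (Real.pi * (a + 1) / 2)) ∧
    ∃ f : ℂ → ℂ, DifferentiableOn ℂ f (Metric.ball 0 1) ∧
      Set.InjOn f (Metric.ball 0 1) ∧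
      f '' (Metric.ball 0 1) = {w : ℂ | -1 < w.re ∧ w.re < 1} ∧
      f 0 = (a : ℂ) ∧
      ‖fderiv ℝ (fun z => (f z).re) 0‖ = (4 / Real.pi) * Real.sin (Real.pi * (a + 1) / 2) := by
  have hπ := Real.pi_pos
  have hκ := hgs_kappa_pos ha
  have hval : (4 / Real.pi) * Real.sin (Real.pi * (a + 1) / 2)
      = 4 / Real.pi * Real.cos (Real.pi * a / 2) := by
    rw [show Real.pi * (a + 1) / 2 = Real.pi * a / 2 + Real.pi / 2 by ring,
      Real.sin_add_pi_div_two]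
  have hFdiffAt : DifferentiableAt ℂ (hgsF a) 0 :=
    ((hgsF_diff ha) 0 (Metric.mem_ball_self one_pos)).differentiableAt
      (Metric.isOpen_ball.mem_nhds (Metric.mem_ball_self one_pos))
  have hfderiv : ‖fderiv ℝ (fun z => (hgsF a z).re) 0‖
      = 4 / Real.pi * Real.cos (Real.pi * a / 2) := by
    rw [norm_fderiv_re_comp _ hFdiffAt, hgsF_deriv_norm ha]
  constructor
  · constructor
    · refine ⟨fun z => (hgsF a z).re, hgsF a, hgsF_diff ha, fun z hz => rfl, ?_, ?_, ?_⟩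
      · intro z hz
        exact hgsF_mapsTo ha hz
      · show (hgsF a 0).re = a
        rw [hgsF_zero ha]; exact Complex.ofReal_re a
      · rw [hfderiv, hval]
    · rintro L ⟨h, F, hFd, hre, hm, h0, rfl⟩
      have h0mem : (0:ℂ) ∈ Metric.ball (0:ℂ) 1 := Metric.mem_ball_self one_pos
      have heq : h =ᶠ[nhds (0:ℂ)] fun z => (F z).re :=
        Filter.eventuallyEq_of_mem (Metric.isOpen_ball.mem_nhds h0mem) hre
      have hFd0 : DifferentiableAt ℂ F 0 :=
        (hFd 0 h0mem).differentiableAt (Metric.isOpen_ball.mem_nhds h0mem)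
      rw [heq.fderiv_eq, norm_fderiv_re_comp _ hFd0, hval]
      apply hgs_upper ha F hFd
      · intro z hz
        rw [← hre z hz]
        exact hm hz
      · rw [← hre 0 h0mem, h0]
  · exact ⟨hgsF a, hgsF_diff ha, hgsF_injOn ha, hgsF_image ha, hgsF_zero ha,
      by rw [hfderiv, hval]⟩
end

section
/- If h : 𝔻 → (-1,1) is a real-valued harmonic function with h(a) = b for some a ∈ 𝔻, then |∇h(a)| ≤ (4/π)·sin(π(|b|+1)/2)/(1−|a|²). -/
open Real Set Metric

namespace HarmonicGradAux

noncomputable def moeb (c : ℂ) : ℂ → ℂ := fun w => (w - c) / (1 - (starRingEnd ℂ) c * w)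

lemma nsq_eq (z : ℂ) : Complex.normSq z = ‖z‖ ^ 2 := by
  rw [Complex.normSq_eq_norm_sq]

lemma moeb_denom_ne {c w : ℂ} (hc : ‖c‖ < 1) (hw : ‖w‖ < 1) :
    (1 : ℂ) - (starRingEnd ℂ) c * w ≠ 0 := by
  intro hzero
  have h1 : ‖(starRingEnd ℂ) c * w‖ < 1 := by
    rw [norm_mul, RCLike.norm_conj]
    nlinarith [norm_nonneg c, norm_nonneg w]
  have h2 : (starRingEnd ℂ) c * w = 1 := by linear_combination -hzero
  rw [h2, norm_one] at h1
  exact lt_irrefl 1 h1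

lemma moeb_key (c w : ℂ) :
    Complex.normSq (1 - (starRingEnd ℂ) c * w) - Complex.normSq (w - c)
      = (1 - Complex.normSq c) * (1 - Complex.normSq w) := by
  simp only [Complex.normSq_apply, Complex.sub_re, Complex.sub_im, Complex.mul_re,
    Complex.mul_im, Complex.one_re, Complex.one_im, Complex.conj_re, Complex.conj_im]
  ring

lemma moeb_norm_lt {c w : ℂ} (hc : ‖c‖ < 1) (hw : ‖w‖ < 1) : ‖moeb c w‖ < 1 := by
  have hd := moeb_denom_ne hc hw
  rw [moeb, norm_div, div_lt_one (norm_pos_iff.mpr hd)]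
  have hkey := moeb_key c w
  have e1 := nsq_eq (w - c)
  have e2 := nsq_eq (1 - (starRingEnd ℂ) c * w)
  have e3 := nsq_eq c
  have e4 := nsq_eq w
  have p1 : 0 < 1 - ‖c‖ ^ 2 := by nlinarith [norm_nonneg c]
  have p2 : 0 < 1 - ‖w‖ ^ 2 := by nlinarith [norm_nonneg w]
  have hlt : ‖w - c‖ ^ 2 < ‖1 - (starRingEnd ℂ) c * w‖ ^ 2 := by
    nlinarith [mul_pos p1 p2]
  exact lt_of_pow_lt_pow_left₀ 2 (norm_nonneg _) hlt

lemma moeb_hasDerivAt (c x : ℂ) (h : (1 : ℂ) - (starRingEnd ℂ) c * x ≠ 0) :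
    HasDerivAt (moeb c) ((1 - (starRingEnd ℂ) c * c) / (1 - (starRingEnd ℂ) c * x) ^ 2) x := by
  have h1 : HasDerivAt (fun w : ℂ => w - c) 1 x := (hasDerivAt_id x).sub_const c
  have h2 : HasDerivAt (fun w : ℂ => (1 : ℂ) - (starRingEnd ℂ) c * w) (-((starRingEnd ℂ) c)) x := by
    simpa using ((hasDerivAt_id x).const_mul ((starRingEnd ℂ) c)).const_sub 1
  have h3 := h1.div h2 h
  exact h3.congr_deriv (by ring)

lemma normSq_cos (z : ℂ) :
    Complex.normSq (Complex.cos z) = Real.cos z.re ^ 2 + Real.sinh z.im ^ 2 := by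
  rw [Complex.cos_eq, ← Complex.ofReal_cos, ← Complex.ofReal_sin, ← Complex.ofReal_cosh,
    ← Complex.ofReal_sinh]
  have h1 := Real.sin_sq_add_cos_sq z.re
  have h2 := Real.cosh_sq z.im
  simp only [Complex.normSq_apply, Complex.sub_re, Complex.sub_im, Complex.mul_re, Complex.mul_im,
    Complex.ofReal_re, Complex.ofReal_im, Complex.I_re, Complex.I_im]
  nlinarith [h1, h2]

lemma normSq_sin (z : ℂ) :
    Complex.normSq (Complex.sin z) = Real.sin z.re ^ 2 + Real.sinh z.im ^ 2 := by
  rw [Complex.sin_eq, ← Complex.ofReal_cos, ← Complex.ofReal_sin, ← Complex.ofReal_cosh,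
    ← Complex.ofReal_sinh]
  have h1 := Real.sin_sq_add_cos_sq z.re
  have h2 := Real.cosh_sq z.im
  simp only [Complex.normSq_apply, Complex.add_re, Complex.add_im, Complex.mul_re, Complex.mul_im,
    Complex.ofReal_re, Complex.ofReal_im, Complex.I_re, Complex.I_im]
  nlinarith [h1, h2]

lemma cos_ne_zero_strip {w : ℂ} (hw : |w.re| < Real.pi / 4) : Complex.cos w ≠ 0 := by
  have hπ := Real.pi_pos
  obtain ⟨h1, h2⟩ := abs_lt.mp hw
  have hc : 0 < Real.cos w.re :=
    Real.cos_pos_of_mem_Ioo ⟨by linarith, by linarith⟩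
  have : 0 < Complex.normSq (Complex.cos w) := by
    rw [normSq_cos]
    nlinarith [sq_nonneg (Real.sinh w.im)]
  exact Complex.normSq_pos.mp this

lemma tan_norm_lt {w : ℂ} (hw : |w.re| < Real.pi / 4) : ‖Complex.tan w‖ < 1 := by
  have hπ := Real.pi_pos
  obtain ⟨h1, h2⟩ := abs_lt.mp hw
  have hcos := cos_ne_zero_strip hw
  have hc2 : 0 < Real.cos (2 * w.re) :=
    Real.cos_pos_of_mem_Ioo ⟨by linarith, by linarith⟩
  rw [Real.cos_two_mul'] at hc2
  rw [Complex.tan_eq_sin_div_cos, norm_div, div_lt_one (norm_pos_iff.mpr hcos)]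
  have e1 := nsq_eq (Complex.sin w)
  have e2 := nsq_eq (Complex.cos w)
  have e3 := normSq_sin w
  have e4 := normSq_cos w
  nlinarith [norm_nonneg (Complex.sin w), norm_nonneg (Complex.cos w)]

end HarmonicGradAux

open HarmonicGradAux

/-- Gradient estimate at an interior point: if `h` is a real-valued harmonic function on
the unit disk with values in `(-1,1)` and `h a = b` for `a ∈ 𝔻`, then
`|∇h(a)| ≤ (4/π)·sin (π(|b|+1)/2)/(1-|a|²)`. -/
theorem harmonic_gradient_bound (a : ℂ) (ha : a ∈ Metric.ball (0 : ℂ) 1) (b : ℝ)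
    (h : ℂ → ℝ) (F : ℂ → ℂ)
    (hF : DifferentiableOn ℂ F (Metric.ball 0 1))
    (hre : ∀ z ∈ Metric.ball (0 : ℂ) 1, h z = (F z).re)
    (hmaps : Set.MapsTo h (Metric.ball 0 1) (Set.Ioo (-1 : ℝ) 1))
    (hab : h a = b) :
    ‖fderiv ℝ h a‖ ≤ (4 / Real.pi) * Real.sin (Real.pi * (|b| + 1) / 2) / (1 - ‖a‖ ^ 2) := by
  have hπ : (0 : ℝ) < Real.pi := Real.pi_pos
  have hanorm : ‖a‖ < 1 := mem_ball_zero_iff.mp ha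
  have hna : Complex.normSq a < 1 := by rw [nsq_eq]; nlinarith [norm_nonneg a]
  have hb : |b| < 1 := by
    have := hmaps ha; rw [hab] at this; exact abs_lt.mpr ⟨this.1, this.2⟩
  have hFa : (F a).re = b := by rw [← hre a ha, hab]
  have hFstrip : ∀ z ∈ Metric.ball (0 : ℂ) 1, |(F z).re| < 1 := by
    intro z hz
    rw [← hre z hz]
    exact abs_lt.mpr ⟨(hmaps hz).1, (hmaps hz).2⟩
  -- setup
  set q : ℂ := ((Real.pi / 4 : ℝ) : ℂ) with hq
  have hqre : ∀ z : ℂ, (q * z).re = Real.pi / 4 * z.re := fun z => Complex.re_ofReal_mul _ _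
  have hstrip : ∀ z ∈ Metric.ball (0 : ℂ) 1, |(q * F z).re| < Real.pi / 4 := by
    intro z hz
    rw [hqre, abs_mul, abs_of_pos (by positivity : (0:ℝ) < Real.pi / 4)]
    nlinarith [hFstrip z hz]
  set Φ : ℂ → ℂ := moeb (-a) with hΦdef
  set w₀ : ℂ := q * F a with hw₀
  have hw₀re : |w₀.re| < Real.pi / 4 := hstrip a ha
  have hcosw₀ : Complex.cos w₀ ≠ 0 := cos_ne_zero_strip hw₀re
  set cc : ℂ := Complex.tan w₀ with hcc
  have hccn : ‖cc‖ < 1 := tan_norm_lt hw₀re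
  have hncc : Complex.normSq cc < 1 := by rw [nsq_eq]; nlinarith [norm_nonneg cc]
  set ψ : ℂ → ℂ := moeb cc with hψdef
  set K : ℂ → ℂ := fun z => ψ (Complex.tan (q * F (Φ z))) with hK
  have hnega : ‖(-a : ℂ)‖ < 1 := by rwa [norm_neg]
  have hΦmem : ∀ z ∈ Metric.ball (0 : ℂ) 1, Φ z ∈ Metric.ball (0 : ℂ) 1 := by
    intro z hz
    exact mem_ball_zero_iff.mpr (moeb_norm_lt hnega (mem_ball_zero_iff.mp hz))
  have hΦ0 : Φ 0 = a := by simp [hΦdef, moeb]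
  -- K maps ball to ball, K 0 = 0
  have hK0 : K 0 = 0 := by
    have : Complex.tan (q * F (Φ 0)) = cc := by rw [hΦ0]
    rw [hK]
    simp only [this, hψdef, moeb, sub_self, zero_div]
  have hKmaps : Set.MapsTo K (Metric.ball (0:ℂ) 1) (Metric.ball (K 0) 1) := by
    rw [hK0]
    intro z hz
    refine mem_ball_zero_iff.mpr (moeb_norm_lt hccn ?_)
    exact tan_norm_lt (hstrip _ (hΦmem z hz))
  -- K differentiable on ball
  have hKdiff : DifferentiableOn ℂ K (Metric.ball (0:ℂ) 1) := by
    intro z hz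
    have hz' := mem_ball_zero_iff.mp hz
    have d1 : DifferentiableAt ℂ Φ z :=
      (moeb_hasDerivAt (-a) z (moeb_denom_ne hnega hz')).differentiableAt
    have d2 : DifferentiableAt ℂ F (Φ z) :=
      hF.differentiableAt (isOpen_ball.mem_nhds (hΦmem z hz))
    have d3 : DifferentiableAt ℂ (fun y => q * F (Φ y)) z := ((d2.comp z d1).const_mul q)
    have d4 : DifferentiableAt ℂ Complex.tan (q * F (Φ z)) :=
      (Complex.hasDerivAt_tan (cos_ne_zero_strip (hstrip _ (hΦmem z hz)))).differentiableAt
    have d5 : DifferentiableAt ℂ ψ (Complex.tan (q * F (Φ z))) :=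
      (moeb_hasDerivAt cc _ (moeb_denom_ne hccn
        (tan_norm_lt (hstrip _ (hΦmem z hz))))).differentiableAt
    exact ((d5.comp z (d4.comp z d3))).differentiableWithinAt
  -- derivative of K at 0
  set f' : ℂ := deriv F a with hf'
  have hFat : HasDerivAt F f' a :=
    (hF.differentiableAt (isOpen_ball.mem_nhds ha)).hasDerivAt
  set DΦ : ℂ := 1 - (starRingEnd ℂ) a * a with hDΦ
  have hd1 : HasDerivAt Φ DΦ 0 := by
    have h0 : ((1:ℂ) - (starRingEnd ℂ) (-a) * 0) ≠ 0 := by simp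
    have := moeb_hasDerivAt (-a) 0 h0
    simpa [hDΦ] using this
  have hd2 : HasDerivAt F f' (Φ 0) := by rwa [hΦ0]
  have hd3 : HasDerivAt (fun z => F (Φ z)) (f' * DΦ) 0 := hd2.comp 0 hd1
  have hd4 : HasDerivAt (fun z => q * F (Φ z)) (q * (f' * DΦ)) 0 := hd3.const_mul q
  have hval : q * F (Φ 0) = w₀ := by rw [hΦ0]
  have ht : HasDerivAt Complex.tan (1 / Complex.cos w₀ ^ 2) (q * F (Φ 0)) := by
    rw [hval]; exact Complex.hasDerivAt_tan hcosw₀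
  have hd5 : HasDerivAt (fun z => Complex.tan (q * F (Φ z)))
      (1 / Complex.cos w₀ ^ 2 * (q * (f' * DΦ))) 0 := by
    have := ht.comp 0 hd4; exact this
  have hdenc : ((1:ℂ) - (starRingEnd ℂ) cc * cc) ≠ 0 := moeb_denom_ne hccn hccn
  have hd6 : HasDerivAt ψ ((1 - (starRingEnd ℂ) cc * cc)⁻¹) cc := by
    have := moeb_hasDerivAt cc cc hdenc
    have e : (1 - (starRingEnd ℂ) cc * cc) / (1 - (starRingEnd ℂ) cc * cc) ^ 2
        = (1 - (starRingEnd ℂ) cc * cc)⁻¹ := by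
      field_simp
    rwa [e] at this
  have hd6' : HasDerivAt ψ ((1 - (starRingEnd ℂ) cc * cc)⁻¹)
      (Complex.tan (q * F (Φ 0))) := by rwa [hval]
  have hdK : HasDerivAt K
      ((1 - (starRingEnd ℂ) cc * cc)⁻¹ * (1 / Complex.cos w₀ ^ 2 * (q * (f' * DΦ)))) 0 :=
    by have := hd6'.comp 0 hd5; exact this
  -- Schwarz lemma
  have hS := Complex.norm_deriv_le_div_of_mapsTo_ball hKdiff (hKmaps.mono_right ball_subset_closedBall) one_pos
  rw [hdK.deriv, div_one] at hS
  -- compute the absolute value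
  have e1 : (1:ℂ) - (starRingEnd ℂ) cc * cc = ((1 - Complex.normSq cc : ℝ) : ℂ) := by
    rw [mul_comm, Complex.mul_conj]; push_cast; ring
  have e2 : DΦ = ((1 - Complex.normSq a : ℝ) : ℂ) := by
    rw [hDΦ, mul_comm, Complex.mul_conj]; push_cast; ring
  have hnsc : 0 < Complex.normSq (Complex.cos w₀) := Complex.normSq_pos.mpr hcosw₀
  have habs : ‖((1 - (starRingEnd ℂ) cc * cc)⁻¹
        * (1 / Complex.cos w₀ ^ 2 * (q * (f' * DΦ))))‖
      = (1 - Complex.normSq cc)⁻¹ * ((Complex.normSq (Complex.cos w₀))⁻¹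
        * (Real.pi / 4 * (‖f'‖ * (1 - Complex.normSq a)))) := by
    have haq : ‖q‖ = Real.pi / 4 := by
      rw [hq, Complex.norm_real, Real.norm_eq_abs, abs_of_pos (by positivity : (0:ℝ) < Real.pi / 4)]
    rw [e1, e2, norm_mul, norm_mul, norm_mul, norm_mul, norm_inv, norm_div, norm_pow, norm_one]
    rw [Complex.sq_norm, haq, Complex.norm_real, Complex.norm_real, Real.norm_eq_abs, Real.norm_eq_abs]
    rw [abs_of_pos (by linarith : (0:ℝ) < 1 - Complex.normSq cc),
      abs_of_pos (by linarith : (0:ℝ) < 1 - Complex.normSq a)]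
    ring
  rw [habs] at hS
  -- key trigonometric identity
  have hw₀re' : w₀.re = Real.pi / 4 * b := by rw [hw₀, hqre, hFa]
  have hE : (1 - Complex.normSq cc) * Complex.normSq (Complex.cos w₀)
      = Real.cos (Real.pi * b / 2) := by
    have etan : Complex.normSq cc
        = Complex.normSq (Complex.sin w₀) / Complex.normSq (Complex.cos w₀) := by
      rw [hcc, Complex.tan_eq_sin_div_cos, map_div₀]
    rw [etan, sub_mul, div_mul_cancel₀ _ (ne_of_gt hnsc), normSq_sin, normSq_cos]
    have : Real.pi * b / 2 = 2 * w₀.re := by rw [hw₀re']; ring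
    rw [this, Real.cos_two_mul']
    ring
  have hcpos : 0 < Real.cos (Real.pi * b / 2) := by
    rw [← hE]; exact mul_pos (by linarith) hnsc
  -- bound on |f'|
  have hf'bound : ‖f'‖ ≤ 4 / Real.pi * Real.cos (Real.pi * b / 2)
      / (1 - Complex.normSq a) := by
    rw [le_div_iff₀ (by linarith : (0:ℝ) < 1 - Complex.normSq a)]
    have h1 : 0 < 1 - Complex.normSq cc := by linarith
    have h2 : 0 < (1 - Complex.normSq cc)⁻¹ := by positivity
    have h3 : 0 < (Complex.normSq (Complex.cos w₀))⁻¹ := by positivity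
    have expand : 4 / Real.pi * Real.cos (Real.pi * b / 2)
        = 4 / Real.pi * ((1 - Complex.normSq cc) * Complex.normSq (Complex.cos w₀)) := by
      rw [hE]
    rw [expand]
    have hmul := mul_le_mul_of_nonneg_left hS
      (le_of_lt (show (0:ℝ) < 4 / Real.pi * ((1 - Complex.normSq cc)
        * Complex.normSq (Complex.cos w₀)) by positivity))
    calc ‖f'‖ * (1 - Complex.normSq a)
        = 4 / Real.pi * ((1 - Complex.normSq cc) * Complex.normSq (Complex.cos w₀))
          * ((1 - Complex.normSq cc)⁻¹ * ((Complex.normSq (Complex.cos w₀))⁻¹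
          * (Real.pi / 4 * (‖f'‖ * (1 - Complex.normSq a))))) := by
          field_simp
      _ ≤ 4 / Real.pi * ((1 - Complex.normSq cc) * Complex.normSq (Complex.cos w₀)) * 1 := hmul
      _ = 4 / Real.pi * ((1 - Complex.normSq cc) * Complex.normSq (Complex.cos w₀)) := by ring
  -- relate fderiv of h to f'
  have hfd : HasFDerivAt (fun z => (F z).re)
      (Complex.reCLM.comp (((ContinuousLinearMap.smulRight (1 : ℂ →L[ℂ] ℂ) f')).restrictScalars ℝ))
      a := (Complex.reCLM.hasFDerivAt).comp a ((hFat.hasFDerivAt).restrictScalars ℝ)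
  have heq : h =ᶠ[nhds a] fun z => (F z).re := by
    filter_upwards [isOpen_ball.mem_nhds ha] with z hz using hre z hz
  have hfdh : HasFDerivAt h
      (Complex.reCLM.comp (((ContinuousLinearMap.smulRight (1 : ℂ →L[ℂ] ℂ) f')).restrictScalars ℝ))
      a := hfd.congr_of_eventuallyEq heq
  have hnorm : ‖fderiv ℝ h a‖ ≤ ‖f'‖ := by
    rw [hfdh.fderiv]
    refine ContinuousLinearMap.opNorm_le_bound _ (norm_nonneg f') fun z => ?_
    have : (Complex.reCLM.comp
        (((ContinuousLinearMap.smulRight (1 : ℂ →L[ℂ] ℂ) f')).restrictScalars ℝ)) z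
        = (z * f').re := by simp [smul_eq_mul]
    rw [this]
    calc ‖(z * f').re‖ = |(z * f').re| := rfl
      _ ≤ ‖z * f'‖ := Complex.abs_re_le_norm _
      _ = ‖f'‖ * ‖z‖ := by rw [norm_mul]; ring
  -- finish
  have hsin : Real.sin (Real.pi * (|b| + 1) / 2) = Real.cos (Real.pi * b / 2) := by
    have e : Real.pi * (|b| + 1) / 2 = Real.pi * |b| / 2 + Real.pi / 2 := by ring
    rw [e, Real.sin_add_pi_div_two]
    rcases abs_cases b with ⟨hb1, _⟩ | ⟨hb1, _⟩
    · rw [hb1]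
    · rw [hb1]
      rw [show Real.pi * -b / 2 = -(Real.pi * b / 2) by ring, Real.cos_neg]
  rw [hsin]
  have hna' : Complex.normSq a = ‖a‖ ^ 2 := nsq_eq a
  calc ‖fderiv ℝ h a‖ ≤ ‖f'‖ := hnorm
    _ ≤ 4 / Real.pi * Real.cos (Real.pi * b / 2) / (1 - Complex.normSq a) := hf'bound
    _ = 4 / Real.pi * Real.cos (Real.pi * b / 2) / (1 - ‖a‖ ^ 2) := by rw [hna']
end

section
/- For a ∈ 𝔻, the supremum of |∇h(a)| over all real-valued harmonic maps h : 𝔻 → (-1,1) equals (4/π)·(1−|a|²)^{-1}. -/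
open Real Set Metric

namespace KhavAux

noncomputable section

lemma normSq_key (a z : ℂ) :
    Complex.normSq (1 - (starRingEnd ℂ) a * z) - Complex.normSq (z - a)
      = (1 - Complex.normSq a) * (1 - Complex.normSq z) := by
  simp only [Complex.normSq_apply, Complex.sub_re, Complex.sub_im, Complex.mul_re,
    Complex.mul_im, Complex.one_re, Complex.one_im, Complex.conj_re, Complex.conj_im]
  ring

lemma nq (x : ℂ) : Complex.normSq x = ‖x‖ ^ 2 := by
  rw [← Complex.sq_norm]

lemma den_ne (a z : ℂ) (ha : ‖a‖ < 1) (hz : ‖z‖ < 1) : 1 - (starRingEnd ℂ) a * z ≠ 0 := by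
  intro h
  have h2 : (starRingEnd ℂ) a * z = 1 := by linear_combination -h
  have h1 : ‖(starRingEnd ℂ) a * z‖ < 1 := by
    rw [norm_mul, RCLike.norm_conj]
    nlinarith [norm_nonneg a, norm_nonneg z]
  rw [h2] at h1; simp at h1

lemma mob_lt (a z : ℂ) (ha : ‖a‖ < 1) (hz : ‖z‖ < 1) :
    ‖(z - a) / (1 - (starRingEnd ℂ) a * z)‖ < 1 := by
  have hd := den_ne a z ha hz
  rw [norm_div, div_lt_one (norm_pos_iff.mpr hd)]
  have key := normSq_key a z
  rw [nq, nq, nq, nq] at key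
  have hpos : 0 < (1 - ‖a‖ ^ 2) * (1 - ‖z‖ ^ 2) :=
    mul_pos (by nlinarith [norm_nonneg a]) (by nlinarith [norm_nonneg z])
  have : ‖z - a‖ ^ 2 < ‖1 - (starRingEnd ℂ) a * z‖ ^ 2 := by linarith
  exact lt_of_pow_lt_pow_left₀ 2 (norm_nonneg _) this

lemma mob_hasDerivAt (a z : ℂ) (hden : 1 - (starRingEnd ℂ) a * z ≠ 0) :
    HasDerivAt (fun w => (w - a) / (1 - (starRingEnd ℂ) a * w))
      ((1 - (starRingEnd ℂ) a * a) / (1 - (starRingEnd ℂ) a * z) ^ 2) z := by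
  have h1 : HasDerivAt (fun w : ℂ => w - a) 1 z := (hasDerivAt_id z).sub_const a
  have h2 : HasDerivAt (fun w : ℂ => 1 - (starRingEnd ℂ) a * w) (-((starRingEnd ℂ) a)) z := by
    simpa using ((hasDerivAt_id z).const_mul ((starRingEnd ℂ) a)).const_sub 1
  have h3 : HasDerivAt (fun w => (w - a) / (1 - (starRingEnd ℂ) a * w)) _ z := h1.div h2 hden
  convert h3 using 1
  ring

lemma one_sub_normSq (t : ℂ) :
    1 - (starRingEnd ℂ) t * t = ((1 - ‖t‖ ^ 2 : ℝ) : ℂ) := by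
  rw [mul_comm, Complex.mul_conj, ← nq]
  push_cast
  ring


lemma normSq_cos_sub (ζ : ℂ) :
    Complex.normSq (Complex.cos ζ) - Complex.normSq (Complex.sin ζ)
      = Real.cos ζ.re ^ 2 - Real.sin ζ.re ^ 2 := by
  rw [Complex.sin_eq, Complex.cos_eq]
  have h := Real.cosh_sq ζ.im
  simp only [← Complex.ofReal_sin, ← Complex.ofReal_cos, ← Complex.ofReal_sinh,
    ← Complex.ofReal_cosh, Complex.normSq_apply, Complex.add_re, Complex.add_im, Complex.sub_re,
    Complex.sub_im, Complex.mul_re, Complex.mul_im, Complex.ofReal_re, Complex.ofReal_im,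
    Complex.I_re, Complex.I_im]
  nlinarith [h]

lemma normSq_cos_eq (ζ : ℂ) :
    Complex.normSq (Complex.cos ζ)
      = Real.cos ζ.re ^ 2 * Real.cosh ζ.im ^ 2 + Real.sin ζ.re ^ 2 * Real.sinh ζ.im ^ 2 := by
  rw [Complex.cos_eq]
  simp only [← Complex.ofReal_sin, ← Complex.ofReal_cos, ← Complex.ofReal_sinh,
    ← Complex.ofReal_cosh, Complex.normSq_apply, Complex.add_re, Complex.add_im, Complex.sub_re,
    Complex.sub_im, Complex.mul_re, Complex.mul_im, Complex.ofReal_re, Complex.ofReal_im,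
    Complex.I_re, Complex.I_im]
  ring

lemma strip_mem (x : ℝ) (hx : |x| < π / 4) : x ∈ Set.Ioo (-(π/2)) (π/2) := by
  have := Real.pi_pos
  constructor <;> [nlinarith [abs_lt.mp hx]; nlinarith [abs_lt.mp hx]]

lemma cos_ne_zero (ζ : ℂ) (hx : |ζ.re| < π / 4) : Complex.cos ζ ≠ 0 := by
  have hc : 0 < Real.cos ζ.re := Real.cos_pos_of_mem_Ioo (strip_mem _ hx)
  intro h
  have h2 := normSq_cos_eq ζ
  rw [h, map_zero] at h2
  nlinarith [mul_pos (pow_pos hc 2) (pow_pos (Real.cosh_pos ζ.im) 2),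
    mul_nonneg (sq_nonneg (Real.sin ζ.re)) (sq_nonneg (Real.sinh ζ.im))]

lemma cos_sq_pos (ζ : ℂ) (hx : |ζ.re| < π / 4) : 0 < ‖Complex.cos ζ‖ ^ 2 := by
  exact pow_pos (norm_pos_iff.mpr (cos_ne_zero ζ hx)) 2

lemma cos_two_pos (ζ : ℂ) (hx : |ζ.re| < π / 4) :
    0 < Real.cos ζ.re ^ 2 - Real.sin ζ.re ^ 2 := by
  have h1 : 0 < Real.cos (2 * ζ.re) := by
    apply Real.cos_pos_of_mem_Ioo
    have := abs_lt.mp hx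
    constructor <;> nlinarith [this.1, this.2]
  have h2 := Real.cos_two_mul ζ.re
  have h3 := Real.sin_sq_add_cos_sq ζ.re
  nlinarith

lemma norm_tan_lt (ζ : ℂ) (hx : |ζ.re| < π / 4) : ‖Complex.tan ζ‖ < 1 := by
  have hc := cos_ne_zero ζ hx
  rw [Complex.tan_eq_sin_div_cos, norm_div, div_lt_one (norm_pos_iff.mpr hc)]
  have key := normSq_cos_sub ζ
  rw [nq, nq] at key
  have h2 := cos_two_pos ζ hx
  have : ‖Complex.sin ζ‖ ^ 2 < ‖Complex.cos ζ‖ ^ 2 := by linarith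
  exact lt_of_pow_lt_pow_left₀ 2 (norm_nonneg _) this

lemma key_le (ζ : ℂ) (hx : |ζ.re| < π / 4) :
    (1 - ‖Complex.tan ζ‖ ^ 2) * ‖Complex.cos ζ‖ ^ 2 ≤ 1 := by
  have hc := cos_ne_zero ζ hx
  have hcp : 0 < ‖Complex.cos ζ‖ := norm_pos_iff.mpr hc
  have h1 : (1 - ‖Complex.tan ζ‖ ^ 2) * ‖Complex.cos ζ‖ ^ 2
      = ‖Complex.cos ζ‖ ^ 2 - ‖Complex.sin ζ‖ ^ 2 := by
    rw [Complex.tan_eq_sin_div_cos, norm_div, div_pow, sub_mul, one_mul,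
      div_mul_cancel₀ _ (pow_ne_zero 2 (ne_of_gt hcp))]
  have key := normSq_cos_sub ζ
  rw [nq, nq] at key
  have h3 := Real.sin_sq_add_cos_sq ζ.re
  nlinarith [sq_nonneg (Real.sin ζ.re)]


lemma norm_fderiv_eq {F : ℂ → ℂ} {h : ℂ → ℝ} {a : ℂ} (hF : DifferentiableAt ℂ F a)
    (heq : h =ᶠ[nhds a] fun z => (F z).re) :
    ‖fderiv ℝ h a‖ = ‖deriv F a‖ := by
  set c := deriv F a with hc
  set L := Complex.reCLM.comp
      ((ContinuousLinearMap.smulRight (1 : ℂ →L[ℂ] ℂ) c).restrictScalars ℝ) with hL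
  have hFd : HasFDerivAt F
      ((ContinuousLinearMap.smulRight (1 : ℂ →L[ℂ] ℂ) c).restrictScalars ℝ) a :=
    (hF.hasDerivAt.hasFDerivAt).restrictScalars ℝ
  have hcomp : HasFDerivAt (fun z => (F z).re) L a := (Complex.reCLM.hasFDerivAt).comp a hFd
  have h1 : fderiv ℝ h a = L := by rw [heq.fderiv_eq, hcomp.fderiv]
  rw [h1]
  have happ : ∀ v : ℂ, L v = (v * c).re := by
    intro v
    simp [hL, smul_eq_mul]
  apply le_antisymm
  · apply ContinuousLinearMap.opNorm_le_bound _ (norm_nonneg c)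
    intro v
    rw [happ, Real.norm_eq_abs]
    calc |(v * c).re| ≤ ‖v * c‖ := Complex.abs_re_le_norm _
      _ = ‖v * c‖ := rfl
      _ = ‖c‖ * ‖v‖ := by rw [norm_mul]; ring
  · rcases eq_or_ne c 0 with h0 | h0
    · simp [h0]
    · have h2 := L.le_opNorm ((starRingEnd ℂ) c)
      have h3 : ((starRingEnd ℂ) c * c).re = ‖c‖ ^ 2 := by
        rw [mul_comm, Complex.mul_conj, ← nq]
        simp
      rw [happ, h3, Real.norm_eq_abs, abs_of_nonneg (sq_nonneg _), RCLike.norm_conj] at h2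
      have hcp : 0 < ‖c‖ := norm_pos_iff.mpr h0
      nlinarith


lemma bound_zero (G : ℂ → ℂ) (hG : DifferentiableOn ℂ G (ball 0 1))
    (hmaps : ∀ z ∈ ball (0:ℂ) 1, |(G z).re| < 1) :
    ‖deriv G 0‖ ≤ 4 / π := by
  have hpi := Real.pi_pos
  have h0 : (0:ℂ) ∈ ball (0:ℂ) 1 := mem_ball_self one_pos
  have hre : ∀ z ∈ ball (0:ℂ) 1, |((↑(π/4) : ℂ) * G z).re| < π / 4 := by
    intro z hz
    rw [Complex.re_ofReal_mul, abs_mul, abs_of_pos (by positivity : (0:ℝ) < π/4)]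
    have := hmaps z hz
    nlinarith
  set ζ₀ : ℂ := (↑(π/4) : ℂ) * G 0 with hζ₀
  have hζ₀re : |ζ₀.re| < π/4 := hre 0 h0
  set t₀ : ℂ := Complex.tan ζ₀ with ht₀def
  have ht₀ : ‖t₀‖ < 1 := norm_tan_lt _ hζ₀re
  set K : ℂ → ℂ := fun z =>
    (Complex.tan ((↑(π/4) : ℂ) * G z) - t₀) /
      (1 - (starRingEnd ℂ) t₀ * Complex.tan ((↑(π/4) : ℂ) * G z)) with hK
  have htanlt : ∀ z ∈ ball (0:ℂ) 1, ‖Complex.tan ((↑(π/4) : ℂ) * G z)‖ < 1 :=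
    fun z hz => norm_tan_lt _ (hre z hz)
  have hKdiff : DifferentiableOn ℂ K (ball 0 1) := by
    intro z hz
    have hGz : DifferentiableAt ℂ G z := hG.differentiableAt (isOpen_ball.mem_nhds hz)
    have h1 : DifferentiableAt ℂ (fun w => (↑(π/4) : ℂ) * G w) z := hGz.const_mul _
    have hinner : DifferentiableAt ℂ (fun w => Complex.tan ((↑(π/4) : ℂ) * G w)) z :=
      (Complex.differentiableAt_tan.mpr (cos_ne_zero _ (hre z hz))).comp (f := fun w => (↑(π/4) : ℂ) * G w) z h1
    have hden : (1 : ℂ) - (starRingEnd ℂ) t₀ * Complex.tan ((↑(π/4):ℂ) * G z) ≠ 0 :=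
      den_ne t₀ _ ht₀ (htanlt z hz)
    exact ((hinner.sub_const t₀).div
      ((differentiableAt_const 1).sub ((differentiableAt_const _).mul hinner)) hden).differentiableWithinAt
  have hKmaps : MapsTo K (ball 0 1) (ball 0 1) := by
    intro z hz
    rw [mem_ball_zero_iff]
    exact mob_lt t₀ _ ht₀ (htanlt z hz)
  have hK0 : K 0 = 0 := by
    simp only [hK, ← hζ₀, ← ht₀def, sub_self, zero_div]
  have schwarz := Complex.norm_deriv_le_one_of_mapsTo_ball hKdiff
    (by rw [hK0]; exact hKmaps.mono_right ball_subset_closedBall) one_pos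
  have hGd : HasDerivAt G (deriv G 0) 0 := (hG.differentiableAt (isOpen_ball.mem_nhds h0)).hasDerivAt
  have hζd : HasDerivAt (fun z => (↑(π/4):ℂ) * G z) ((↑(π/4):ℂ) * deriv G 0) 0 := hGd.const_mul _
  have hcos0 : Complex.cos ζ₀ ≠ 0 := cos_ne_zero _ hζ₀re
  have htand : HasDerivAt (fun z => Complex.tan ((↑(π/4):ℂ) * G z))
      (1 / Complex.cos ζ₀ ^ 2 * ((↑(π/4):ℂ) * deriv G 0)) 0 :=
    (Complex.hasDerivAt_tan hcos0).comp (h := fun z => (↑(π/4):ℂ) * G z) 0 hζd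
  have hmobd := mob_hasDerivAt t₀ t₀ (den_ne t₀ t₀ ht₀ ht₀)
  have hKd : HasDerivAt K
      ((1 - (starRingEnd ℂ) t₀ * t₀) / (1 - (starRingEnd ℂ) t₀ * t₀) ^ 2 *
        (1 / Complex.cos ζ₀ ^ 2 * ((↑(π/4):ℂ) * deriv G 0))) 0 :=
    hmobd.comp (h₂ := fun w => (w - t₀) / (1 - (starRingEnd ℂ) t₀ * w)) 0 htand
  rw [hKd.deriv] at schwarz
  set c2 := ‖Complex.cos ζ₀‖ ^ 2 with hc2def
  have hc2 : 0 < c2 := cos_sq_pos _ hζ₀re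
  set P := 1 - ‖t₀‖ ^ 2 with hPdef
  have hP : 0 < P := by
    rw [hPdef]
    nlinarith [norm_nonneg t₀]
  have hPt : (1 : ℂ) - (starRingEnd ℂ) t₀ * t₀ = (P : ℂ) := one_sub_normSq t₀
  have hnorm : ‖(1 - (starRingEnd ℂ) t₀ * t₀) / (1 - (starRingEnd ℂ) t₀ * t₀) ^ 2 *
      (1 / Complex.cos ζ₀ ^ 2 * ((↑(π/4):ℂ) * deriv G 0))‖
      = P / P ^ 2 * (1 / c2 * (π/4 * ‖deriv G 0‖)) := by
    rw [hPt]
    rw [norm_mul, norm_div, norm_mul, norm_div, norm_mul, norm_pow, norm_pow, norm_one,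
      Complex.norm_real, Complex.norm_real, Real.norm_eq_abs, Real.norm_eq_abs,
      abs_of_pos hP, abs_of_pos (by positivity : (0:ℝ) < π/4),
      hc2def]
  rw [hnorm] at schwarz
  have key : P * c2 ≤ 1 := key_le ζ₀ hζ₀re
  calc ‖deriv G 0‖ = (P/P^2 * (1/c2 * (π/4 * ‖deriv G 0‖))) * (P * c2 * (4/π)) := by
        field_simp
    _ ≤ 1 * (P * c2 * (4/π)) := by
        apply mul_le_mul_of_nonneg_right schwarz
        positivity
    _ = (P * c2) * (4/π) := by ring
    _ ≤ 1 * (4/π) := by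
        apply mul_le_mul_of_nonneg_right key
        positivity
    _ = 4/π := one_mul _


lemma one_sub_ne (w : ℂ) (hw : ‖w‖ < 1) : (1 : ℂ) - w ≠ 0 := by
  intro h
  have h2 : w = 1 := by linear_combination -h
  rw [h2] at hw
  simp at hw

lemma re_pos_of_norm_lt (w : ℂ) (hw : ‖w‖ < 1) : 0 < ((1 + w) / (1 - w)).re := by
  have h1 := one_sub_ne w hw
  have hN : 0 < Complex.normSq (1 - w) := Complex.normSq_pos.mpr h1
  rw [Complex.div_re, ← add_div]
  apply div_pos _ hN
  have h2 : (1 + w).re * (1 - w).re + (1 + w).im * (1 - w).im = 1 - Complex.normSq w := by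
    simp only [Complex.normSq_apply, Complex.add_re, Complex.add_im, Complex.sub_re,
      Complex.sub_im, Complex.one_re, Complex.one_im]
    ring
  rw [h2, nq]
  nlinarith [norm_nonneg w]

lemma bound (F : ℂ → ℂ) (a : ℂ) (ha : ‖a‖ < 1) (hF : DifferentiableOn ℂ F (ball 0 1))
    (hmaps : ∀ z ∈ ball (0:ℂ) 1, |(F z).re| < 1) :
    ‖deriv F a‖ * (1 - ‖a‖ ^ 2) ≤ 4 / π := by
  have hna : ‖(-a : ℂ)‖ < 1 := by rwa [norm_neg]
  set p : ℂ → ℂ := fun z => (z - (-a)) / (1 - (starRingEnd ℂ) (-a) * z) with hp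
  have hpmem : MapsTo p (ball (0:ℂ) 1) (ball (0:ℂ) 1) := by
    intro z hz
    rw [mem_ball_zero_iff]
    exact mob_lt (-a) z hna (mem_ball_zero_iff.mp hz)
  have hpdiff : DifferentiableOn ℂ p (ball 0 1) := fun z hz =>
    ((mob_hasDerivAt (-a) z (den_ne (-a) z hna
      (mem_ball_zero_iff.mp hz))).differentiableAt).differentiableWithinAt
  have hGdiff : DifferentiableOn ℂ (F ∘ p) (ball 0 1) := hF.comp hpdiff hpmem
  have hGmaps : ∀ z ∈ ball (0:ℂ) 1, |((F ∘ p) z).re| < 1 := fun z hz => hmaps _ (hpmem hz)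
  have hamem : a ∈ ball (0:ℂ) 1 := mem_ball_zero_iff.mpr ha
  have hp0 : p 0 = a := by simp [hp]
  have hpd : HasDerivAt p
      ((1 - (starRingEnd ℂ) (-a) * (-a)) / (1 - (starRingEnd ℂ) (-a) * 0) ^ 2) 0 :=
    mob_hasDerivAt (-a) 0 (den_ne (-a) 0 hna (by simp))
  have hFd : HasDerivAt F (deriv F a) (p 0) := by
    rw [hp0]
    exact (hF.differentiableAt (isOpen_ball.mem_nhds hamem)).hasDerivAt
  have hGd := hFd.comp (h := p) 0 hpd
  have hderiv : deriv (F ∘ p) 0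
      = deriv F a * ((1 - (starRingEnd ℂ) (-a) * (-a)) / (1 - (starRingEnd ℂ) (-a) * 0) ^ 2) :=
    hGd.deriv
  have hcast : (1 - (starRingEnd ℂ) (-a) * (-a)) / (1 - (starRingEnd ℂ) (-a) * 0) ^ 2
      = ((1 - ‖a‖ ^ 2 : ℝ) : ℂ) := by
    rw [mul_zero, sub_zero, one_pow, div_one, map_neg, neg_mul_neg, one_sub_normSq a]
  have hb := bound_zero (F ∘ p) hGdiff hGmaps
  rw [hderiv, hcast, norm_mul, Complex.norm_real, Real.norm_eq_abs,
    abs_of_pos (by nlinarith [norm_nonneg a] : (0:ℝ) < 1 - ‖a‖ ^ 2)] at hb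
  exact hb

lemma extremal (a : ℂ) (ha : ‖a‖ < 1) :
    ∃ F : ℂ → ℂ, DifferentiableOn ℂ F (ball 0 1) ∧
      (∀ z ∈ ball (0:ℂ) 1, |(F z).re| < 1) ∧
      ‖deriv F a‖ = 4 / π * (1 - ‖a‖ ^ 2)⁻¹ := by
  have hpi := Real.pi_pos
  set m : ℂ → ℂ := fun z => (z - a) / (1 - (starRingEnd ℂ) a * z) with hm
  set F : ℂ → ℂ := fun z => (↑(2/π) : ℂ) * (-Complex.I) *
    Complex.log ((1 + m z) / (1 - m z)) with hF
  have hmlt : ∀ z ∈ ball (0:ℂ) 1, ‖m z‖ < 1 := fun z hz =>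
    mob_lt a z ha (mem_ball_zero_iff.mp hz)
  have hupos : ∀ z ∈ ball (0:ℂ) 1, 0 < ((1 + m z) / (1 - m z)).re :=
    fun z hz => re_pos_of_norm_lt _ (hmlt z hz)
  have hFd : ∀ z ∈ ball (0:ℂ) 1, HasDerivAt F
      ((↑(2/π) : ℂ) * (-Complex.I) * (((1 + m z) / (1 - m z))⁻¹ *
        ((((1 - (starRingEnd ℂ) a * a) / (1 - (starRingEnd ℂ) a * z) ^ 2) * (1 - m z) -
          (1 + m z) * -((1 - (starRingEnd ℂ) a * a) / (1 - (starRingEnd ℂ) a * z) ^ 2)) /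
          (1 - m z) ^ 2))) z := by
    intro z hz
    have hz1 := mem_ball_zero_iff.mp hz
    have hden := den_ne a z ha hz1
    have hmd : HasDerivAt m
        ((1 - (starRingEnd ℂ) a * a) / (1 - (starRingEnd ℂ) a * z) ^ 2) z :=
      mob_hasDerivAt a z hden
    have h1m : (1:ℂ) - m z ≠ 0 := one_sub_ne _ (hmlt z hz)
    have hnum : HasDerivAt (fun w => 1 + m w)
        ((1 - (starRingEnd ℂ) a * a) / (1 - (starRingEnd ℂ) a * z) ^ 2) z := hmd.const_add 1
    have hdeno : HasDerivAt (fun w => 1 - m w)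
        (-((1 - (starRingEnd ℂ) a * a) / (1 - (starRingEnd ℂ) a * z) ^ 2)) z := hmd.const_sub 1
    have hu := hnum.div hdeno h1m
    have hslit : (1 + m z) / (1 - m z) ∈ Complex.slitPlane :=
      Complex.mem_slitPlane_iff.mpr (Or.inl (hupos z hz))
    have hlog := (Complex.hasDerivAt_log hslit).comp (h := (fun w => 1 + m w) / (fun w => 1 - m w)) z hu
    exact hlog.const_mul _
  refine ⟨F, fun z hz => ((hFd z hz).differentiableAt).differentiableWithinAt, ?_, ?_⟩
  · intro z hz
    have hps := hupos z hz
    have harg : |Complex.arg ((1 + m z) / (1 - m z))| < π/2 :=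
      Complex.abs_arg_lt_pi_div_two_iff.mpr (Or.inl hps)
    have hre : (F z).re = 2/π * Complex.arg ((1 + m z) / (1 - m z)) := by
      simp only [hF, Complex.mul_re, Complex.mul_im, Complex.neg_re, Complex.neg_im,
        Complex.I_re, Complex.I_im, Complex.ofReal_re, Complex.ofReal_im, Complex.log_im]
      ring
    rw [hre, abs_mul, abs_of_pos (by positivity : (0:ℝ) < 2/π)]
    calc 2/π * |Complex.arg ((1 + m z) / (1 - m z))| < 2/π * (π/2) := by
          apply mul_lt_mul_of_pos_left harg
          positivity
      _ = 1 := by field_simp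
  · have hamem : a ∈ ball (0:ℂ) 1 := mem_ball_zero_iff.mpr ha
    have hda := hFd a hamem
    have hma : m a = 0 := by simp [hm]
    have hPpos : (0:ℝ) < 1 - ‖a‖ ^ 2 := by nlinarith [norm_nonneg a]
    have hPne : ((1 - ‖a‖ ^ 2 : ℝ) : ℂ) ≠ 0 := by
      rw [ne_eq, Complex.ofReal_eq_zero]
      exact ne_of_gt hPpos
    have hPt : (1:ℂ) - (starRingEnd ℂ) a * a = ((1 - ‖a‖ ^ 2 : ℝ) : ℂ) := one_sub_normSq a
    have hπ : (π : ℂ) ≠ 0 := by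
      rw [ne_eq, Complex.ofReal_eq_zero]
      exact ne_of_gt hpi
    have key : ∀ Q c : ℂ, Q ≠ 0 →
        c * (((1+(0:ℂ))/(1-0))⁻¹ * ((Q/Q^2 * (1-0) - (1+0) * -(Q/Q^2))/(1-0)^2))
          = 2 * c * Q⁻¹ := by
      intro Q c hQ
      field_simp
      ring
    have hval : deriv F a = 2 * ((↑(2/π) : ℂ) * -Complex.I) * (((1 - ‖a‖ ^ 2 : ℝ) : ℂ))⁻¹ := by
      rw [hda.deriv, hma, hPt]
      exact key _ _ hPne
    rw [hval]
    simp only [norm_mul, norm_neg, norm_inv, Complex.norm_I, Complex.norm_real,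
      Real.norm_eq_abs, Complex.norm_ofNat, mul_one]
    rw [abs_of_pos (show (0:ℝ) < 2/π by positivity), abs_of_pos hPpos]
    ring

end

end KhavAux

/-- Khavinson's extremal problem in the plane: for `a ∈ 𝔻`, the supremum of `|∇h(a)|`
over all real-valued harmonic maps `h : 𝔻 → (-1,1)` equals `(4/π)·(1-|a|²)⁻¹`
(and is attained). -/
theorem khavinson_planar (a : ℂ) (ha : a ∈ Metric.ball (0 : ℂ) 1) :
    IsGreatest {L : ℝ | ∃ (h : ℂ → ℝ) (F : ℂ → ℂ),
        DifferentiableOn ℂ F (Metric.ball 0 1) ∧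
        (∀ z ∈ Metric.ball (0 : ℂ) 1, h z = (F z).re) ∧
        Set.MapsTo h (Metric.ball 0 1) (Set.Ioo (-1 : ℝ) 1) ∧
        L = ‖fderiv ℝ h a‖}
      ((4 / Real.pi) * (1 - ‖a‖ ^ 2)⁻¹) := by
  have ha1 : ‖a‖ < 1 := mem_ball_zero_iff.mp ha
  have hpi := Real.pi_pos
  have hP : (0:ℝ) < 1 - ‖a‖ ^ 2 := by nlinarith [norm_nonneg a]
  constructor
  · obtain ⟨F, hFdiff, hFre, hFder⟩ := KhavAux.extremal a ha1
    refine ⟨fun z => (F z).re, F, hFdiff, fun z _ => rfl, ?_, ?_⟩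
    · intro z hz
      have h2 := abs_lt.mp (hFre z hz)
      exact ⟨h2.1, h2.2⟩
    · have hFa : DifferentiableAt ℂ F a := hFdiff.differentiableAt (isOpen_ball.mem_nhds ha)
      rw [KhavAux.norm_fderiv_eq hFa Filter.EventuallyEq.rfl, hFder]
  · rintro L ⟨h, F, hFdiff, heq, hmapsTo, rfl⟩
    have hFa : DifferentiableAt ℂ F a := hFdiff.differentiableAt (isOpen_ball.mem_nhds ha)
    have heq' : h =ᶠ[nhds a] fun z => (F z).re :=
      Filter.eventuallyEq_of_mem (isOpen_ball.mem_nhds ha) (fun z hz => heq z hz)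
    rw [KhavAux.norm_fderiv_eq hFa heq']
    have hFre : ∀ z ∈ Metric.ball (0:ℂ) 1, |(F z).re| < 1 := by
      intro z hz
      have h2 := hmapsTo hz
      rw [heq z hz] at h2
      exact abs_lt.mpr ⟨h2.1, h2.2⟩
    have hb := KhavAux.bound F a ha1 hFdiff hFre
    calc ‖deriv F a‖ = ‖deriv F a‖ * (1 - ‖a‖ ^ 2) * (1 - ‖a‖ ^ 2)⁻¹ := by
          rw [mul_assoc, mul_inv_cancel₀ (ne_of_gt hP), mul_one]
      _ ≤ 4 / π * (1 - ‖a‖ ^ 2)⁻¹ := by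
          apply mul_le_mul_of_nonneg_right hb
          positivity
end

section
/- If f : 𝔻 → 𝔻 is a complex-valued harmonic map with f(0) = a, then |f(z)| ≤ (4/π)·arctan(s(|a|)·(1+|z|)/(1−|z|)) − 1 for all z ∈ 𝔻, where s(t) = tan(π(t+1)/4). -/
open Real Set Metric Complex

set_option maxHeartbeats 1000000

/-- Key polynomial identity behind the relation `t v² = (ut+1)(t-u)` for the
Möbius-exponential map. -/
lemma key_poly (m s c t : ℝ) (hpyth : s^2 + c^2 = 1) (htc : t*c = s) :
    t * (1 - (2*m*s*c)^2 - (m*(2*s^2-1))^2)^2 =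
      (2*(2*m*s*c)*t + ((1-(m*(2*s^2-1)))^2 + (2*m*s*c)^2)) *
      (t*((1-(m*(2*s^2-1)))^2 + (2*m*s*c)^2) - 2*(2*m*s*c)) := by
  linear_combination
    ((-4)*m*c + 8*m^2*c + (-16)*m^2*c^3 + (-4)*m^3*c + 16*m^3*c^3 + (-16)*m^3*c^5
      + (-16)*m^3*s^2*c + 16*m^3*s^4*c + (-4)*t*m*s + (-8)*t*m^2*s + 16*t*m^2*s^3
      + (-4)*t*m^3*s + 16*t*m^3*s^3 + (-16)*t*m^3*s^3*c^2 + (-16)*t*m^3*s^5) * htc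
    + ((-16)*m^2*s*c + (-16)*m^3*s*c^3 + 32*m^3*s^3*c + 4*t*m + 8*t*m^2 + 16*t*m^2*c^2
      + (-16)*t*m^2*s^2 + 4*t*m^3 + 16*t*m^3*c^4 + (-16)*t*m^3*s^2 + (-16)*t*m^3*s^2*c^2
      + 16*t*m^3*s^4) * hpyth


noncomputable def Gm (w : ℂ) : ℂ :=
  (Complex.exp (((Real.pi/2 : ℝ) : ℂ) * Complex.I * w) + Complex.I) /
    (1 + Complex.I * Complex.exp (((Real.pi/2 : ℝ) : ℂ) * Complex.I * w))

lemma div_identity (K Nd t P : ℝ) (h : Nd ≠ 0)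
    (key : t*K^2 = (2*P*t + Nd)*(t*Nd - 2*P)) :
    t*(K/Nd)^2 = (2*P/Nd*t + 1)*(t - 2*P/Nd) := by
  field_simp
  linear_combination key

/-- Generic computation for the Möbius–exponential map: if `E = m(2sc) + i·m(2s²-1)`
with `s² + c² = 1`, `t·c = s`, then `(E+i)/(1+iE)` lands in the right half-plane and
its coordinates satisfy the tangent relation. -/
lemma Gm_core (m s c t : ℝ) (hm : 0 < m) (hs : 0 < s) (hc : 0 < c)
    (hpyth : s^2 + c^2 = 1) (htc : t*c = s) (E : ℂ)
    (hEre : E.re = 2*m*s*c) (hEim : E.im = m*(2*s^2-1)) :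
    (1 + Complex.I * E) ≠ 0 ∧ 0 < ((E + Complex.I)/(1 + Complex.I * E)).re ∧
    t * (((E + Complex.I)/(1 + Complex.I * E)).im)^2 =
      (((E + Complex.I)/(1 + Complex.I * E)).re * t + 1) *
      (t - ((E + Complex.I)/(1 + Complex.I * E)).re) := by
  have hdre : (1 + Complex.I * E).re = 1 - m*(2*s^2-1) := by
    rw [Complex.add_re, Complex.one_re, Complex.mul_re, Complex.I_re, Complex.I_im, hEim]
    ring
  have hdim : (1 + Complex.I * E).im = 2*m*s*c := by
    rw [Complex.add_im, Complex.one_im, Complex.mul_im, Complex.I_re, Complex.I_im, hEre]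
    ring
  have hnre : (E + Complex.I).re = 2*m*s*c := by
    rw [Complex.add_re, Complex.I_re, hEre]; ring
  have hnim : (E + Complex.I).im = m*(2*s^2-1) + 1 := by
    rw [Complex.add_im, Complex.I_im, hEim]
  have hNdval : Complex.normSq (1 + Complex.I * E)
      = (1-(m*(2*s^2-1)))^2 + (2*m*s*c)^2 := by
    rw [Complex.normSq_apply, hdre, hdim]; ring
  have hNdpos : 0 < (1-(m*(2*s^2-1)))^2 + (2*m*s*c)^2 := by
    have h4 : (1-(m*(2*s^2-1)))^2 + (2*m*s*c)^2 = (1-m)^2 + 4*m*c^2 := by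
      linear_combination (4*m^2*s^2 - 4*m)*hpyth
    rw [h4]
    have h5 : 0 < 4*m*c^2 := by positivity
    nlinarith [sq_nonneg (1-m)]
  have hNdne : ((1-(m*(2*s^2-1)))^2 + (2*m*s*c)^2) ≠ 0 := hNdpos.ne'
  have hden_ne : (1 + Complex.I * E) ≠ 0 := by
    rw [← Complex.normSq_pos, hNdval]; exact hNdpos
  have hGre : ((E + Complex.I)/(1 + Complex.I * E)).re
      = 2*(2*m*s*c)/((1-(m*(2*s^2-1)))^2 + (2*m*s*c)^2) := by
    rw [Complex.div_re, hnre, hnim, hdre, hdim, hNdval]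
    field_simp
    ring
  have hGim : ((E + Complex.I)/(1 + Complex.I * E)).im
      = (1-(2*m*s*c)^2-(m*(2*s^2-1))^2)/((1-(m*(2*s^2-1)))^2 + (2*m*s*c)^2) := by
    rw [Complex.div_im, hnre, hnim, hdre, hdim, hNdval]
    field_simp
    ring
  refine ⟨hden_ne, ?_, ?_⟩
  · rw [hGre]
    apply div_pos _ hNdpos
    positivity
  · have key := key_poly m s c t hpyth htc
    rw [hGre, hGim]
    exact div_identity (1-(2*m*s*c)^2-(m*(2*s^2-1))^2)
      ((1-(m*(2*s^2-1)))^2 + (2*m*s*c)^2) t (2*m*s*c) hNdne key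

lemma Gm_props (w : ℂ) (hw : |w.re| < 1) :
    (1 + Complex.I * Complex.exp (((Real.pi/2 : ℝ) : ℂ) * Complex.I * w)) ≠ 0 ∧
    0 < (Gm w).re ∧
    (0 < Real.tan (Real.pi*(w.re+1)/4) ∧
    Real.tan (Real.pi*(w.re+1)/4) * (Gm w).im^2 =
      ((Gm w).re * Real.tan (Real.pi*(w.re+1)/4) + 1) *
      (Real.tan (Real.pi*(w.re+1)/4) - (Gm w).re)) := by
  obtain ⟨hx1, hx2⟩ := abs_lt.1 hw
  have hpi := Real.pi_pos
  have hφ0 : 0 < Real.pi*(w.re+1)/4 := by nlinarith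
  have hφ2 : Real.pi*(w.re+1)/4 < Real.pi/2 := by nlinarith
  have hcφ : 0 < Real.cos (Real.pi*(w.re+1)/4) :=
    Real.cos_pos_of_mem_Ioo ⟨by linarith, hφ2⟩
  have hsφ : 0 < Real.sin (Real.pi*(w.re+1)/4) :=
    Real.sin_pos_of_pos_of_lt_pi hφ0 (by linarith)
  have htφ : 0 < Real.tan (Real.pi*(w.re+1)/4) :=
    Real.tan_pos_of_pos_of_lt_pi_div_two hφ0 hφ2
  have hpyth : (Real.sin (Real.pi*(w.re+1)/4))^2 + (Real.cos (Real.pi*(w.re+1)/4))^2 = 1 :=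
    Real.sin_sq_add_cos_sq _
  have htc : Real.tan (Real.pi*(w.re+1)/4) * Real.cos (Real.pi*(w.re+1)/4)
      = Real.sin (Real.pi*(w.re+1)/4) := by
    rw [Real.tan_eq_sin_div_cos]; field_simp
  have harg : Real.pi/2*w.re = 2*(Real.pi*(w.re+1)/4) - Real.pi/2 := by ring
  have hsin2 : Real.sin (Real.pi/2*w.re) = 2*(Real.sin (Real.pi*(w.re+1)/4))^2 - 1 := by
    rw [harg, Real.sin_sub, Real.cos_pi_div_two, Real.sin_pi_div_two, Real.cos_two_mul]
    linear_combination (-2 : ℝ)*hpyth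
  have hcos2 : Real.cos (Real.pi/2*w.re)
      = 2*(Real.sin (Real.pi*(w.re+1)/4))*(Real.cos (Real.pi*(w.re+1)/4)) := by
    rw [harg, Real.cos_sub, Real.cos_pi_div_two, Real.sin_pi_div_two, Real.sin_two_mul]
    ring
  have hm : 0 < Real.exp (-(Real.pi/2*w.im)) := Real.exp_pos _
  have hzre : (((Real.pi/2 : ℝ) : ℂ) * Complex.I * w).re = -(Real.pi/2*w.im) := by
    simp [Complex.mul_re, Complex.mul_im]
  have hzim : (((Real.pi/2 : ℝ) : ℂ) * Complex.I * w).im = Real.pi/2*w.re := by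
    simp [Complex.mul_re, Complex.mul_im]
  have hEre : (Complex.exp (((Real.pi/2 : ℝ) : ℂ) * Complex.I * w)).re
      = 2*(Real.exp (-(Real.pi/2*w.im)))*(Real.sin (Real.pi*(w.re+1)/4))*(Real.cos (Real.pi*(w.re+1)/4)) := by
    rw [Complex.exp_re, hzre, hzim, hcos2]; ring
  have hEim : (Complex.exp (((Real.pi/2 : ℝ) : ℂ) * Complex.I * w)).im
      = (Real.exp (-(Real.pi/2*w.im)))*(2*(Real.sin (Real.pi*(w.re+1)/4))^2-1) := by
    rw [Complex.exp_im, hzre, hzim, hsin2]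
  have core := Gm_core (Real.exp (-(Real.pi/2*w.im))) (Real.sin (Real.pi*(w.re+1)/4))
    (Real.cos (Real.pi*(w.re+1)/4)) (Real.tan (Real.pi*(w.re+1)/4)) hm hsφ hcφ hpyth htc
    (Complex.exp (((Real.pi/2 : ℝ) : ℂ) * Complex.I * w)) hEre hEim
  have hGmw : Gm w = (Complex.exp (((Real.pi/2 : ℝ) : ℂ) * Complex.I * w) + Complex.I) /
      (1 + Complex.I * Complex.exp (((Real.pi/2 : ℝ) : ℂ) * Complex.I * w)) := rfl
  rw [hGmw]
  exact ⟨core.1, core.2.1, htφ, core.2.2⟩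

/-- Core real inequality: the hyperbolic "Schwarz–Pick" constraint forces the
tangent-coordinates to satisfy `t(1-r) ≤ t₀(1+r)`. -/
lemma core_ineq (u u0 v v0 t t0 r : ℝ) (hu : 0 < u) (hu0 : 0 < u0)
    (ht : 0 < t) (ht0 : 0 < t0) (hr0 : 0 ≤ r)
    (hv : t*v^2 = (u*t+1)*(t-u)) (hv0 : t0*v0^2 = (u0*t0+1)*(t0-u0))
    (hC : (u-u0)^2 + (v-v0)^2 ≤ r^2*((u+u0)^2 + (v-v0)^2)) :
    t*(1-r) ≤ t0*(1+r) := by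
  have htu : 0 ≤ t - u := by
    have h1 : 0 ≤ t*v^2 := mul_nonneg ht.le (sq_nonneg v)
    rw [hv] at h1
    have h2 : 0 < u*t+1 := by nlinarith [mul_pos hu ht]
    exact nonneg_of_mul_nonneg_right (by linarith [h1]) h2
  have htu0 : 0 ≤ t0 - u0 := by
    have h1 : 0 ≤ t0*v0^2 := mul_nonneg ht0.le (sq_nonneg v0)
    rw [hv0] at h1
    have h2 : 0 < u0*t0+1 := by nlinarith [mul_pos hu0 ht0]
    exact nonneg_of_mul_nonneg_right (by linarith [h1]) h2
  set A := (u*t+1)*(t-u) with hA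
  set B := (u0*t0+1)*(t0-u0) with hB
  set S1 := (u*t0-u0*t)*(u*t-u0*t0) + t0*A + t*B with hS1def
  have hS1 : 0 ≤ S1 := by
    have e : S1 = (t-u)*t0 + (t0-u0)*t + t^2*((t0-u0)*u) + t0^2*((t-u)*u0) := by
      rw [hS1def, hA, hB]; ring
    rw [e]
    have h1 : 0 ≤ (t-u)*t0 := mul_nonneg htu ht0.le
    have h2 : 0 ≤ (t0-u0)*t := mul_nonneg htu0 ht.le
    have h3 : 0 ≤ t^2*((t0-u0)*u) := mul_nonneg (sq_nonneg t) (mul_nonneg htu0 hu.le)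
    have h4 : 0 ≤ t0^2*((t-u)*u0) := mul_nonneg (sq_nonneg t0) (mul_nonneg htu hu0.le)
    linarith
  have hsq : (2*t*t0*v*v0)^2 ≤ S1^2 := by
    have he : (2*t*t0*v*v0)^2 = 4*t*t0*A*B := by
      have : (2*t*t0*v*v0)^2 = 4*(t*v^2)*(t0*v0^2)*(t*t0) := by ring
      rw [this, hv, hv0]; ring
    have hq : S1^2 - 4*t*t0*A*B
        = (u0*t*(1+t0^2) - u*t0*(1+t^2) + u*u0*(t^2-t0^2))^2 := by
      rw [hS1def, hA, hB]; ring
    nlinarith [sq_nonneg (u0*t*(1+t0^2) - u*t0*(1+t^2) + u*u0*(t^2-t0^2))]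
  have hle : 2*t*t0*v*v0 ≤ S1 := by nlinarith [hsq, hS1]
  have hP : 0 ≤ (u*t0-u0*t)*(u*t-u0*t0) + t*t0*(v-v0)^2 := by
    have heq : (u*t0-u0*t)*(u*t-u0*t0) + t*t0*(v-v0)^2 = S1 - 2*t*t0*v*v0 := by
      rw [hS1def, hA, hB]; linear_combination t0*hv + t*hv0
    rw [heq]; linarith
  have hW : 0 < (u+u0)^2 + (v-v0)^2 :=
    add_pos_of_pos_of_nonneg (pow_pos (by linarith) 2) (sq_nonneg _)
  have hfin : (t-t0)^2*((u+u0)^2+(v-v0)^2) ≤ (t+t0)^2*((u-u0)^2+(v-v0)^2) := by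
    nlinarith [hP]
  have hCC : (t+t0)^2*((u-u0)^2+(v-v0)^2) ≤ (t+t0)^2*(r^2*((u+u0)^2+(v-v0)^2)) :=
    mul_le_mul_of_nonneg_left hC (sq_nonneg _)
  have hkey : (t-t0)^2 ≤ r^2*(t+t0)^2 := by
    have := hfin.trans hCC
    have h2 : (t-t0)^2*((u+u0)^2+(v-v0)^2) ≤ (r^2*(t+t0)^2)*((u+u0)^2+(v-v0)^2) := by
      nlinarith []
    exact le_of_mul_le_mul_right h2 hW
  by_contra hcon
  push_neg at hcon
  have hrt : 0 ≤ r*(t+t0) := mul_nonneg hr0 (by linarith)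
  have h1 : 0 < t - t0 - r*(t+t0) := by nlinarith
  have h2 : 0 < t - t0 + r*(t+t0) := by nlinarith
  nlinarith [mul_pos h1 h2, hkey]

lemma norm_conj_helper (ζ ξ : ℂ) :
    ‖ζ + (starRingEnd ℂ) ξ‖^2 - ‖ζ - ξ‖^2 = 4*(ζ.re*ξ.re) := by
  rw [Complex.sq_norm, Complex.sq_norm,
    Complex.normSq_apply, Complex.normSq_apply]
  simp only [Complex.add_re, Complex.add_im, Complex.sub_re, Complex.sub_im,
    Complex.conj_re, Complex.conj_im]
  ring

/-- Schwarz-type lemma for holomorphic functions on the disk whose real part is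
bounded by `1` in absolute value. -/
lemma strip_schwarz (cst : ℝ) (hcst1 : cst < 1) (F : ℂ → ℂ)
    (hF : DifferentiableOn ℂ F (Metric.ball 0 1))
    (hs : ∀ w ∈ Metric.ball (0:ℂ) 1, |(F w).re| < 1)
    (hF0 : (F 0).re ≤ cst) (z : ℂ) (hz : z ∈ Metric.ball (0:ℂ) 1) :
    (F z).re ≤ (4 / Real.pi) *
      Real.arctan (Real.tan (Real.pi * (cst + 1) / 4) * (1 + ‖z‖) / (1 - ‖z‖)) - 1 := by
  have hpi := Real.pi_pos
  have h0mem : (0:ℂ) ∈ Metric.ball (0:ℂ) 1 := Metric.mem_ball_self one_pos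
  have hz1 : ‖z‖ < 1 := mem_ball_zero_iff.mp hz
  have hz0 : (0:ℝ) ≤ ‖z‖ := norm_nonneg z
  -- denominators are nonzero on the ball
  have hden : ∀ w ∈ Metric.ball (0:ℂ) 1,
      (1 + Complex.I * Complex.exp (((Real.pi/2 : ℝ) : ℂ) * Complex.I * (F w))) ≠ 0 :=
    fun w hw => (Gm_props (F w) (hs w hw)).1
  -- G := Gm ∘ F is holomorphic on the ball
  have hexp : DifferentiableOn ℂ
      (fun w => Complex.exp (((Real.pi/2 : ℝ) : ℂ) * Complex.I * (F w)))
      (Metric.ball 0 1) := (hF.const_mul _).cexp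
  have hGd : DifferentiableOn ℂ (fun w => Gm (F w)) (Metric.ball 0 1) := by
    exact (hexp.add_const Complex.I).div ((hexp.const_mul Complex.I).const_add 1) hden
  obtain ⟨-, hu_pos, ht_pos, hrel⟩ := Gm_props (F z) (hs z hz)
  obtain ⟨-, hu0_pos, ht0_pos, hrel0⟩ := Gm_props (F 0) (hs 0 h0mem)
  -- Möbius transport to 0 and the Schwarz lemma
  have hBne : ∀ w ∈ Metric.ball (0:ℂ) 1,
      Gm (F w) + (starRingEnd ℂ) (Gm (F 0)) ≠ 0 := by
    intro w hw hcon
    have h1 := (Gm_props (F w) (hs w hw)).2.1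
    have h2 : (Gm (F w) + (starRingEnd ℂ) (Gm (F 0))).re = 0 := by rw [hcon]; simp
    rw [Complex.add_re, Complex.conj_re] at h2
    linarith
  have hmapsφ : Set.MapsTo
      (fun w => (Gm (F w) - Gm (F 0))/(Gm (F w) + (starRingEnd ℂ) (Gm (F 0))))
      (Metric.ball 0 1) (Metric.ball 0 1) := by
    intro w hw
    have h1 := (Gm_props (F w) (hs w hw)).2.1
    have hsq := norm_conj_helper (Gm (F w)) (Gm (F 0))
    have hBpos : 0 < ‖Gm (F w) + (starRingEnd ℂ) (Gm (F 0))‖ :=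
      norm_pos_iff.mpr (hBne w hw)
    rw [mem_ball_zero_iff, norm_div, div_lt_one hBpos]
    nlinarith [norm_nonneg (Gm (F w) - Gm (F 0)), mul_pos h1 hu0_pos]
  have hφ0 : (fun w => (Gm (F w) - Gm (F 0))/(Gm (F w) + (starRingEnd ℂ) (Gm (F 0)))) 0
      = 0 := by simp
  have hφd : DifferentiableOn ℂ
      (fun w => (Gm (F w) - Gm (F 0))/(Gm (F w) + (starRingEnd ℂ) (Gm (F 0))))
      (Metric.ball 0 1) :=
    (hGd.sub_const _).div (hGd.add_const _) hBne
  have hSch := Complex.norm_le_norm_of_mapsTo_ball hφd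
    (hmapsφ.mono_right Metric.ball_subset_closedBall) hφ0 hz1
  have hBpos : 0 < ‖Gm (F z) + (starRingEnd ℂ) (Gm (F 0))‖ :=
    norm_pos_iff.mpr (hBne z hz)
  rw [norm_div, div_le_iff₀ hBpos] at hSch
  have habs : ‖Gm (F z) - Gm (F 0)‖
      ≤ ‖z‖ * ‖Gm (F z) + (starRingEnd ℂ) (Gm (F 0))‖ := by
    exact hSch
  -- square it and pass to coordinates
  have h1 : (‖Gm (F z) - Gm (F 0)‖)^2
      ≤ (‖z‖ * ‖Gm (F z) + (starRingEnd ℂ) (Gm (F 0))‖)^2 :=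
    pow_le_pow_left₀ (norm_nonneg _) habs 2
  rw [mul_pow, Complex.sq_norm (Gm (F z) - Gm (F 0)),
    Complex.sq_norm (Gm (F z) + (starRingEnd ℂ) (Gm (F 0))), Complex.normSq_apply, Complex.normSq_apply] at h1
  simp only [Complex.sub_re, Complex.sub_im, Complex.add_re, Complex.add_im,
    Complex.conj_re, Complex.conj_im] at h1
  have hC : ((Gm (F z)).re - (Gm (F 0)).re)^2 + ((Gm (F z)).im - (Gm (F 0)).im)^2
      ≤ ‖z‖^2*(((Gm (F z)).re + (Gm (F 0)).re)^2 + ((Gm (F z)).im - (Gm (F 0)).im)^2) := by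
    nlinarith [h1]
  -- the core inequality
  have hcore := core_ineq (Gm (F z)).re (Gm (F 0)).re (Gm (F z)).im (Gm (F 0)).im
    (Real.tan (Real.pi*((F z).re+1)/4)) (Real.tan (Real.pi*((F 0).re+1)/4)) ‖z‖
    hu_pos hu0_pos ht_pos ht0_pos hz0 hrel hrel0 hC
  -- monotonicity of tan
  obtain ⟨hxz1, hxz2⟩ := abs_lt.1 (hs z hz)
  obtain ⟨hx01, hx02⟩ := abs_lt.1 (hs 0 h0mem)
  have ht0S : Real.tan (Real.pi*((F 0).re+1)/4) ≤ Real.tan (Real.pi*(cst+1)/4) := by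
    rcases eq_or_lt_of_le (show Real.pi*((F 0).re+1)/4 ≤ Real.pi*(cst+1)/4 by nlinarith) with he|hl
    · rw [he]
    · exact (Real.tan_lt_tan_of_lt_of_lt_pi_div_two (by nlinarith) (by nlinarith) hl).le
  have h1r : 0 < 1 - ‖z‖ := by linarith
  have htK : Real.tan (Real.pi*((F z).re+1)/4)
      ≤ Real.tan (Real.pi*(cst+1)/4) * (1+‖z‖)/(1-‖z‖) := by
    rw [le_div_iff₀ h1r]
    nlinarith [hcore, ht0S, ht0_pos]
  have harct := Real.arctan_strictMono.monotone htK
  rw [Real.arctan_tan (by nlinarith) (by nlinarith)] at harct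
  have h2 : ((F z).re + 1) * Real.pi ≤ 4 *
      Real.arctan (Real.tan (Real.pi*(cst+1)/4) * (1+‖z‖)/(1-‖z‖)) := by nlinarith [harct]
  have h3 : (F z).re + 1 ≤ (4/Real.pi) *
      Real.arctan (Real.tan (Real.pi*(cst+1)/4) * (1+‖z‖)/(1-‖z‖)) := by
    rw [div_mul_eq_mul_div, le_div_iff₀ hpi]
    linarith
  linarith

/-- Schwarz lemma for complex-valued harmonic self-maps of the disk: if
`f = g + conj h` (with `g, h` holomorphic) maps `𝔻` into `𝔻` and `f 0 = a`, then
`|f z| ≤ (4/π)·arctan (s(|a|)·(1+|z|)/(1-|z|)) - 1` where `s t = tan (π(t+1)/4)`. -/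
theorem harmonic_schwarz_complex (a : ℂ) (f g h : ℂ → ℂ)
    (hg : DifferentiableOn ℂ g (Metric.ball 0 1))
    (hh : DifferentiableOn ℂ h (Metric.ball 0 1))
    (hf : ∀ z ∈ Metric.ball (0 : ℂ) 1, f z = g z + (starRingEnd ℂ) (h z))
    (hmaps : Set.MapsTo f (Metric.ball 0 1) (Metric.ball 0 1))
    (h0 : f 0 = a) :
    ∀ z ∈ Metric.ball (0 : ℂ) 1,
      ‖f z‖ ≤ (4 / Real.pi) *
          Real.arctan (Real.tan (Real.pi * (‖a‖ + 1) / 4) * (1 + ‖z‖) / (1 - ‖z‖)) - 1 := by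
  intro z hz
  have h0mem : (0:ℂ) ∈ Metric.ball (0:ℂ) 1 := Metric.mem_ball_self one_pos
  have ha1 : ‖a‖ < 1 := by
    rw [← h0]; exact mem_ball_zero_iff.mp (hmaps h0mem)
  obtain ⟨lam, hlam1, hlam2⟩ : ∃ lam : ℂ, ‖lam‖ = 1 ∧ (lam * f z).re = ‖f z‖ := by
    by_cases hfz : f z = 0
    · exact ⟨1, by simp, by simp [hfz]⟩
    · refine ⟨(‖f z‖ : ℂ)/f z, ?_, ?_⟩
      · rw [norm_div, Complex.norm_real, Real.norm_eq_abs, abs_norm, div_self (norm_ne_zero_iff.mpr hfz)]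
      · rw [div_mul_cancel₀ _ hfz, Complex.ofReal_re]
  set F : ℂ → ℂ := fun w => lam * g w + (starRingEnd ℂ) lam * h w with hFdef
  have hFd : DifferentiableOn ℂ F (Metric.ball 0 1) :=
    ((differentiableOn_const lam).mul hg).add ((differentiableOn_const _).mul hh)
  have hFre : ∀ w ∈ Metric.ball (0:ℂ) 1, (F w).re = (lam * f w).re := by
    intro w hw
    rw [hf w hw, hFdef]
    simp only [Complex.add_re, Complex.mul_re, Complex.add_im, Complex.mul_im,
      Complex.conj_re, Complex.conj_im]
    ring
  have hnormlam : ∀ w : ℂ, ‖lam * w‖ = ‖w‖ := by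
    intro w; rw [norm_mul, hlam1, one_mul]
  have hstrip : ∀ w ∈ Metric.ball (0:ℂ) 1, |(F w).re| < 1 := by
    intro w hw
    rw [hFre w hw]
    calc |(lam * f w).re| ≤ ‖lam * f w‖ := by
            exact Complex.abs_re_le_norm _
      _ = ‖f w‖ := hnormlam _
      _ < 1 := mem_ball_zero_iff.mp (hmaps hw)
  have hF0c : (F 0).re ≤ ‖a‖ := by
    rw [hFre 0 h0mem]
    calc (lam * f 0).re ≤ ‖lam * f 0‖ := by
          exact Complex.re_le_norm _
      _ = ‖f 0‖ := hnormlam _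
      _ = ‖a‖ := by rw [h0]
  have hmain := strip_schwarz ‖a‖ ha1 F hFd hstrip hF0c z hz
  rw [hFre z hz, hlam2] at hmain
  exact hmain
end

section
/- Let f : 𝔻 → 𝔻 be harmonic with s = s(f(0)) = tan(π(|f(0)|+1)/4). If f extends continuously to a point b on the unit circle with |f(b)| = 1 and f is real-differentiable at b, then Λ_f(b) ≥ 2/(sπ), where Λ_f(b) is the operator norm of the differential of f at b. -/
open Real Set Metric Complex
open Topology Filter

set_option maxHeartbeats 1000000

set_option maxHeartbeats 1000000

lemma aux_quad {u w r : ℝ} (hu : 0 ≤ u) (hw : 0 ≤ w) (hr0 : 0 ≤ r)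
    (H : (1 - r^2)^2 * (u + w)^2 ≤ 4 * (1 + r^2)^2 * (u * w)) :
    (1 - r)^2 * w ≤ (1 + r)^2 * u := by
  by_contra hG
  push_neg at hG
  have hprod : 0 ≤ ((1+r)^2*w - (1-r)^2*u) * ((1+r)^2*u - (1-r)^2*w) := by nlinarith [H]
  rcases lt_or_ge 0 ((1+r)^2*w - (1-r)^2*u) with hp | hp
  · have h2 : 0 < (1-r)^2*w - (1+r)^2*u := by linarith
    nlinarith [mul_pos hp h2]
  · nlinarith [mul_nonneg hr0 hu, mul_nonneg hr0 hw]

lemma sqrt_step {a b : ℝ} (ha : 0 ≤ a) (hb : 0 ≤ b) (h : a^2 ≤ b^2) : a ≤ b := by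
  nlinarith

lemma key_real {A x y A0 x0 y0 r : ℝ} (hA2 : A^2 = x^2 + y^2) (hA02 : A0^2 = x0^2 + y0^2)
    (hA : 0 ≤ A) (hA0 : 0 ≤ A0) (hy : 0 < y) (hy0 : 0 < y0) (hr0 : 0 ≤ r) (hr1 : r < 1)
    (h2 : (x-x0)^2 + (y-y0)^2 ≤ r^2 * ((x-x0)^2 + (y+y0)^2)) :
    y0 / (A0 + x0) * ((1 - r) / (1 + r)) ≤ y / (A + x) := by
  have hAx : 0 < A + x := by nlinarith
  have hAx' : 0 < A - x := by nlinarith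
  have hA0x : 0 < A0 + x0 := by nlinarith
  have hA0x' : 0 < A0 - x0 := by nlinarith
  set u := (A - x) * (A0 + x0) with hud
  set w := (A + x) * (A0 - x0) with hwd
  have hu : 0 ≤ u := le_of_lt (mul_pos hAx' hA0x)
  have hw : 0 ≤ w := le_of_lt (mul_pos hAx hA0x')
  have h1r : (0:ℝ) ≤ 1 - r^2 := by nlinarith
  have key0 : (1 - r^2) * ((x-x0)^2 + y^2 + y0^2) ≤ 2*(1+r^2)*(y*y0) := by nlinarith [h2]
  have hmid : u + w ≤ (x-x0)^2 + y^2 + y0^2 := by nlinarith [sq_nonneg (A - A0)]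
  have H2 : (1 - r^2) * (u + w) ≤ 2*(1+r^2)*(y*y0) :=
    le_trans (mul_le_mul_of_nonneg_left hmid h1r) key0
  have hy2 : y^2 = (A - x) * (A + x) := by linear_combination -hA2
  have hy02 : y0^2 = (A0 - x0) * (A0 + x0) := by linear_combination -hA02
  have huw : u * w = (y*y0) * (y*y0) := by
    rw [hud, hwd]; linear_combination y0^2 * hA2 + (A^2 - x^2) * hA02
  have hL : 0 ≤ (1 - r^2) * (u + w) := mul_nonneg h1r (by linarith)
  have H3 : (1 - r^2)^2 * (u + w)^2 ≤ 4 * (1 + r^2)^2 * (u * w) := by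
    calc (1 - r^2)^2 * (u + w)^2 = ((1-r^2)*(u+w)) * ((1-r^2)*(u+w)) := by ring
      _ ≤ (2*(1+r^2)*(y*y0)) * (2*(1+r^2)*(y*y0)) := mul_self_le_mul_self hL H2
      _ = 4 * (1 + r^2)^2 * ((y*y0)*(y*y0)) := by ring
      _ = 4 * (1 + r^2)^2 * (u * w) := by rw [huw]
  have claim : (1 - r)^2 * w ≤ (1 + r)^2 * u := aux_quad hu hw hr0 H3
  rw [div_mul_div_comm, div_le_div_iff₀ (mul_pos hA0x (by linarith)) hAx]
  apply sqrt_step (mul_nonneg (mul_nonneg hy0.le (by linarith)) hAx.le)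
    (mul_nonneg hy.le (mul_nonneg hA0x.le (by linarith)))
  calc (y0 * (1 - r) * (A + x))^2 = ((A + x) * (A0 + x0)) * ((1-r)^2 * w) := by
        rw [hwd]; linear_combination (-(1-r)^2*(A+x)^2) * hA02
    _ ≤ ((A + x) * (A0 + x0)) * ((1+r)^2 * u) :=
        mul_le_mul_of_nonneg_left claim (mul_pos hAx hA0x).le
    _ = (y * ((A0 + x0) * (1 + r)))^2 := by
        rw [hud]; linear_combination ((1+r)^2*(A0+x0)^2) * hA2

lemma key_ineq {ω ω0 : ℂ} (hω : 0 < ω.im) (hω0 : 0 < ω0.im) {r : ℝ} (hr0 : 0 ≤ r) (hr1 : r < 1)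
    (h : ‖(ω - ω0)‖ ≤ r * ‖(ω - (starRingEnd ℂ) ω0)‖) :
    ω0.im / (‖ω0‖ + ω0.re) * ((1 - r) / (1 + r)) ≤ ω.im / (‖ω‖ + ω.re) := by
  have hA2 : (‖ω‖)^2 = ω.re^2 + ω.im^2 := by
    rw [Complex.sq_norm, Complex.normSq_apply]; ring
  have hA02 : (‖ω0‖)^2 = ω0.re^2 + ω0.im^2 := by
    rw [Complex.sq_norm, Complex.normSq_apply]; ring
  have e1 : ‖(ω - ω0)‖ * ‖(ω - ω0)‖
      = (ω.re - ω0.re)^2 + (ω.im - ω0.im)^2 := by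
    rw [← sq, Complex.sq_norm, Complex.normSq_apply]
    simp only [Complex.sub_re, Complex.sub_im]; ring
  have e2 : ‖(ω - (starRingEnd ℂ) ω0)‖ * ‖(ω - (starRingEnd ℂ) ω0)‖
      = (ω.re - ω0.re)^2 + (ω.im + ω0.im)^2 := by
    rw [← sq, Complex.sq_norm, Complex.normSq_apply]
    simp only [Complex.sub_re, Complex.sub_im, Complex.conj_re, Complex.conj_im]; ring
  have hsq := mul_self_le_mul_self (norm_nonneg _) h
  have h2 : (ω.re - ω0.re)^2 + (ω.im - ω0.im)^2
      ≤ r^2 * ((ω.re - ω0.re)^2 + (ω.im + ω0.im)^2) := by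
    calc (ω.re - ω0.re)^2 + (ω.im - ω0.im)^2 = _ := e1.symm
      _ ≤ (r * ‖(ω - (starRingEnd ℂ) ω0)‖) * (r * ‖(ω - (starRingEnd ℂ) ω0)‖) := hsq
      _ = r^2 * (‖(ω - (starRingEnd ℂ) ω0)‖ * ‖(ω - (starRingEnd ℂ) ω0)‖) := by ring
      _ = _ := by rw [e2]
  exact key_real hA2 hA02 (norm_nonneg _) (norm_nonneg _) hω hω0 hr0 hr1 h2

lemma tan_half_aux {θ : ℝ} (h0 : 0 < θ) (h1 : θ < π) :
    Real.sin θ / (1 + Real.cos θ) = Real.tan (θ/2) := by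
  have hc : 0 < Real.cos (θ/2) :=
    Real.cos_pos_of_mem_Ioo ⟨by linarith [Real.pi_pos], by linarith⟩
  have hs : Real.sin θ = 2 * Real.sin (θ/2) * Real.cos (θ/2) := by
    rw [show θ = 2*(θ/2) by ring, Real.sin_two_mul]; ring_nf
  have hcos : 1 + Real.cos θ = 2 * Real.cos (θ/2)^2 := by
    rw [show θ = 2*(θ/2) by ring, Real.cos_two_mul]; ring_nf
  rw [Real.tan_eq_sin_div_cos, hs, hcos]
  field_simp

lemma t_exp {w : ℂ} (h0 : 0 < w.re) (h2 : w.re < 2) :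
    0 < (Complex.exp ((π/2 : ℝ) * I * w)).im ∧
    (Complex.exp ((π/2 : ℝ) * I * w)).im /
      (‖(Complex.exp ((π/2 : ℝ) * I * w))‖ + (Complex.exp ((π/2 : ℝ) * I * w)).re)
      = Real.tan (π * w.re / 4) := by
  set z := ((π/2 : ℝ) : ℂ) * I * w with hz
  have hre : z.re = -(π/2 * w.im) := by
    simp [hz, Complex.mul_re, Complex.mul_im]
  have him : z.im = π/2 * w.re := by
    simp [hz, Complex.mul_re, Complex.mul_im]
  set θ := π/2 * w.re with hθ
  have hθ0 : 0 < θ := by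
    have := Real.pi_pos; positivity
  have hθπ : θ < π := by
    have := Real.pi_pos; rw [hθ]; nlinarith
  have hsin : 0 < Real.sin θ := Real.sin_pos_of_pos_of_lt_pi hθ0 hθπ
  have hρ : 0 < Real.exp z.re := Real.exp_pos _
  have hexpim : (Complex.exp z).im = Real.exp z.re * Real.sin θ := by
    rw [Complex.exp_im, him]
  have hexpre : (Complex.exp z).re = Real.exp z.re * Real.cos θ := by
    rw [Complex.exp_re, him]
  have habs : ‖(Complex.exp z)‖ = Real.exp z.re := Complex.norm_exp z
  have hcoshalf : 0 < Real.cos (θ/2) :=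
    Real.cos_pos_of_mem_Ioo ⟨by linarith [Real.pi_pos], by linarith⟩
  have h1c : 0 < 1 + Real.cos θ := by
    have : 1 + Real.cos θ = 2 * Real.cos (θ/2)^2 := by
      rw [show θ = 2*(θ/2) by ring, Real.cos_two_mul]; ring_nf
    rw [this]; positivity
  constructor
  · rw [hexpim]; positivity
  · rw [hexpim, hexpre, habs]
    have : Real.exp z.re + Real.exp z.re * Real.cos θ = Real.exp z.re * (1 + Real.cos θ) := by ring
    rw [this]
    rw [show Real.exp z.re * Real.sin θ / (Real.exp z.re * (1 + Real.cos θ))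
        = Real.sin θ / (1 + Real.cos θ) by field_simp]
    rw [tan_half_aux hθ0 hθπ]
    congr 1
    rw [hθ]; ring

/-- Boundary Schwarz lemma for harmonic self-maps of the disk: if `f = g + conj h`
maps `𝔻` into `𝔻`, extends continuously to a boundary point `b` with `|f b| = 1`, and
is real-differentiable at `b` (within the closed disk, with differential `df`), then
`Λ_f(b) = ‖df‖ ≥ 2/(sπ)` where `s = tan (π(|f 0|+1)/4)`. -/
theorem boundary_schwarz_harmonic (f g h : ℂ → ℂ) (b : ℂ)
    (hb : b ∈ Metric.sphere (0 : ℂ) 1)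
    (hg : DifferentiableOn ℂ g (Metric.ball 0 1))
    (hh : DifferentiableOn ℂ h (Metric.ball 0 1))
    (hf : ∀ z ∈ Metric.ball (0 : ℂ) 1, f z = g z + (starRingEnd ℂ) (h z))
    (hmaps : Set.MapsTo f (Metric.ball 0 1) (Metric.ball 0 1))
    (hcont : ContinuousWithinAt f (Metric.closedBall 0 1) b)
    (hfb : ‖f b‖ = 1)
    (df : ℂ →L[ℝ] ℂ)
    (hdf : HasFDerivWithinAt f df (Metric.closedBall 0 1) b) :
    ‖df‖ ≥ 2 / (Real.tan (Real.pi * (‖f 0‖ + 1) / 4) * Real.pi) := by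
  have hπ := Real.pi_pos
  have hb1 : ‖b‖ = 1 := by rwa [mem_sphere_zero_iff_norm] at hb
  set c := f b with hcdef
  have hc : ‖c‖ = 1 := hfb
  have h0ball : (0:ℂ) ∈ ball (0:ℂ) 1 := mem_ball_self one_pos
  have ha1 : ‖f 0‖ < 1 := by
    have := hmaps h0ball; rwa [mem_ball_zero_iff] at this
  set F : ℂ → ℂ := fun z => (starRingEnd ℂ) c * g z + c * h z with hFdef
  have hFdiff : DifferentiableOn ℂ F (ball 0 1) :=
    ((hg.const_mul _).add (hh.const_mul _))
  have hReF : ∀ z ∈ ball (0:ℂ) 1, (F z).re = ((starRingEnd ℂ) c * f z).re := by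
    intro z hz
    have : (starRingEnd ℂ) c * f z
        = (starRingEnd ℂ) c * g z + (starRingEnd ℂ) (c * h z) := by
      rw [hf z hz, map_mul]; ring
    rw [this]
    simp [hFdef, Complex.add_re, Complex.conj_re]
  have habsre : ∀ z ∈ ball (0:ℂ) 1, |((starRingEnd ℂ) c * f z).re| < 1 := by
    intro z hz
    have h1 : ‖((starRingEnd ℂ) c * f z)‖ = ‖f z‖ := by
      rw [norm_mul, Complex.norm_conj, hc, one_mul]
    have h2 : ‖f z‖ < 1 := by have := hmaps hz; rwa [mem_ball_zero_iff] at this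
    calc |((starRingEnd ℂ) c * f z).re| ≤ ‖((starRingEnd ℂ) c * f z)‖ :=
          Complex.abs_re_le_norm _
      _ < 1 := by rw [h1]; exact h2
  set W : ℂ → ℂ := fun z => 1 - F z with hWdef
  have hW : ∀ z ∈ ball (0:ℂ) 1, 0 < (W z).re ∧ (W z).re < 2 := by
    intro z hz
    have h1 := habsre z hz
    have h2 := hReF z hz
    have h3 : (W z).re = 1 - (F z).re := by simp [hWdef, Complex.sub_re]
    rw [h3, h2]
    rcases abs_lt.1 h1 with ⟨hl, hr⟩
    constructor <;> linarith
  set Ω : ℂ → ℂ := fun z => Complex.exp ((π/2 : ℝ) * I * W z) with hΩdef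
  have hΩdiff : DifferentiableOn ℂ Ω (ball 0 1) := by
    apply DifferentiableOn.cexp
    exact (differentiableOn_const _).mul ((differentiableOn_const _).sub hFdiff)
  have hΩim : ∀ z ∈ ball (0:ℂ) 1, 0 < (Ω z).im := fun z hz =>
    (t_exp (hW z hz).1 (hW z hz).2).1
  have hΩt : ∀ z ∈ ball (0:ℂ) 1,
      (Ω z).im / (‖(Ω z)‖ + (Ω z).re) = Real.tan (π * (W z).re / 4) := fun z hz =>
    (t_exp (hW z hz).1 (hW z hz).2).2
  have hω0im : 0 < (Ω 0).im := hΩim 0 h0ball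
  set Φ : ℂ → ℂ := fun z => (Ω z - Ω 0) / (Ω z - (starRingEnd ℂ) (Ω 0)) with hΦdef
  have hden : ∀ z ∈ ball (0:ℂ) 1, Ω z - (starRingEnd ℂ) (Ω 0) ≠ 0 := by
    intro z hz hzero
    have him : (Ω z - (starRingEnd ℂ) (Ω 0)).im = (Ω z).im + (Ω 0).im := by
      simp [Complex.sub_im, Complex.conj_im]
    rw [hzero] at him
    simp at him
    have := hΩim z hz
    linarith
  have hΦdiff : DifferentiableOn ℂ Φ (ball 0 1) :=
    (hΩdiff.sub (differentiableOn_const _)).div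
      (hΩdiff.sub (differentiableOn_const _)) hden
  have habslt : ∀ z ∈ ball (0:ℂ) 1,
      ‖(Ω z - Ω 0)‖ < ‖(Ω z - (starRingEnd ℂ) (Ω 0))‖ := by
    intro z hz
    have hsq : (‖(Ω z - Ω 0)‖)^2 < (‖(Ω z - (starRingEnd ℂ) (Ω 0))‖)^2 := by
      rw [Complex.sq_norm, Complex.sq_norm, Complex.normSq_apply, Complex.normSq_apply]
      simp only [Complex.sub_re, Complex.sub_im, Complex.conj_re, Complex.conj_im]
      nlinarith [hΩim z hz, hω0im]
    exact lt_of_pow_lt_pow_left₀ 2 (norm_nonneg _) hsq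
  have hΦmaps : MapsTo Φ (ball 0 1) (ball 0 1) := by
    intro z hz
    rw [mem_ball_zero_iff]
    have hpos : 0 < ‖(Ω z - (starRingEnd ℂ) (Ω 0))‖ :=
      norm_pos_iff.mpr (hden z hz)
    show ‖(Ω z - Ω 0) / (Ω z - (starRingEnd ℂ) (Ω 0))‖ < 1
    rw [norm_div]
    rw [div_lt_one (by exact hpos)]
    exact habslt z hz
  have hΦ0 : Φ 0 = 0 := by simp [hΦdef]
  have hSch : ∀ z ∈ ball (0:ℂ) 1,
      ‖(Ω z - Ω 0)‖ ≤ ‖z‖ * ‖(Ω z - (starRingEnd ℂ) (Ω 0))‖ := by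
    intro z hz
    have h1 : ‖(Φ z)‖ ≤ ‖z‖ :=
      Complex.norm_le_norm_of_mapsTo_ball hΦdiff (hΦmaps.mono_right ball_subset_closedBall) hΦ0 (mem_ball_zero_iff.1 hz)
    have h2 : ‖(Φ z)‖
        = ‖(Ω z - Ω 0)‖ / ‖(Ω z - (starRingEnd ℂ) (Ω 0))‖ := by
      rw [hΦdef]; exact norm_div _ _
    rw [h2, div_le_iff₀ (norm_pos_iff.mpr (hden z hz))] at h1
    linarith [h1]
  set τ0 := Real.tan (π * (W 0).re / 4) with hτ0def
  have hkey : ∀ z ∈ ball (0:ℂ) 1,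
      τ0 * ((1 - ‖z‖)/(1 + ‖z‖)) ≤ Real.tan (π * (W z).re / 4) := by
    intro z hz
    have h1 := key_ineq (hΩim z hz) hω0im (norm_nonneg z) (mem_ball_zero_iff.1 hz)
      (hSch z hz)
    rw [hΩt z hz, hΩt 0 h0ball] at h1
    exact h1
  -- basic facts about (W 0).re
  have hv0 := hW 0 h0ball
  have hτ0pos : 0 < τ0 := Real.tan_pos_of_pos_of_lt_pi_div_two
    (by nlinarith [hv0.1]) (by nlinarith [hv0.2])
  have hv0ge : 1 - ‖f 0‖ ≤ (W 0).re := by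
    have h2 := hReF 0 h0ball
    have h3 : (W 0).re = 1 - (F 0).re := by simp [hWdef, Complex.sub_re]
    have h4 : ((starRingEnd ℂ) c * f 0).re ≤ ‖f 0‖ := by
      calc ((starRingEnd ℂ) c * f 0).re ≤ ‖((starRingEnd ℂ) c * f 0)‖ :=
            Complex.re_le_norm _
        _ = ‖f 0‖ := by rw [norm_mul, Complex.norm_conj, hc, one_mul]
    rw [h3, h2]; linarith
  -- the functions U and M
  set U : ℝ → ℝ := fun r => ((starRingEnd ℂ) c * f ((r : ℂ) * b)).re with hUdef
  set M : ℝ → ℝ := fun r => 1 - (4/π) * Real.arctan (τ0 * ((1-r)/(1+r))) with hMdef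
  have hUM : ∀ r ∈ Ico (0:ℝ) 1, U r ≤ M r := by
    intro r hr
    set z : ℂ := (r : ℂ) * b with hzdef
    have habsz : ‖z‖ = r := by
      rw [hzdef, norm_mul, Complex.norm_real, Real.norm_eq_abs]
      show |r| * ‖b‖ = r
      rw [hb1, _root_.abs_of_nonneg hr.1, mul_one]
    have hz : z ∈ ball (0:ℂ) 1 := by
      rw [mem_ball_zero_iff]; show ‖z‖ < 1; rw [habsz]; exact hr.2
    have h1 := hkey z hz
    rw [habsz] at h1
    have hWz := hW z hz
    have harc : Real.arctan (τ0 * ((1-r)/(1+r))) ≤ π * (W z).re / 4 := by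
      calc Real.arctan (τ0 * ((1-r)/(1+r))) ≤ Real.arctan (Real.tan (π * (W z).re / 4)) :=
            Real.arctan_strictMono.monotone h1
        _ = π * (W z).re / 4 := Real.arctan_tan (by nlinarith [hWz.1]) (by nlinarith [hWz.2])
    have hUz : U r = 1 - (W z).re := by
      have h2 := hReF z hz
      have h3 : (W z).re = 1 - (F z).re := by simp [hWdef, Complex.sub_re]
      rw [hUdef]; rw [h3, h2]; ring
    rw [hUz, hMdef]
    have h5 : (4/π) * Real.arctan (τ0 * ((1-r)/(1+r))) ≤ (4/π) * (π * (W z).re / 4) :=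
      mul_le_mul_of_nonneg_left harc (by positivity)
    have h6 : (4/π) * (π * (W z).re / 4) = (W z).re := by field_simp
    simp only []
    nlinarith [h5, h6]
  have hU1 : U 1 = 1 := by
    have : ((1:ℝ) : ℂ) * b = b := by norm_num
    rw [hUdef]
    simp only [this]
    have : (starRingEnd ℂ) c * c = ((Complex.normSq c : ℝ) : ℂ) := by
      rw [mul_comm, Complex.mul_conj]
    rw [← hcdef, this]
    have hn : Complex.normSq c = 1 := by
      have := Complex.sq_norm c; rw [hc] at this; simpa using this.symm
    rw [hn]; simp
  have hM1 : M 1 = 1 := by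
    rw [hMdef]; norm_num
  -- derivative of U at 1 within Icc 0 1
  have hγ : HasDerivAt (fun r : ℝ => (r : ℂ) * b) b 1 := by
    have h1 : HasDerivAt (fun r : ℝ => (r : ℂ)) 1 1 := by
      exact ((hasDerivAt_id (1:ℝ)).ofReal_comp).congr_deriv (by simp)
    simpa using h1.mul_const b
  have hγmaps : MapsTo (fun r : ℝ => (r : ℂ) * b) (Icc (0:ℝ) 1) (closedBall (0:ℂ) 1) := by
    intro r hr
    rw [mem_closedBall_zero_iff]
    rw [norm_mul, hb1, mul_one]
    show ‖(r:ℂ)‖ ≤ 1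
    rw [Complex.norm_real, Real.norm_eq_abs, _root_.abs_of_nonneg hr.1]
    exact hr.2
  have hdf' : HasFDerivWithinAt f df (closedBall 0 1) (((1:ℝ):ℂ) * b) := by
    have : ((1:ℝ):ℂ) * b = b := by norm_num
    rwa [this]
  have hcomp : HasDerivWithinAt (fun r : ℝ => f ((r : ℂ) * b)) (df b) (Icc (0:ℝ) 1) 1 := by
    have := hdf'.comp_hasDerivWithinAt 1 hγ.hasDerivWithinAt hγmaps
    exact this
  set D : ℝ := ((starRingEnd ℂ) c * df b).re with hDdef
  have hU' : HasDerivWithinAt U D (Icc (0:ℝ) 1) 1 := by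
    have h1 : HasDerivWithinAt (fun r : ℝ => (starRingEnd ℂ) c * f ((r : ℂ) * b))
        ((starRingEnd ℂ) c * df b) (Icc (0:ℝ) 1) 1 := hcomp.const_mul _
    have h2 := Complex.reCLM.hasFDerivAt.comp_hasDerivWithinAt 1 h1
    exact h2
  -- derivative of M at 1
  have hinner : HasDerivAt (fun r : ℝ => (1-r)/(1+r)) (-(1/2)) 1 := by
    have h1 : HasDerivAt (fun r : ℝ => 1 - r) (-1) 1 := by
      simpa using (hasDerivAt_id (1:ℝ)).const_sub 1
    have h2 : HasDerivAt (fun r : ℝ => 1 + r) 1 1 := by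
      simpa using (hasDerivAt_id (1:ℝ)).const_add 1
    have h3 := h1.div h2 (by norm_num)
    exact h3.congr_deriv (by norm_num)
  have hq : HasDerivAt (fun r : ℝ => τ0 * ((1-r)/(1+r))) (τ0 * -(1/2)) 1 :=
    hinner.const_mul τ0
  have hq0 : τ0 * ((1-(1:ℝ))/(1+1)) = 0 := by norm_num
  have harcd : HasDerivAt (fun r : ℝ => Real.arctan (τ0 * ((1-r)/(1+r)))) (-(τ0/2)) 1 := by
    have h1 := (Real.hasDerivAt_arctan (τ0 * ((1-(1:ℝ))/(1+1)))).comp 1 hq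
    rw [hq0] at h1
    exact h1.congr_deriv (by ring)
  have hM' : HasDerivWithinAt M (2*τ0/π) (Icc (0:ℝ) 1) 1 := by
    have h1 : HasDerivAt M (-((4/π) * -(τ0/2))) 1 := by
      rw [hMdef]
      exact ((harcd.const_mul (4/π)).const_sub 1)
    have h2 : -((4/π) * -(τ0/2)) = 2*τ0/π := by field_simp; ring
    rw [h2] at h1
    exact h1.hasDerivWithinAt
  -- compare slopes
  haveI hnb : (𝓝[Icc (0:ℝ) 1 \ {1}] (1:ℝ)).NeBot := by
    apply mem_closure_iff_nhdsWithin_neBot.1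
    rw [Icc_sdiff_right, closure_Ico (show (0:ℝ) ≠ 1 by norm_num)]
    exact ⟨zero_le_one, le_refl 1⟩
  have hsU := hasDerivWithinAt_iff_tendsto_slope.1 hU'
  have hsM := hasDerivWithinAt_iff_tendsto_slope.1 hM'
  have hcmp : ∀ᶠ r in 𝓝[Icc (0:ℝ) 1 \ {1}] (1:ℝ), slope M 1 r ≤ slope U 1 r := by
    filter_upwards [self_mem_nhdsWithin] with r hr
    have hr' : r ∈ Ico (0:ℝ) 1 := ⟨hr.1.1, lt_of_le_of_ne hr.1.2 hr.2⟩
    have hrlt : r < 1 := hr'.2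
    have hUMr := hUM r hr'
    have hne : r - 1 ≠ 0 := by intro hx; apply hr.2; linarith [hx]
    have e : slope U 1 r - slope M 1 r = ((M r) - (U r))/(1 - r) := by
      rw [slope_def_field, slope_def_field, hU1, hM1, div_sub_div_same]
      rw [show U r - 1 - (M r - 1) = -(M r - U r) by ring,
        show r - 1 = -(1 - r) by ring, neg_div_neg_eq]
    have : 0 ≤ slope U 1 r - slope M 1 r := by
      rw [e]; apply div_nonneg (by linarith) (by linarith)
    linarith
  have hfinal : 2*τ0/π ≤ D := le_of_tendsto_of_tendsto hsM hsU hcmp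
  -- conclude
  have hDdf : D ≤ ‖df‖ := by
    calc D ≤ ‖((starRingEnd ℂ) c * df b)‖ := Complex.re_le_norm _
      _ = ‖df b‖ := by rw [norm_mul, Complex.norm_conj, hc, one_mul]
      _ ≤ ‖df‖ * ‖b‖ := df.le_opNorm b
      _ = ‖df‖ := by rw [hb1, mul_one]
  set a := ‖f 0‖ with hadef
  have hTpos : 0 < Real.tan (π * (a + 1) / 4) := by
    apply Real.tan_pos_of_pos_of_lt_pi_div_two
    · have : 0 ≤ a := norm_nonneg _
      nlinarith
    · nlinarith [norm_nonneg (f 0)]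
  have hid : Real.tan (π * (1 - a) / 4) = (Real.tan (π * (a + 1) / 4))⁻¹ := by
    rw [← Real.tan_pi_div_two_sub]
    congr 1
    ring
  have htan : Real.tan (π * (1 - a) / 4) ≤ τ0 := by
    rw [hτ0def]
    apply Real.strictMonoOn_tan.monotoneOn
    · constructor
      · nlinarith
      · nlinarith
    · constructor
      · nlinarith [hv0.1]
      · nlinarith [hv0.2]
    · nlinarith [hv0ge]
  have hchain : 2 / (Real.tan (π * (a + 1) / 4) * π) ≤ ‖df‖ := by
    calc 2 / (Real.tan (π * (a + 1) / 4) * π)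
        = 2 * Real.tan (π * (1 - a) / 4) / π := by
          rw [hid]; field_simp
      _ ≤ 2 * τ0 / π := by gcongr
      _ ≤ D := by linarith [hfinal]
      _ ≤ ‖df‖ := hDdf
  exact hchain
end

section
/- Let f : 𝔻 → ℂ with a boundary point b ∈ 𝕋 such that f extends continuously to b with |f(b)| = 1, and f is real-differentiable at b. Suppose A : [0,1] → [0,1] is differentiable at 1 with A(1) = 1 and M_f(r) := max{|f(z)| : |z| = r} ≤ A(r) for all r ∈ [0,1). Then the radial derivative satisfies |f'_r(b)| ≥ A'(1), and hence Λ_f(b) ≥ A'(1). -/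
open Real Set Metric Complex

/-- If `f : 𝔻 → ℂ` extends continuously to a boundary point `b` with `|f b| = 1`, is
real-differentiable at `b` (differential `df` within the closed disk), and its maximum
modulus satisfies `M_f(r) ≤ A r` for a function `A : [0,1] → [0,1]` with `A 1 = 1`
differentiable at `1`, then the radial derivative satisfies `|f'_r(b)| = ‖df b‖ ≥ A'(1)`,
and hence `Λ_f(b) = ‖df‖ ≥ A'(1)`. -/
theorem boundary_lower_bound_radial (f : ℂ → ℂ) (b : ℂ)
    (hb : b ∈ Metric.sphere (0 : ℂ) 1)
    (hcont : ContinuousWithinAt f (Metric.closedBall 0 1) b)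
    (hfb : ‖f b‖ = 1)
    (df : ℂ →L[ℝ] ℂ)
    (hdf : HasFDerivWithinAt f df (Metric.closedBall 0 1) b)
    (A : ℝ → ℝ) (A' : ℝ)
    (hA1 : A 1 = 1)
    (hAmaps : Set.MapsTo A (Set.Icc 0 1) (Set.Icc 0 1))
    (hA' : HasDerivWithinAt A A' (Set.Icc 0 1) 1)
    (hM : ∀ z ∈ Metric.ball (0 : ℂ) 1, ‖f z‖ ≤ A ‖z‖) :
    ‖df b‖ ≥ A' ∧ ‖df‖ ≥ A' := by
  have hbnorm : ‖b‖ = 1 := by simpa using hb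
  -- The path γ t = t • b
  have hγ : HasDerivWithinAt (fun t : ℝ => t • b) b (Set.Icc 0 1) 1 := by
    simpa using ((hasDerivAt_id (1 : ℝ)).smul_const b).hasDerivWithinAt
  have hmaps : Set.MapsTo (fun t : ℝ => t • b) (Set.Icc 0 1) (Metric.closedBall 0 1) := by
    intro t ht
    simp only [Metric.mem_closedBall, dist_zero_right, norm_smul, hbnorm, mul_one,
      Real.norm_eq_abs, _root_.abs_of_nonneg ht.1]
    exact ht.2
  have hone : (1 : ℝ) • b = b := one_smul ℝ b
  have hg : HasDerivWithinAt (fun t : ℝ => f (t • b)) (df b) (Set.Icc 0 1) 1 := by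
    have hdf' : HasFDerivWithinAt f df (Metric.closedBall 0 1) ((1:ℝ) • b) := by rwa [hone]
    have := hdf'.comp_hasDerivWithinAt (x := (1 : ℝ)) hγ hmaps
    exact this
  -- filter
  set l : Filter ℝ := nhdsWithin 1 (Set.Ico 0 1) with hl
  have hlne : l.NeBot := by
    rw [hl]
    apply mem_closure_iff_nhdsWithin_neBot.mp
    rw [closure_Ico (by norm_num : (0:ℝ) ≠ 1)]
    exact ⟨by norm_num, le_refl 1⟩
  have hdiff : Set.Icc (0:ℝ) 1 \ {1} = Set.Ico 0 1 := Set.Icc_sdiff_right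
  -- slope limits
  have T1 : Filter.Tendsto (fun t => (A 1 - A t) / (1 - t)) l (nhds A') := by
    have := hasDerivWithinAt_iff_tendsto_slope.mp hA'
    rw [hdiff] at this
    refine this.congr' ?_
    filter_upwards [self_mem_nhdsWithin] with t ht
    rw [slope_def_field, ← neg_sub (A 1) (A t), ← neg_sub (1:ℝ) t, neg_div_neg_eq]
  have T2 : Filter.Tendsto (fun t => ‖f b - f (t • b)‖ / (1 - t)) l (nhds ‖df b‖) := by
    have := hasDerivWithinAt_iff_tendsto_slope.mp hg
    rw [hdiff] at this
    have := (continuous_norm.continuousAt (x := df b)).tendsto.comp this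
    refine this.congr' ?_
    filter_upwards [self_mem_nhdsWithin] with t ht
    have ht1 : t < 1 := ht.2
    simp only [Function.comp, slope, vsub_eq_sub, hone]
    rw [norm_smul, ← norm_neg (f (t • b) - f b)]
    simp only [neg_sub]
    rw [norm_inv, Real.norm_eq_abs, abs_of_neg (by linarith : t - 1 < 0)]
    rw [div_eq_inv_mul]
    ring_nf
  have key : A' ≤ ‖df b‖ := by
    refine le_of_tendsto_of_tendsto T1 T2 ?_
    filter_upwards [self_mem_nhdsWithin] with t ht
    have ht0 := ht.1
    have ht1 := ht.2
    have hpos : (0:ℝ) < 1 - t := by linarith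
    have htb : t • b ∈ Metric.ball (0:ℂ) 1 := by
      simp only [Metric.mem_ball, dist_zero_right, norm_smul, hbnorm, mul_one,
        Real.norm_eq_abs, _root_.abs_of_nonneg ht0]
      exact ht1
    have h1 : ‖f (t • b)‖ ≤ A t := by
      have := hM _ htb
      rwa [norm_smul, hbnorm, mul_one, Real.norm_eq_abs, _root_.abs_of_nonneg ht0] at this
    have h2 : A 1 - A t ≤ ‖f b - f (t • b)‖ := by
      calc A 1 - A t = ‖f b‖ - A t := by rw [hA1, hfb]
      _ ≤ ‖f b‖ - ‖f (t • b)‖ := by linarith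
      _ ≤ ‖f b - f (t • b)‖ := norm_sub_norm_le _ _
    gcongr
  constructor
  · exact key
  · refine key.trans ?_
    calc ‖df b‖ ≤ ‖df‖ * ‖b‖ := df.le_opNorm b
    _ = ‖df‖ := by rw [hbnorm, mul_one]
end

section
/- If u is a real-valued harmonic function on the unit disk with values in (-1,1), then |∇u(0)| ≤ 4/π. -/
open Real Set Metric

section Aux
open intervalIntegral Complex



lemma abs_cos_integral : ∫ x in (0:ℝ)..(2*π), |Real.cos x| = 4 := by
  have key : ∀ x, Real.sin (x + π) = -Real.sin x := Real.sin_add_pi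
  have h1 : ∫ x in (0:ℝ)..(π/2), |Real.cos x| = 1 := by
    rw [integral_congr (g := Real.cos)]
    · simp [integral_cos]
    · intro x hx
      rw [uIcc_of_le (by positivity)] at hx
      exact abs_of_nonneg (Real.cos_nonneg_of_mem_Icc ⟨by linarith [hx.1, pi_pos], hx.2⟩)
  have h2 : ∫ x in (π/2)..(3*π/2), |Real.cos x| = 2 := by
    rw [integral_congr (g := fun x => -Real.cos x)]
    · rw [integral_neg, integral_cos]
      rw [show (3:ℝ)*π/2 = π/2 + π by ring, key]
      simp [Real.sin_pi_div_two]; ring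
    · intro x hx
      rw [uIcc_of_le (by linarith [pi_pos])] at hx
      show |Real.cos x| = -Real.cos x
      rw [abs_of_nonpos]
      exact Real.cos_nonpos_of_pi_div_two_le_of_le hx.1 (by linarith [hx.2, pi_pos])
  have h3 : ∫ x in (3*π/2)..(2*π), |Real.cos x| = 1 := by
    rw [integral_congr (g := Real.cos)]
    · rw [integral_cos]
      rw [show (3:ℝ)*π/2 = π/2 + π by ring, key]
      simp [Real.sin_pi_div_two, Real.sin_two_pi]
    · intro x hx
      rw [uIcc_of_le (by linarith [pi_pos])] at hx
      show |Real.cos x| = Real.cos x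
      have : Real.cos x = Real.cos (x - 2*π) := (Real.cos_sub_two_pi x).symm
      rw [this]
      refine abs_of_nonneg (Real.cos_nonneg_of_mem_Icc ⟨?_, ?_⟩)
      · linarith [hx.1]
      · linarith [hx.2, pi_pos]
  have i1 : IntervalIntegrable (fun x => |Real.cos x|) MeasureTheory.volume 0 (π/2) :=
    (Real.continuous_cos.abs).intervalIntegrable _ _
  have i2 : IntervalIntegrable (fun x => |Real.cos x|) MeasureTheory.volume (π/2) (3*π/2) :=
    (Real.continuous_cos.abs).intervalIntegrable _ _
  have i3 : IntervalIntegrable (fun x => |Real.cos x|) MeasureTheory.volume (3*π/2) (2*π) :=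
    (Real.continuous_cos.abs).intervalIntegrable _ _
  rw [← integral_add_adjacent_intervals (i1.trans i2) i3,
    ← integral_add_adjacent_intervals i1 i2, h1, h2, h3]
  norm_num

lemma abs_cos_shift (a : ℝ) : ∫ x in (0:ℝ)..(2*π), |Real.cos (x - a)| = 4 := by
  have hper : Function.Periodic (fun x => |Real.cos x|) (2*π) := Real.cos_periodic.comp abs
  have := intervalIntegral.integral_comp_sub_right (fun x => |Real.cos x|) a (a := 0) (b := 2*π)
  rw [this]
  have h2 := hper.intervalIntegral_add_eq (-a) 0
  rw [show (0:ℝ) - a = -a by ring, show 2*π - a = -a + 2*π by ring, h2, zero_add]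
  exact abs_cos_integral


lemma core (F : ℂ → ℂ) (hF : DifferentiableOn ℂ F (Metric.ball 0 1))
    (hb : ∀ z ∈ Metric.ball (0:ℂ) 1, |(F z).re| ≤ 1)
    {r : ℝ} (hr0 : 0 < r) (hr1 : r < 1) :
    π * r * ‖deriv F 0‖ ≤ 4 := by
  have hrne : (r : ℂ) ≠ 0 := Complex.ofReal_ne_zero.2 hr0.ne'
  have hmem : ∀ θ : ℝ, circleMap 0 r θ ∈ Metric.ball (0:ℂ) 1 := fun θ => by
    have : ‖circleMap 0 r θ‖ = |r| := norm_circleMap_zero r θ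
    simp [Metric.mem_ball, Complex.dist_eq, this, abs_of_pos hr0, hr1]
  have hcont : Continuous fun θ : ℝ => F (circleMap 0 r θ) :=
    hF.continuousOn.comp_continuous (continuous_circleMap 0 r) hmem
  have hcne : ∀ θ : ℝ, circleMap 0 r θ ≠ 0 := fun θ => circleMap_ne_center hr0.ne'
  -- Cauchy formula for the derivative
  have hderiv : deriv F 0 = cauchyPowerSeries F 0 r 1 (fun _ => 1) := by
    obtain ⟨R, hR⟩ : ∃ R : NNReal, (R : ℝ) = r := ⟨⟨r, hr0.le⟩, rfl⟩
    have hps : HasFPowerSeriesOnBall F (cauchyPowerSeries F 0 r) 0 R := by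
      rw [← hR]
      exact DifferentiableOn.hasFPowerSeriesOnBall
        (hF.mono (by rw [hR]; exact closedBall_subset_ball hr1)) (by rw [← hR] at hr0; exact_mod_cast hr0)
    exact hps.hasFPowerSeriesAt.deriv
  rw [cauchyPowerSeries_apply] at hderiv
  -- transform the circle integral to an interval integral
  have h1 : (∮ z in C(0, r), ((1:ℂ) / (z - 0)) ^ 1 • (z - 0)⁻¹ • F z)
      = (I / r) * ∫ θ in (0:ℝ)..(2*π), Complex.exp (-θ * I) * F (circleMap 0 r θ) := by
    rw [← intervalIntegral.integral_const_mul]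
    refine intervalIntegral.integral_congr fun θ _ => ?_
    have he : Complex.exp (-(θ:ℂ) * I) = (Complex.exp ((θ:ℂ) * I))⁻¹ := by
      rw [neg_mul, Complex.exp_neg]
    simp only [deriv_circleMap, smul_eq_mul, sub_zero, pow_one, one_div, circleMap_zero, he]
    have hE : Complex.exp ((θ:ℂ) * I) ≠ 0 := Complex.exp_ne_zero _
    field_simp
  rw [h1, smul_eq_mul] at hderiv
  set A : ℂ := ∫ θ in (0:ℝ)..(2*π), Complex.exp (-θ * I) * F (circleMap 0 r θ) with hA
  -- hderiv : deriv F 0 = (2πI)⁻¹ * (I/r * A)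
  have hA2 : A = (2 * π * r : ℝ) * deriv F 0 := by
    rw [hderiv]
    have hπ : (π : ℂ) ≠ 0 := Complex.ofReal_ne_zero.2 pi_ne_zero
    field_simp [Complex.I_ne_zero]
    push_cast
    ring
  -- circle integral of F itself vanishes
  have hzero : (∮ z in C(0, r), F z) = 0 :=
    Complex.circleIntegral_eq_zero_of_differentiable_on_off_countable hr0.le countable_empty
      (hF.continuousOn.mono (closedBall_subset_ball hr1))
      (fun z hz => hF.differentiableAt (isOpen_ball.mem_nhds (ball_subset_ball hr1.le hz.1)))
  have hint1 : IntervalIntegrable (fun θ : ℝ => Complex.exp (θ * I) * F (circleMap 0 r θ))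
      MeasureTheory.volume 0 (2*π) :=
    (((Complex.continuous_ofReal.mul continuous_const).cexp).mul hcont).intervalIntegrable _ _
  have hB : (∫ θ in (0:ℝ)..(2*π), Complex.exp (θ * I) * F (circleMap 0 r θ)) = 0 := by
    have h2 : (∮ z in C(0, r), F z)
        = (r * I) * ∫ θ in (0:ℝ)..(2*π), Complex.exp (θ * I) * F (circleMap 0 r θ) := by
      rw [← intervalIntegral.integral_const_mul]
      refine intervalIntegral.integral_congr fun θ _ => ?_
      simp only [circleIntegral, deriv_circleMap, smul_eq_mul, circleMap_zero]
      ring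
    rw [hzero] at h2
    have hri : (r : ℂ) * I ≠ 0 := mul_ne_zero hrne Complex.I_ne_zero
    exact (mul_eq_zero.1 h2.symm).resolve_left hri
  -- the real-part integral
  have hA' : (∫ θ in (0:ℝ)..(2*π), (((F (circleMap 0 r θ)).re : ℂ) * Complex.exp (-θ * I)))
      = A / 2 := by
    have heq : ∀ θ : ℝ, ((F (circleMap 0 r θ)).re : ℂ) * Complex.exp (-θ * I)
        = (Complex.exp (-θ * I) * F (circleMap 0 r θ)
            + (starRingEnd ℂ) (Complex.exp (θ * I) * F (circleMap 0 r θ))) / 2 := by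
      intro θ
      rw [map_mul, ← Complex.exp_conj]
      have : (starRingEnd ℂ) ((θ:ℂ) * I) = -θ * I := by
        simp [Complex.conj_I]
      rw [this, Complex.re_eq_add_conj]
      ring
    rw [intervalIntegral.integral_congr (fun θ _ => heq θ)]
    have hint2 : IntervalIntegrable (fun θ : ℝ => Complex.exp (-θ * I) * F (circleMap 0 r θ))
        MeasureTheory.volume 0 (2*π) :=
      ((((Complex.continuous_ofReal.neg).mul continuous_const).cexp).mul hcont).intervalIntegrable _ _
    have hint3 : IntervalIntegrable
        (fun θ : ℝ => (starRingEnd ℂ) (Complex.exp (θ * I) * F (circleMap 0 r θ)))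
        MeasureTheory.volume 0 (2*π) :=
      (Complex.continuous_conj.comp
        ((Complex.continuous_ofReal.mul continuous_const).cexp.mul hcont)).intervalIntegrable _ _
    rw [intervalIntegral.integral_div, intervalIntegral.integral_add hint2 hint3]
    have hconj : (∫ θ in (0:ℝ)..(2*π),
        (starRingEnd ℂ) (Complex.exp (θ * I) * F (circleMap 0 r θ))) = 0 := by
      rw [intervalIntegral.integral_of_le (by positivity)] at hB ⊢
      rw [integral_conj, hB, map_zero]
    rw [hconj, add_zero, ← hA]
  -- the norm estimate
  set B : ℂ := ∫ θ in (0:ℝ)..(2*π), (((F (circleMap 0 r θ)).re : ℂ) * Complex.exp (-θ * I))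
    with hBdef
  have hBval : B = ((π * r : ℝ) : ℂ) * deriv F 0 := by
    refine hA'.trans ?_
    rw [hA2]
    push_cast
    ring
  have hgoal : π * r * ‖deriv F 0‖ = ‖B‖ := by
    rw [hBval, norm_mul, Complex.norm_real, Real.norm_eq_abs,
      abs_of_pos (by positivity)]
  rw [hgoal]
  -- bound ‖B‖ by 4
  rcases eq_or_ne B 0 with hB0 | hB0
  · rw [hB0, norm_zero]; norm_num
  set a : ℝ := Complex.arg B with ha
  have habs : (‖B‖ : ℂ) = B * Complex.exp (-(a:ℂ) * I) := by
    conv_rhs => rw [← Complex.norm_mul_exp_arg_mul_I B]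
    rw [mul_assoc, ← Complex.exp_add, ← ha]
    ring_nf
    rw [Complex.exp_zero, mul_one]
  have hre : ‖B‖ = (B * Complex.exp (-(a:ℂ) * I)).re := by
    rw [← habs, Complex.ofReal_re]
  rw [hre]
  have hBmul : B * Complex.exp (-(a:ℂ) * I)
      = ∫ θ in (0:ℝ)..(2*π),
          (((F (circleMap 0 r θ)).re : ℂ) * Complex.exp (-(θ + a) * I)) := by
    rw [hBdef, ← intervalIntegral.integral_mul_const]
    refine intervalIntegral.integral_congr fun θ _ => ?_
    rw [mul_assoc, ← Complex.exp_add]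
    push_cast
    ring_nf
  rw [hBmul]
  have hint4 : IntervalIntegrable
      (fun θ : ℝ => ((F (circleMap 0 r θ)).re : ℂ) * Complex.exp (-(θ + a) * I))
      MeasureTheory.volume 0 (2*π) := by
    apply Continuous.intervalIntegrable
    exact (Complex.continuous_ofReal.comp (Complex.continuous_re.comp hcont)).mul
      (((Complex.continuous_ofReal.add continuous_const).neg.mul continuous_const).cexp)
  have hrecomm := Complex.reCLM.intervalIntegral_comp_comm
    (μ := MeasureTheory.volume) (a := (0:ℝ)) (b := 2*π) hint4
  simp only [Complex.reCLM_apply] at hrecomm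
  rw [← hrecomm]
  have hptre : ∀ θ : ℝ, (((F (circleMap 0 r θ)).re : ℂ) * Complex.exp (-(θ + a) * I)).re
      = (F (circleMap 0 r θ)).re * Real.cos (θ + a) := by
    intro θ
    rw [Complex.re_ofReal_mul]
    congr 1
    have : (-(θ + a) : ℂ) * I = ((-(θ + a) : ℝ) : ℂ) * I := by push_cast; ring
    rw [this, Complex.exp_ofReal_mul_I_re, Real.cos_neg]
  calc (∫ θ in (0:ℝ)..(2*π), (((F (circleMap 0 r θ)).re : ℂ) * Complex.exp (-(θ + a) * I)).re)
      = ∫ θ in (0:ℝ)..(2*π), (F (circleMap 0 r θ)).re * Real.cos (θ + a) :=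
        intervalIntegral.integral_congr fun θ _ => hptre θ
    _ ≤ ∫ θ in (0:ℝ)..(2*π), |Real.cos (θ + a)| := by
        refine intervalIntegral.integral_mono_on (by positivity) ?_ ?_ ?_
        · exact ((Complex.continuous_re.comp hcont).mul
            (Real.continuous_cos.comp (continuous_id.add continuous_const))).intervalIntegrable _ _
        · exact ((Real.continuous_cos.comp (continuous_id.add continuous_const)).abs).intervalIntegrable _ _
        · intro θ _
          calc (F (circleMap 0 r θ)).re * Real.cos (θ + a)
              ≤ |(F (circleMap 0 r θ)).re * Real.cos (θ + a)| := le_abs_self _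
            _ = |(F (circleMap 0 r θ)).re| * |Real.cos (θ + a)| := abs_mul _ _
            _ ≤ 1 * |Real.cos (θ + a)| :=
                mul_le_mul_of_nonneg_right (hb _ (hmem θ)) (abs_nonneg _)
            _ = |Real.cos (θ + a)| := one_mul _
    _ = 4 := by
        have := abs_cos_shift (-a)
        simpa [sub_neg_eq_add] using this

end Aux

/-- If `u` is a real-valued harmonic function on the unit disk with values in `(-1,1)`,
then `|∇u(0)| ≤ 4/π`. Harmonicity is encoded by `u` being the real part of a
holomorphic function `F`. -/
theorem harmonic_gradient_four_over_pi (u : ℂ → ℝ) (F : ℂ → ℂ)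
    (hF : DifferentiableOn ℂ F (Metric.ball 0 1))
    (hre : ∀ z ∈ Metric.ball (0 : ℂ) 1, u z = (F z).re)
    (hmaps : Set.MapsTo u (Metric.ball 0 1) (Set.Ioo (-1 : ℝ) 1)) :
    ‖fderiv ℝ u 0‖ ≤ 4 / Real.pi := by
  have hmem0 : (0:ℂ) ∈ Metric.ball (0:ℂ) 1 := by simp
  have hFd : DifferentiableAt ℂ F 0 := hF.differentiableAt (isOpen_ball.mem_nhds hmem0)
  -- ‖fderiv ℝ u 0‖ ≤ ‖deriv F 0‖
  have h1 : ‖fderiv ℝ u 0‖ ≤ ‖deriv F 0‖ := by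
    have heq : u =ᶠ[nhds (0:ℂ)] fun z => (F z).re := by
      filter_upwards [isOpen_ball.mem_nhds hmem0] with z hz using hre z hz
    have hFdR : DifferentiableAt ℝ F 0 := hFd.restrictScalars ℝ
    have h2 : HasFDerivAt (fun z => (F z).re)
        (Complex.reCLM.comp (fderiv ℝ F 0)) 0 :=
      Complex.reCLM.hasFDerivAt.comp 0 hFdR.hasFDerivAt
    rw [heq.fderiv_eq, h2.fderiv]
    have h3 : fderiv ℝ F 0 = (fderiv ℂ F 0).restrictScalars ℝ :=
      hFd.fderiv_restrictScalars ℝ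
    calc ‖Complex.reCLM.comp (fderiv ℝ F 0)‖
        ≤ ‖Complex.reCLM‖ * ‖fderiv ℝ F 0‖ := ContinuousLinearMap.opNorm_comp_le _ _
      _ = ‖fderiv ℝ F 0‖ := by rw [Complex.reCLM_norm, one_mul]
      _ = ‖deriv F 0‖ := by
          rw [h3, ContinuousLinearMap.norm_restrictScalars]
          have h4 : fderiv ℂ F 0 = ContinuousLinearMap.smulRight (1 : ℂ →L[ℂ] ℂ) (deriv F 0) :=
            hFd.hasDerivAt.hasFDerivAt.fderiv
          rw [h4, ContinuousLinearMap.norm_smulRight_apply, norm_one, one_mul]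
  have hb : ∀ z ∈ Metric.ball (0:ℂ) 1, |(F z).re| ≤ 1 := fun z hz => by
    have := hmaps hz
    rw [hre z hz] at this
    exact abs_le.2 ⟨this.1.le, this.2.le⟩
  -- limit r → 1
  have hlim : π * ‖deriv F 0‖ ≤ 4 := by
    have hto : Filter.Tendsto (fun r : ℝ => π * r * ‖deriv F 0‖)
        (nhdsWithin 1 (Set.Iio 1)) (nhds (π * 1 * ‖deriv F 0‖)) :=
      ((continuous_const.mul continuous_id).mul continuous_const).continuousWithinAt
    have hev : ∀ᶠ r in nhdsWithin 1 (Set.Iio 1), π * r * ‖deriv F 0‖ ≤ 4 := by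
      filter_upwards [Ioo_mem_nhdsLT_of_mem (by norm_num : (1:ℝ) ∈ Set.Ioc (0:ℝ) 1)] with r hr
      exact core F hF hb hr.1 hr.2
    have := le_of_tendsto hto hev
    linarith
  calc ‖fderiv ℝ u 0‖ ≤ ‖deriv F 0‖ := h1
    _ ≤ 4 / π := by
        rw [le_div_iff₀ pi_pos]
        linarith [hlim]
end
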